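/- arXiv:2211.13839 — 8 statements merged into one kernel-verified Lean document; each statement's English description precedes it below -/
import Mathlib

section
/- Let g_c : ℝ → ℝ be a density generator. Then for every z₁ ∈ ℝ, ∫_ℝ g_c(z₁² + z₂²) dz₂ = ∫_{|z₁|}^∞ [2 g_c(w²)/√(1 − z₁²/w²)] dw. Consequently, if (Z₁, Z₂) has joint density h(z₁,z₂) = g_c(z₁² + z₂²)/Z_{g_c} with Z_{g_c} := π ∫₀^∞ g_c(u) du, then the marginal density of Z₁ is z₁ ↦ [∫_{|z₁|}^∞ 2 g_c(w²)/√(1 − z₁²/w²) dw]/(π ∫₀^∞ g_c(u) du), and this marginal density is an even function of z₁. -/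
open MeasureTheory Real Set

private lemma gen_part1 (g : ℝ → ℝ) (z₁ : ℝ) :
    (∫ z₂ : ℝ, g (z₁ ^ 2 + z₂ ^ 2))
      = ∫ w in Ioi |z₁|, 2 * g (w ^ 2) / Real.sqrt (1 - z₁ ^ 2 / w ^ 2) := by
  have habs : (0:ℝ) ≤ |z₁| := abs_nonneg _
  set f : ℝ → ℝ := fun w => Real.sqrt (w ^ 2 - z₁ ^ 2) with hf
  have hpos : ∀ w ∈ Ioi |z₁|, 0 < w ^ 2 - z₁ ^ 2 := by
    intro w hw
    have hw' : |z₁| < w := hw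
    have : z₁ ^ 2 < w ^ 2 := by nlinarith [abs_nonneg z₁, sq_abs z₁]
    linarith
  have hwpos : ∀ w ∈ Ioi |z₁|, 0 < w := fun w hw => lt_of_le_of_lt habs hw
  have hderiv : ∀ w ∈ Ioi |z₁|, HasDerivWithinAt f (w / Real.sqrt (w ^ 2 - z₁ ^ 2)) (Ioi |z₁|) w := by
    intro w hw
    have h1 : HasDerivAt (fun w : ℝ => w ^ 2 - z₁ ^ 2) (2 * w) w := by
      simpa using (hasDerivAt_pow 2 w).sub_const (z₁ ^ 2)
    have h2 := (Real.hasDerivAt_sqrt (ne_of_gt (hpos w hw))).comp w h1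
    have heq : 1 / (2 * Real.sqrt (w ^ 2 - z₁ ^ 2)) * (2 * w) = w / Real.sqrt (w ^ 2 - z₁ ^ 2) := by
      have : Real.sqrt (w ^ 2 - z₁ ^ 2) ≠ 0 := ne_of_gt (Real.sqrt_pos.mpr (hpos w hw))
      field_simp
    exact (heq ▸ h2).hasDerivWithinAt
  have hinj : InjOn f (Ioi |z₁|) := by
    have hmono : StrictMonoOn f (Ioi |z₁|) := by
      intro a ha b hb hab
      have := hpos a ha
      exact Real.sqrt_lt_sqrt (by linarith) (by nlinarith [hwpos a ha, hwpos b hb])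
    exact hmono.injOn
  have himg : f '' Ioi |z₁| = Ioi (0:ℝ) := by
    ext y
    constructor
    · rintro ⟨w, hw, rfl⟩
      exact Real.sqrt_pos.mpr (hpos w hw)
    · intro hy
      have hy' : (0:ℝ) < y := hy
      refine ⟨Real.sqrt (y ^ 2 + z₁ ^ 2), ?_, ?_⟩
      · have : |z₁| = Real.sqrt (z₁ ^ 2) := (Real.sqrt_sq_eq_abs z₁).symm
        rw [this]
        exact Real.sqrt_lt_sqrt (sq_nonneg _) (by nlinarith)
      · have h1 : Real.sqrt (y ^ 2 + z₁ ^ 2) ^ 2 = y ^ 2 + z₁ ^ 2 :=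
          Real.sq_sqrt (by positivity)
        rw [hf]
        simp only [h1]
        rw [show y ^ 2 + z₁ ^ 2 - z₁ ^ 2 = y ^ 2 by ring, Real.sqrt_sq hy'.le]
  have cov := integral_image_eq_integral_abs_deriv_smul measurableSet_Ioi hderiv hinj
      (fun t => g (z₁ ^ 2 + t ^ 2))
  rw [himg] at cov
  have h1 : (∫ z₂ : ℝ, g (z₁ ^ 2 + z₂ ^ 2)) = 2 * ∫ t in Ioi (0:ℝ), g (z₁ ^ 2 + t ^ 2) := by
    rw [← integral_comp_abs (f := fun t => g (z₁ ^ 2 + t ^ 2))]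
    simp [sq_abs]
  rw [h1, cov, ← integral_const_mul]
  refine setIntegral_congr_fun measurableSet_Ioi (fun w hw => ?_)
  have h2 : f w ^ 2 = w ^ 2 - z₁ ^ 2 := Real.sq_sqrt (hpos w hw).le
  have h3 : Real.sqrt (1 - z₁ ^ 2 / w ^ 2) = Real.sqrt (w ^ 2 - z₁ ^ 2) / w := by
    have hw0 : (0:ℝ) < w := hwpos w hw
    rw [show 1 - z₁ ^ 2 / w ^ 2 = (w ^ 2 - z₁ ^ 2) / w ^ 2 by field_simp,
      Real.sqrt_div (hpos w hw).le, Real.sqrt_sq hw0.le]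
  have hsq : (0:ℝ) < Real.sqrt (w ^ 2 - z₁ ^ 2) := Real.sqrt_pos.mpr (hpos w hw)
  have hw0 : (0:ℝ) < w := hwpos w hw
  simp only [smul_eq_mul, h2, h3]
  rw [abs_of_pos (by positivity)]
  rw [show z₁ ^ 2 + (w ^ 2 - z₁ ^ 2) = w ^ 2 by ring]
  field_simp

private lemma map_fst_withDensity (f : ℝ × ℝ → ENNReal) (hf : Measurable f) :
    Measure.map Prod.fst ((volume : Measure (ℝ × ℝ)).withDensity f)
      = (volume : Measure ℝ).withDensity (fun x => ∫⁻ y, f (x, y)) := by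
  ext s hs
  rw [Measure.map_apply measurable_fst hs,
    withDensity_apply _ (measurable_fst hs), withDensity_apply _ hs]
  have hpre : Prod.fst ⁻¹' s = s ×ˢ (univ : Set ℝ) := by
    ext z; simp
  rw [hpre, Measure.volume_eq_prod, ← Measure.prod_restrict, Measure.restrict_univ,
    lintegral_prod _ hf.aemeasurable]

/-- For a density generator `g`:
`∫_ℝ g (z₁² + z₂²) dz₂ = ∫_{|z₁|}^∞ 2 g (w²)/√(1 − z₁²/w²) dw`; consequently, if `(Z₁,Z₂)`
has joint density `g (z₁²+z₂²)/(π ∫₀^∞ g)`, then `Z₁` has the indicated marginal density,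
which is an even function. -/
theorem marginal_density_of_joint_generator
    {Ω : Type*} [MeasurableSpace Ω] (P : Measure Ω) [IsProbabilityMeasure P]
    (g : ℝ → ℝ) (hg_meas : Measurable g) (hg_nonneg : ∀ x, 0 ≤ g x)
    (hg_pos : 0 < ∫ u in Ioi (0 : ℝ), g u) (hg_int : IntegrableOn g (Ioi 0))
    (Z₁ Z₂ : Ω → ℝ) (hZ₁ : Measurable Z₁) (hZ₂ : Measurable Z₂)
    (hjoint : Measure.map (fun ω => (Z₁ ω, Z₂ ω)) P
      = (volume : Measure (ℝ × ℝ)).withDensity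
          (fun z => ENNReal.ofReal
            (g (z.1 ^ 2 + z.2 ^ 2) / (π * ∫ u in Ioi (0 : ℝ), g u)))) :
    (∀ z₁ : ℝ, (∫ z₂ : ℝ, g (z₁ ^ 2 + z₂ ^ 2))
        = ∫ w in Ioi |z₁|, 2 * g (w ^ 2) / Real.sqrt (1 - z₁ ^ 2 / w ^ 2)) ∧
    (Measure.map Z₁ P
      = volume.withDensity (fun z₁ => ENNReal.ofReal
          ((∫ w in Ioi |z₁|, 2 * g (w ^ 2) / Real.sqrt (1 - z₁ ^ 2 / w ^ 2))
            / (π * ∫ u in Ioi (0 : ℝ), g u)))) ∧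
    (∀ z₁ : ℝ,
        (∫ w in Ioi |(-z₁)|, 2 * g (w ^ 2) / Real.sqrt (1 - (-z₁) ^ 2 / w ^ 2))
            / (π * ∫ u in Ioi (0 : ℝ), g u)
          = (∫ w in Ioi |z₁|, 2 * g (w ^ 2) / Real.sqrt (1 - z₁ ^ 2 / w ^ 2))
            / (π * ∫ u in Ioi (0 : ℝ), g u)) := by
  set C : ℝ := π * ∫ u in Ioi (0 : ℝ), g u with hCdef
  have hCpos : 0 < C := mul_pos pi_pos hg_pos
  have hCne : ENNReal.ofReal C ≠ 0 := by
    simp [ENNReal.ofReal_eq_zero, not_le, hCpos]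
  have hCnetop : ENNReal.ofReal C ≠ ⊤ := ENNReal.ofReal_ne_top
  refine ⟨fun z₁ => gen_part1 g z₁, ?_, ?_⟩
  · -- marginal density
    have hGmeas : Measurable fun z : ℝ × ℝ => ENNReal.ofReal (g (z.1 ^ 2 + z.2 ^ 2)) :=
      (hg_meas.comp ((measurable_fst.pow_const 2).add (measurable_snd.pow_const 2))).ennreal_ofReal
    have hGCmeas : Measurable fun z : ℝ × ℝ => ENNReal.ofReal (g (z.1 ^ 2 + z.2 ^ 2) / C) :=
      ((hg_meas.comp ((measurable_fst.pow_const 2).add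
        (measurable_snd.pow_const 2))).div_const C).ennreal_ofReal
    have hpair : Measurable fun ω => (Z₁ ω, Z₂ ω) := hZ₁.prodMk hZ₂
    have hptw : ∀ z : ℝ × ℝ, ENNReal.ofReal (g (z.1 ^ 2 + z.2 ^ 2) / C)
        = ENNReal.ofReal (g (z.1 ^ 2 + z.2 ^ 2)) * (ENNReal.ofReal C)⁻¹ := by
      intro z
      rw [ENNReal.ofReal_div_of_pos hCpos, div_eq_mul_inv]
    have htot : (∫⁻ z : ℝ × ℝ, ENNReal.ofReal (g (z.1 ^ 2 + z.2 ^ 2) / C)) = 1 := by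
      have h1 : Measure.map (fun ω => (Z₁ ω, Z₂ ω)) P Set.univ = 1 := by
        rw [Measure.map_apply hpair MeasurableSet.univ]; simp
      rw [hjoint] at h1
      rw [← setLIntegral_univ, ← withDensity_apply _ MeasurableSet.univ]
      exact h1
    have hlin : (∫⁻ z : ℝ × ℝ, ENNReal.ofReal (g (z.1 ^ 2 + z.2 ^ 2)))
        = ENNReal.ofReal C := by
      rw [← ENNReal.div_eq_one_iff hCne hCnetop, div_eq_mul_inv,
        ← lintegral_mul_const' _ _ (ENNReal.inv_ne_top.mpr hCne)]
      simpa only [hptw] using htot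
    have hfin : ∀ᵐ z₁ : ℝ, (∫⁻ z₂ : ℝ, ENNReal.ofReal (g (z₁ ^ 2 + z₂ ^ 2))) < ⊤ := by
      refine ae_lt_top hGmeas.lintegral_prod_right' ?_
      rw [← lintegral_prod _ hGmeas.aemeasurable, ← Measure.volume_eq_prod, hlin]
      exact hCnetop
    have hmap : Measure.map Z₁ P
        = (volume : Measure ℝ).withDensity
            (fun z₁ => ∫⁻ z₂, ENNReal.ofReal (g (z₁ ^ 2 + z₂ ^ 2) / C)) := by
      have : Z₁ = Prod.fst ∘ fun ω => (Z₁ ω, Z₂ ω) := rfl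
      rw [this, ← Measure.map_map measurable_fst hpair, hjoint,
        map_fst_withDensity _ hGCmeas]
    rw [hmap]
    refine withDensity_congr_ae ?_
    filter_upwards [hfin] with z₁ hz₁
    have hint : Integrable (fun z₂ : ℝ => g (z₁ ^ 2 + z₂ ^ 2)) := by
      refine ⟨(hg_meas.comp (by fun_prop : Measurable fun z₂ : ℝ => z₁ ^ 2 + z₂ ^ 2)).aestronglyMeasurable, ?_⟩
      · rw [hasFiniteIntegral_iff_ofReal (Filter.Eventually.of_forall fun x => hg_nonneg _)]
        exact hz₁
    calc (∫⁻ z₂ : ℝ, ENNReal.ofReal (g (z₁ ^ 2 + z₂ ^ 2) / C))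
        = (∫⁻ z₂ : ℝ, ENNReal.ofReal (g (z₁ ^ 2 + z₂ ^ 2))) * (ENNReal.ofReal C)⁻¹ := by
          simp_rw [hptw (⟨z₁, _⟩ : ℝ × ℝ)]
          exact lintegral_mul_const' _ _ (ENNReal.inv_ne_top.mpr hCne)
      _ = ENNReal.ofReal (∫ z₂ : ℝ, g (z₁ ^ 2 + z₂ ^ 2)) * (ENNReal.ofReal C)⁻¹ := by
          rw [← ofReal_integral_eq_lintegral_ofReal hint
            (Filter.Eventually.of_forall fun x => hg_nonneg _)]
      _ = ENNReal.ofReal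
            ((∫ w in Ioi |z₁|, 2 * g (w ^ 2) / Real.sqrt (1 - z₁ ^ 2 / w ^ 2)) / C) := by
          rw [gen_part1 g z₁, ENNReal.ofReal_div_of_pos hCpos, div_eq_mul_inv]
  · intro z₁
    simp only [abs_neg, neg_sq]
end

section
/- Let g_c : ℝ → ℝ be a density generator and let (Z₁, Z₂) be a random vector with joint density h(z₁,z₂) = g_c(z₁² + z₂²)/Z_{g_c}, where Z_{g_c} := π ∫₀^∞ g_c(u) du. Fix η₁, η₂, σ₁, σ₂ > 0 and ρ ∈ (−1,1), and define T₁ = η₁ exp(σ₁ Z₁) and T₂ = η₂ exp(σ₂ ρ Z₁ + σ₂ √(1−ρ²) Z₂). Then (T₁, T₂) has joint probability density f(t₁,t₂) = g_c((t̃₁² − 2ρ t̃₁ t̃₂ + t̃₂²)/(1−ρ²)) / (t₁ t₂ σ₁ σ₂ √(1−ρ²) Z_{g_c}) for t₁, t₂ > 0 (and 0 otherwise), where t̃ᵢ = (log tᵢ − log ηᵢ)/σᵢ. -/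
open MeasureTheory Real Set

/-- Standardized log-transform `t̃ = (log t − log η)/σ`. -/
noncomputable def logStd (η σ t : ℝ) : ℝ := (Real.log t - Real.log η) / σ

/-- The bivariate log-symmetric density `BLS(η₁,η₂,σ₁,σ₂,ρ; g)`. -/
noncomputable def blsDensity (g : ℝ → ℝ) (η₁ η₂ σ₁ σ₂ ρ : ℝ) (t : ℝ × ℝ) : ℝ :=
  if 0 < t.1 ∧ 0 < t.2 then
    g ((logStd η₁ σ₁ t.1 ^ 2 - 2 * ρ * logStd η₁ σ₁ t.1 * logStd η₂ σ₂ t.2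
        + logStd η₂ σ₂ t.2 ^ 2) / (1 - ρ ^ 2)) /
      (t.1 * t.2 * σ₁ * σ₂ * Real.sqrt (1 - ρ ^ 2) * (π * ∫ u in Ioi (0 : ℝ), g u))
  else 0

/-- Auxiliary triangular continuous linear map on `ℝ × ℝ`. -/
noncomputable def blsAuxL (a b d : ℝ) : ℝ × ℝ →L[ℝ] ℝ × ℝ :=
  (a • (ContinuousLinearMap.fst ℝ ℝ ℝ)).prod
    (b • ContinuousLinearMap.fst ℝ ℝ ℝ + d • ContinuousLinearMap.snd ℝ ℝ ℝ)

lemma blsAuxL_det (a b d : ℝ) : (blsAuxL a b d).det = a * d := by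
  have h : (blsAuxL a b d).det = LinearMap.det ((blsAuxL a b d) : (ℝ×ℝ) →ₗ[ℝ] (ℝ×ℝ)) := rfl
  rw [h, ← LinearMap.det_toMatrix (Module.Basis.finTwoProd ℝ), Matrix.det_fin_two]
  simp [LinearMap.toMatrix_apply, blsAuxL]

lemma blsAuxDeriv (η₁ η₂ σ₁ σ₂ ρ c : ℝ) (z : ℝ × ℝ) :
    HasFDerivAt (fun z : ℝ × ℝ => (η₁ * Real.exp (σ₁ * z.1),
        η₂ * Real.exp (σ₂ * ρ * z.1 + σ₂ * c * z.2)))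
      (blsAuxL (η₁ * σ₁ * Real.exp (σ₁ * z.1))
         (η₂ * σ₂ * ρ * Real.exp (σ₂ * ρ * z.1 + σ₂ * c * z.2))
         (η₂ * σ₂ * c * Real.exp (σ₂ * ρ * z.1 + σ₂ * c * z.2))) z := by
  have h1 : HasFDerivAt (fun z : ℝ × ℝ => η₁ * Real.exp (σ₁ * z.1))
      ((η₁ * σ₁ * Real.exp (σ₁ * z.1)) • (ContinuousLinearMap.fst ℝ ℝ ℝ)) z := by
    have h : HasFDerivAt (fun z : ℝ × ℝ => σ₁ * z.1)
        (σ₁ • (ContinuousLinearMap.fst ℝ ℝ ℝ)) z :=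
      (hasFDerivAt_fst).const_mul σ₁
    have h' := (h.exp).const_mul η₁
    refine h'.congr_fderiv ?_
    ext v
    · simp; ring
    · simp
  have h2 : HasFDerivAt (fun z : ℝ × ℝ => η₂ * Real.exp (σ₂ * ρ * z.1 + σ₂ * c * z.2))
      ((η₂ * σ₂ * ρ * Real.exp (σ₂ * ρ * z.1 + σ₂ * c * z.2)) • ContinuousLinearMap.fst ℝ ℝ ℝ
        + (η₂ * σ₂ * c * Real.exp (σ₂ * ρ * z.1 + σ₂ * c * z.2))
            • ContinuousLinearMap.snd ℝ ℝ ℝ) z := by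
    have h : HasFDerivAt (fun z : ℝ × ℝ => σ₂ * ρ * z.1 + σ₂ * c * z.2)
        ((σ₂ * ρ) • ContinuousLinearMap.fst ℝ ℝ ℝ + (σ₂ * c) • ContinuousLinearMap.snd ℝ ℝ ℝ)
        z :=
      ((hasFDerivAt_fst).const_mul (σ₂ * ρ)).add ((hasFDerivAt_snd).const_mul (σ₂ * c))
    have h' := (h.exp).const_mul η₂
    refine h'.congr_fderiv ?_
    ext v
    · simp; ring
    · simp; ring
  exact h1.prodMk h2

/-- If `(Z₁,Z₂)` has joint density `g (z₁²+z₂²)/Z_g` with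
`Z_g = π ∫₀^∞ g`, then `(T₁,T₂) = (η₁ e^{σ₁ Z₁}, η₂ e^{σ₂ρ Z₁ + σ₂√(1−ρ²) Z₂})` has the
`BLS(η₁,η₂,σ₁,σ₂,ρ; g)` joint density. -/
theorem bls_density_of_stochastic_representation
    {Ω : Type*} [MeasurableSpace Ω] (P : Measure Ω) [IsProbabilityMeasure P]
    (g : ℝ → ℝ) (hg_meas : Measurable g) (hg_nonneg : ∀ x, 0 ≤ g x)
    (hg_pos : 0 < ∫ u in Ioi (0 : ℝ), g u) (hg_int : IntegrableOn g (Ioi 0))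
    (Z₁ Z₂ : Ω → ℝ) (hZ₁ : Measurable Z₁) (hZ₂ : Measurable Z₂)
    (hjoint : Measure.map (fun ω => (Z₁ ω, Z₂ ω)) P
      = (volume : Measure (ℝ × ℝ)).withDensity
          (fun z => ENNReal.ofReal
            (g (z.1 ^ 2 + z.2 ^ 2) / (π * ∫ u in Ioi (0 : ℝ), g u))))
    (η₁ η₂ σ₁ σ₂ ρ : ℝ) (hη₁ : 0 < η₁) (hη₂ : 0 < η₂) (hσ₁ : 0 < σ₁) (hσ₂ : 0 < σ₂)
    (hρ : ρ ∈ Ioo (-1 : ℝ) 1) :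
    Measure.map (fun ω => (η₁ * Real.exp (σ₁ * Z₁ ω),
        η₂ * Real.exp (σ₂ * ρ * Z₁ ω + σ₂ * Real.sqrt (1 - ρ ^ 2) * Z₂ ω))) P
      = (volume : Measure (ℝ × ℝ)).withDensity
          (fun t => ENNReal.ofReal (blsDensity g η₁ η₂ σ₁ σ₂ ρ t)) := by
  -- Notation
  set I : ℝ := ∫ u in Ioi (0 : ℝ), g u with hI
  have hZg : 0 < π * I := mul_pos Real.pi_pos hg_pos
  have hρ2 : 0 < 1 - ρ ^ 2 := by
    have h1 := hρ.1; have h2 := hρ.2; nlinarith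
  set c : ℝ := Real.sqrt (1 - ρ ^ 2) with hcdef
  have hc : 0 < c := Real.sqrt_pos.mpr hρ2
  have hc2 : c ^ 2 = 1 - ρ ^ 2 := Real.sq_sqrt hρ2.le
  set φ : ℝ × ℝ → ℝ × ℝ := fun z => (η₁ * Real.exp (σ₁ * z.1),
      η₂ * Real.exp (σ₂ * ρ * z.1 + σ₂ * c * z.2)) with hφdef
  have hφcont : Continuous φ := by
    apply Continuous.prodMk
    · exact continuous_const.mul ((continuous_const.mul continuous_fst).rexp)
    · exact continuous_const.mul (((continuous_const.mul continuous_fst).add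
        (continuous_const.mul continuous_snd)).rexp)
  have hφm : Measurable φ := hφcont.measurable
  -- injectivity of φ
  have hφinj : Function.Injective φ := by
    intro z z' h
    have h1 : η₁ * Real.exp (σ₁ * z.1) = η₁ * Real.exp (σ₁ * z'.1) := congrArg Prod.fst h
    have h2 : η₂ * Real.exp (σ₂ * ρ * z.1 + σ₂ * c * z.2)
        = η₂ * Real.exp (σ₂ * ρ * z'.1 + σ₂ * c * z'.2) := congrArg Prod.snd h
    have e1 : σ₁ * z.1 = σ₁ * z'.1 :=
      Real.exp_injective (mul_left_cancel₀ hη₁.ne' h1)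
    have hz1 : z.1 = z'.1 := mul_left_cancel₀ hσ₁.ne' e1
    have e2 : σ₂ * ρ * z.1 + σ₂ * c * z.2 = σ₂ * ρ * z'.1 + σ₂ * c * z'.2 :=
      Real.exp_injective (mul_left_cancel₀ hη₂.ne' h2)
    rw [hz1] at e2
    have hz2 : z.2 = z'.2 := by
      have : σ₂ * c * z.2 = σ₂ * c * z'.2 := by linarith
      exact mul_left_cancel₀ (mul_pos hσ₂ hc).ne' this
    exact Prod.ext hz1 hz2
  -- range of φ
  have hφrange : Set.range φ = Ioi (0:ℝ) ×ˢ Ioi (0:ℝ) := by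
    ext t
    constructor
    · rintro ⟨z, rfl⟩
      exact ⟨mul_pos hη₁ (Real.exp_pos _), mul_pos hη₂ (Real.exp_pos _)⟩
    · rintro ⟨ht1, ht2⟩
      refine ⟨((Real.log t.1 - Real.log η₁) / σ₁,
        ((Real.log t.2 - Real.log η₂) / σ₂ - ρ * ((Real.log t.1 - Real.log η₁) / σ₁)) / c), ?_⟩
      have h1 : σ₁ * ((Real.log t.1 - Real.log η₁) / σ₁) = Real.log t.1 - Real.log η₁ := by
        field_simp
      have h2 : σ₂ * ρ * ((Real.log t.1 - Real.log η₁) / σ₁)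
          + σ₂ * c * (((Real.log t.2 - Real.log η₂) / σ₂
              - ρ * ((Real.log t.1 - Real.log η₁) / σ₁)) / c)
          = Real.log t.2 - Real.log η₂ := by
        field_simp
        ring
      simp only [hφdef, h1, h2]
      rw [Real.exp_sub, Real.exp_log ht1, Real.exp_log hη₁,
        Real.exp_sub, Real.exp_log ht2, Real.exp_log hη₂]
      have : (t : ℝ × ℝ) = (t.1, t.2) := rfl
      rw [this, Prod.mk.injEq]
      exact ⟨by field_simp, by field_simp⟩
  -- The derivative of φ
  set f' : ℝ × ℝ → (ℝ × ℝ →L[ℝ] ℝ × ℝ) := fun z =>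
    blsAuxL (η₁ * σ₁ * Real.exp (σ₁ * z.1))
      (η₂ * σ₂ * ρ * Real.exp (σ₂ * ρ * z.1 + σ₂ * c * z.2))
      (η₂ * σ₂ * c * Real.exp (σ₂ * ρ * z.1 + σ₂ * c * z.2)) with hf'def
  have hderiv : ∀ z : ℝ × ℝ, HasFDerivAt φ (f' z) z := fun z =>
    blsAuxDeriv η₁ η₂ σ₁ σ₂ ρ c z
  -- the key pointwise identity
  have hkey : ∀ z : ℝ × ℝ,
      ENNReal.ofReal |(f' z).det| * ENNReal.ofReal (blsDensity g η₁ η₂ σ₁ σ₂ ρ (φ z))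
        = ENNReal.ofReal (g (z.1 ^ 2 + z.2 ^ 2) / (π * I)) := by
    intro z
    set t₁ : ℝ := η₁ * Real.exp (σ₁ * z.1) with ht₁
    set t₂ : ℝ := η₂ * Real.exp (σ₂ * ρ * z.1 + σ₂ * c * z.2) with ht₂
    have ht₁pos : 0 < t₁ := mul_pos hη₁ (Real.exp_pos _)
    have ht₂pos : 0 < t₂ := mul_pos hη₂ (Real.exp_pos _)
    have hdet : (f' z).det = σ₁ * σ₂ * c * (t₁ * t₂) := by
      rw [hf'def, blsAuxL_det, ht₁, ht₂]; ring
    have hdetpos : 0 < (f' z).det := by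
      rw [hdet]
      positivity
    have hls1 : logStd η₁ σ₁ t₁ = z.1 := by
      rw [logStd, ht₁, Real.log_mul hη₁.ne' (Real.exp_pos _).ne', Real.log_exp]
      field_simp
      ring
    have hls2 : logStd η₂ σ₂ t₂ = ρ * z.1 + c * z.2 := by
      rw [logStd, ht₂, Real.log_mul hη₂.ne' (Real.exp_pos _).ne', Real.log_exp]
      field_simp
      ring
    have hquad : (logStd η₁ σ₁ t₁ ^ 2 - 2 * ρ * logStd η₁ σ₁ t₁ * logStd η₂ σ₂ t₂
        + logStd η₂ σ₂ t₂ ^ 2) / (1 - ρ ^ 2) = z.1 ^ 2 + z.2 ^ 2 := by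
      rw [hls1, hls2]
      have hnum : z.1 ^ 2 - 2 * ρ * z.1 * (ρ * z.1 + c * z.2) + (ρ * z.1 + c * z.2) ^ 2
          = (1 - ρ ^ 2) * (z.1 ^ 2 + z.2 ^ 2) := by
        have : z.1 ^ 2 - 2 * ρ * z.1 * (ρ * z.1 + c * z.2) + (ρ * z.1 + c * z.2) ^ 2
            = (1 - ρ ^ 2) * z.1 ^ 2 + c ^ 2 * z.2 ^ 2 := by ring
        rw [this, hc2]; ring
      rw [hnum]; field_simp
    have hbls : blsDensity g η₁ η₂ σ₁ σ₂ ρ (φ z)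
        = g (z.1 ^ 2 + z.2 ^ 2) / (t₁ * t₂ * σ₁ * σ₂ * c * (π * I)) := by
      have hφz : φ z = (t₁, t₂) := rfl
      rw [hφz, blsDensity, if_pos ⟨ht₁pos, ht₂pos⟩]
      simp only [hquad, ← hcdef, ← hI]
    rw [hbls, abs_of_pos hdetpos, hdet,
      ← ENNReal.ofReal_mul (by positivity)]
    congr 1
    field_simp
  -- rewrite the map as a composition
  have hcomp : (fun ω => (η₁ * Real.exp (σ₁ * Z₁ ω),
      η₂ * Real.exp (σ₂ * ρ * Z₁ ω + σ₂ * Real.sqrt (1 - ρ ^ 2) * Z₂ ω)))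
      = φ ∘ (fun ω => (Z₁ ω, Z₂ ω)) := rfl
  rw [hcomp, ← Measure.map_map hφm (hZ₁.prodMk hZ₂), hjoint]
  -- now prove the change-of-variables identity
  ext s hs
  rw [Measure.map_apply hφm hs, withDensity_apply _ (hφm hs), withDensity_apply _ hs]
  set Q : Set (ℝ × ℝ) := Ioi (0:ℝ) ×ˢ Ioi (0:ℝ) with hQdef
  have hQm : MeasurableSet Q := measurableSet_Ioi.prod measurableSet_Ioi
  -- F vanishes off Q
  have hFzero : ∀ t : ℝ × ℝ, t ∉ Q → blsDensity g η₁ η₂ σ₁ σ₂ ρ t = 0 := by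
    intro t ht
    rw [blsDensity, if_neg]
    intro h
    exact ht ⟨h.1, h.2⟩
  have hstep1 : ∫⁻ t in s, ENNReal.ofReal (blsDensity g η₁ η₂ σ₁ σ₂ ρ t)
      = ∫⁻ t in s ∩ Q, ENNReal.ofReal (blsDensity g η₁ η₂ σ₁ σ₂ ρ t) := by
    have hind : ∀ t : ℝ × ℝ, ENNReal.ofReal (blsDensity g η₁ η₂ σ₁ σ₂ ρ t)
        = Q.indicator (fun t => ENNReal.ofReal (blsDensity g η₁ η₂ σ₁ σ₂ ρ t)) t := by
      intro t
      by_cases ht : t ∈ Q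
      · rw [Set.indicator_of_mem ht]
      · rw [Set.indicator_of_notMem ht, hFzero t ht, ENNReal.ofReal_zero]
    calc ∫⁻ t in s, ENNReal.ofReal (blsDensity g η₁ η₂ σ₁ σ₂ ρ t)
        = ∫⁻ t in s, Q.indicator (fun t => ENNReal.ofReal (blsDensity g η₁ η₂ σ₁ σ₂ ρ t)) t :=
          lintegral_congr fun t => hind t
      _ = ∫⁻ t in Q, ENNReal.ofReal (blsDensity g η₁ η₂ σ₁ σ₂ ρ t) ∂(volume.restrict s) :=
          lintegral_indicator hQm _
      _ = ∫⁻ t in s ∩ Q, ENNReal.ofReal (blsDensity g η₁ η₂ σ₁ σ₂ ρ t) := by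
          rw [Measure.restrict_restrict hQm, Set.inter_comm]
  have himg : φ '' (φ ⁻¹' s) = s ∩ Q := by
    rw [Set.image_preimage_eq_inter_range, hφrange]
  have hstep2 : ∫⁻ t in s ∩ Q, ENNReal.ofReal (blsDensity g η₁ η₂ σ₁ σ₂ ρ t)
      = ∫⁻ z in φ ⁻¹' s, ENNReal.ofReal |(f' z).det|
          * ENNReal.ofReal (blsDensity g η₁ η₂ σ₁ σ₂ ρ (φ z)) := by
    rw [← himg]
    exact lintegral_image_eq_lintegral_abs_det_fderiv_mul volume (hφm hs)
      (fun z _ => (hderiv z).hasFDerivWithinAt) (hφinj.injOn)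
      (fun t => ENNReal.ofReal (blsDensity g η₁ η₂ σ₁ σ₂ ρ t))
  rw [hstep1, hstep2]
  exact (lintegral_congr fun z => (hkey z).symm)
end

section
/- Let g_c : ℝ → ℝ be a density generator, let f be the BLS(η₁,η₂,σ₁,σ₂,ρ; g_c) density and h(z₁,z₂) = g_c(z₁² + z₂²)/Z_{g_c}. Let B ⊆ (0,∞) be a Borel set, and for t₁ > 0 define B_ρ(t₁) = { ((log b − log η₂)/σ₂ − ρ t̃₁)/√(1−ρ²) : b ∈ B } and B₀ = { (log b − log η₂)/σ₂ : b ∈ B }. Then for every t₁ > 0: (i) ∫_B f(t₁, t₂) dt₂ = (1/(σ₁ t₁)) ∫_{B_ρ(t₁)} h(t̃₁, w) dw; (ii) ∫₀^∞ ∫_B f(s, t₂) dt₂ ds = ∫_{{(z₁,z₂) ∈ ℝ² : ρ z₁ + √(1−ρ²) z₂ ∈ B₀}} h(z₁, z₂) dz₁ dz₂; and hence (iii) if the quantity in (ii) is positive, the conditional density of T₁ given T₂ ∈ B equals t₁ ↦ (1/(σ₁ t₁)) ∫_{B_ρ(t₁)} h(t̃₁, w) dw divided by ∫_{{(z₁,z₂)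 : ρ z₁ + √(1−ρ²) z₂ ∈ B₀}} h(z₁, z₂) dz₁ dz₂. -/
open MeasureTheory Real Set

/-- The normalized joint density `h(z₁,z₂) = g (z₁²+z₂²)/(π ∫₀^∞ g)`. -/
noncomputable def stdJointDensity (g : ℝ → ℝ) (z₁ z₂ : ℝ) : ℝ :=
  g (z₁ ^ 2 + z₂ ^ 2) / (π * ∫ u in Ioi (0 : ℝ), g u)


open scoped ENNReal

lemma cov_log (B : Set ℝ) (hB : MeasurableSet B) (hBsub : B ⊆ Ioi 0)
    (c d : ℝ) (hd : 0 < d) (F : ℝ → ℝ) :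
    ∫ w in (fun b => (Real.log b - c) / d) '' B, F w
      = ∫ b in B, (1 / (d * b)) * F ((Real.log b - c) / d) := by
  rw [MeasureTheory.integral_image_eq_integral_abs_deriv_smul (f' := fun b => b⁻¹ / d) hB
    (fun x hx => (((Real.hasDerivAt_log (hBsub hx).ne').sub_const c).div_const d).hasDerivWithinAt)
    (fun x hx y hy hxy => by
      have hx0 := hBsub hx; have hy0 := hBsub hy
      have : Real.log x = Real.log y := by
        field_simp at hxy; linarith
      exact Real.log_injOn_pos hx0 hy0 this) F]
  refine setIntegral_congr_fun hB (fun b hb => ?_)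
  have hb0 : (0:ℝ) < b := hBsub hb
  rw [smul_eq_mul, abs_of_pos (by positivity)]
  congr 1
  field_simp


lemma integrable_radial {g : ℝ → ℝ} (hg_meas : Measurable g) (hg_nonneg : ∀ x, 0 ≤ g x)
    (hg_int : IntegrableOn g (Ioi 0)) :
    Integrable (fun z : ℝ × ℝ => g (z.1 ^ 2 + z.2 ^ 2)) := by
  have hmeas : Measurable fun z : ℝ × ℝ => g (z.1 ^ 2 + z.2 ^ 2) :=
    hg_meas.comp ((measurable_fst.pow_const 2).add (measurable_snd.pow_const 2))
  refine ⟨hmeas.aestronglyMeasurable, ?_⟩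
  rw [hasFiniteIntegral_iff_ofReal (ae_of_all _ fun z => hg_nonneg _)]
  -- 1D integrability of r ↦ |2r| * g (r²) on (0,∞)
  have him : (fun r : ℝ => r ^ 2) '' Ioi 0 = Ioi 0 := by
    ext u
    constructor
    · rintro ⟨r, hr, rfl⟩; exact pow_pos (show (0:ℝ) < r from hr) 2
    · intro hu; exact ⟨Real.sqrt u, Real.sqrt_pos.mpr hu, Real.sq_sqrt hu.le⟩
  have hinj : InjOn (fun r : ℝ => r ^ 2) (Ioi 0) := by
    intro x hx y hy h
    have h' : x ^ 2 = y ^ 2 := h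
    have hx0 : (0:ℝ) ≤ x := (mem_Ioi.mp hx).le
    have hy0 : (0:ℝ) ≤ y := (mem_Ioi.mp hy).le
    calc x = Real.sqrt (x ^ 2) := (Real.sqrt_sq hx0).symm
    _ = Real.sqrt (y ^ 2) := by rw [h']
    _ = y := Real.sqrt_sq hy0
  have h1d : IntegrableOn (fun r : ℝ => |2 * r| * g (r ^ 2)) (Ioi 0) := by
    have := (integrableOn_image_iff_integrableOn_abs_deriv_smul (f' := fun x => 2 * x)
      measurableSet_Ioi
      (fun x _ => by simpa using (hasDerivAt_pow 2 x).hasDerivWithinAt) hinj g).mp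
    rw [him] at this
    simpa [smul_eq_mul] using this hg_int
  have hfin1 : (∫⁻ r in Ioi (0:ℝ), ENNReal.ofReal r * ENNReal.ofReal (g (r ^ 2))) < ⊤ := by
    refine lt_of_le_of_lt (setLIntegral_mono' measurableSet_Ioi fun r hr => ?_) h1d.2
    have hr0 : (0:ℝ) < r := hr
    have h2 : r * g (r ^ 2) ≤ |2 * r| * g (r ^ 2) := by
      rw [abs_of_pos (by linarith)]
      nlinarith [hg_nonneg (r ^ 2)]
    calc ENNReal.ofReal r * ENNReal.ofReal (g (r ^ 2))
        = ENNReal.ofReal (r * g (r ^ 2)) := (ENNReal.ofReal_mul hr0.le).symm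
    _ ≤ ENNReal.ofReal (|2 * r| * g (r ^ 2)) := ENNReal.ofReal_le_ofReal h2
    _ ≤ ‖|2 * r| * g (r ^ 2)‖ₑ := Real.ofReal_le_enorm _
  -- polar coordinates
  set G : ℝ × ℝ → ℝ≥0∞ := fun z => ENNReal.ofReal (g (z.1 ^ 2 + z.2 ^ 2)) with hG
  set Bd : ℝ × ℝ → ℝ × ℝ →L[ℝ] ℝ × ℝ := fun p =>
    LinearMap.toContinuousLinearMap (Matrix.toLin (Module.Basis.finTwoProd ℝ) (Module.Basis.finTwoProd ℝ)
      !![cos p.2, -p.1 * sin p.2; sin p.2, p.1 * cos p.2]) with hBd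
  have B_det : ∀ p, (Bd p).det = p.1 := by
    intro p
    conv_rhs => rw [← one_mul p.1, ← cos_sq_add_sin_sq p.2]
    simp only [Bd, neg_mul, LinearMap.det_toContinuousLinearMap, LinearMap.det_toLin,
      Matrix.det_fin_two_of, sub_neg_eq_add]
    ring
  have key : (∫⁻ z, G z) = ∫⁻ p in polarCoord.target,
      ENNReal.ofReal |(Bd p).det| * G (polarCoord.symm p) := by
    rw [show Bd = fderivPolarCoordSymm from rfl]
    rw [← lintegral_image_eq_lintegral_abs_det_fderiv_mul volume
      polarCoord.open_target.measurableSet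
      (fun p _ => (hasFDerivAt_polarCoord_symm p).hasFDerivWithinAt)
      polarCoord.symm.injOn G]
    rw [polarCoord.symm_image_target_eq_source,
      Measure.restrict_congr_set polarCoord_source_ae_eq_univ, Measure.restrict_univ]
  rw [key]
  have heval : ∀ p ∈ polarCoord.target,
      ENNReal.ofReal |(Bd p).det| * G (polarCoord.symm p)
        = ENNReal.ofReal p.1 * ENNReal.ofReal (g (p.1 ^ 2)) := by
    rintro ⟨r, θ⟩ hp
    have hr : (0:ℝ) < r := hp.1
    have harg : ((polarCoord.symm (r, θ)).1 ^ 2 + (polarCoord.symm (r, θ)).2 ^ 2) = r ^ 2 := by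
      show (r * cos θ) ^ 2 + (r * sin θ) ^ 2 = r ^ 2
      nlinarith [sin_sq_add_cos_sq θ]
    rw [B_det, abs_of_pos hr, hG]
    simp only []
    rw [harg]
  rw [setLIntegral_congr_fun polarCoord.open_target.measurableSet heval]
  have htarget : polarCoord.target = Ioi (0:ℝ) ×ˢ Ioo (-π) π := rfl
  calc ∫⁻ p in polarCoord.target, ENNReal.ofReal p.1 * ENNReal.ofReal (g (p.1 ^ 2))
      = ∫⁻ p, (fun r => ENNReal.ofReal r * ENNReal.ofReal (g (r ^ 2))) p.1 * (fun _ => (1:ℝ≥0∞)) p.2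
          ∂((volume.restrict (Ioi 0)).prod (volume.restrict (Ioo (-π) π))) := by
        rw [htarget, Measure.volume_eq_prod, ← Measure.prod_restrict]
        exact lintegral_congr fun p => (mul_one _).symm
  _ = (∫⁻ r in Ioi (0:ℝ), ENNReal.ofReal r * ENNReal.ofReal (g (r ^ 2)))
        * ∫⁻ _θ in Ioo (-π) π, (1:ℝ≥0∞) :=
      lintegral_prod_mul
        ((ENNReal.measurable_ofReal.comp measurable_id).mul
          (ENNReal.measurable_ofReal.comp (hg_meas.comp (measurable_id.pow_const 2)))).aemeasurable
        aemeasurable_const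
  _ < ⊤ := by
      apply ENNReal.mul_lt_top hfin1
      simp [Real.volume_Ioo]

lemma bls_slice (g : ℝ → ℝ) (hg_pos : 0 < ∫ u in Ioi (0 : ℝ), g u)
    (η₁ η₂ σ₁ σ₂ ρ : ℝ) (hσ₁ : 0 < σ₁) (hσ₂ : 0 < σ₂)
    (hρ : ρ ∈ Ioo (-1 : ℝ) 1)
    (B : Set ℝ) (hB : MeasurableSet B) (hBsub : B ⊆ Ioi 0)
    (t₁ : ℝ) (ht₁ : 0 < t₁) :
    (∫ t₂ in B, blsDensity g η₁ η₂ σ₁ σ₂ ρ (t₁, t₂))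
      = (1 / (σ₁ * t₁)) *
        ∫ w in (fun b => ((Real.log b - Real.log η₂) / σ₂ - ρ * logStd η₁ σ₁ t₁)
            / Real.sqrt (1 - ρ ^ 2)) '' B,
          stdJointDensity g (logStd η₁ σ₁ t₁) w := by
  set a := logStd η₁ σ₁ t₁ with ha
  set s := Real.sqrt (1 - ρ ^ 2) with hsdef
  have hρ2 : (0:ℝ) < 1 - ρ ^ 2 := by nlinarith [hρ.1, hρ.2]
  have hs : 0 < s := Real.sqrt_pos.mpr hρ2
  have hs2 : s ^ 2 = 1 - ρ ^ 2 := Real.sq_sqrt hρ2.le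
  have hZpos : 0 < π * ∫ u in Ioi (0 : ℝ), g u := mul_pos Real.pi_pos hg_pos
  have hfun : (fun b => ((Real.log b - Real.log η₂) / σ₂ - ρ * a) / s)
      = fun b => (Real.log b - (Real.log η₂ + σ₂ * (ρ * a))) / (σ₂ * s) := by
    funext b; field_simp; ring
  rw [hfun, cov_log B hB hBsub _ _ (by positivity), ← integral_const_mul]
  refine setIntegral_congr_fun hB fun b hb => ?_
  have hb0 : (0:ℝ) < b := hBsub hb
  set w := (Real.log b - (Real.log η₂ + σ₂ * (ρ * a))) / (σ₂ * s) with hw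
  have hβ : logStd η₂ σ₂ b = s * w + ρ * a := by
    rw [hw, logStd]; field_simp; ring
  have harg2 : ((a ^ 2 - 2 * ρ * a * logStd η₂ σ₂ b + logStd η₂ σ₂ b ^ 2) / (1 - ρ ^ 2))
      = a ^ 2 + w ^ 2 := by
    rw [hβ, show a ^ 2 - 2 * ρ * a * (s * w + ρ * a) + (s * w + ρ * a) ^ 2
        = (1 - ρ ^ 2) * (a ^ 2 + w ^ 2) from by linear_combination w ^ 2 * hs2,
      mul_div_cancel_left₀ _ hρ2.ne']
  simp only [blsDensity, stdJointDensity, ha]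
  rw [if_pos ⟨ht₁, hb0⟩]
  simp only [← ha, ← hsdef, ← hw]
  rw [harg2]
  set Z := π * ∫ u in Ioi (0 : ℝ), g u with hZ
  generalize g (a ^ 2 + w ^ 2) = X
  field_simp

lemma bls_total (g : ℝ → ℝ) (hg_meas : Measurable g) (hg_nonneg : ∀ x, 0 ≤ g x)
    (hg_pos : 0 < ∫ u in Ioi (0 : ℝ), g u) (hg_int : IntegrableOn g (Ioi 0))
    (η₁ η₂ σ₁ σ₂ ρ : ℝ) (hη₁ : 0 < η₁) (hη₂ : 0 < η₂) (hσ₁ : 0 < σ₁) (hσ₂ : 0 < σ₂)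
    (hρ : ρ ∈ Ioo (-1 : ℝ) 1)
    (B : Set ℝ) (hB : MeasurableSet B) (hBsub : B ⊆ Ioi 0) :
    (∫ s in Ioi (0 : ℝ), ∫ t₂ in B, blsDensity g η₁ η₂ σ₁ σ₂ ρ (s, t₂))
        = ∫ z in {z : ℝ × ℝ | ρ * z.1 + Real.sqrt (1 - ρ ^ 2) * z.2
              ∈ (fun b => (Real.log b - Real.log η₂) / σ₂) '' B},
            stdJointDensity g z.1 z.2 := by
  set s := Real.sqrt (1 - ρ ^ 2) with hsdef
  have hρ2 : (0:ℝ) < 1 - ρ ^ 2 := by nlinarith [hρ.1, hρ.2]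
  have hs : 0 < s := Real.sqrt_pos.mpr hρ2
  set B₀ : Set ℝ := (fun b => (Real.log b - Real.log η₂) / σ₂) '' B with hB₀def
  have hB₀pre : B₀ = (fun y => η₂ * Real.exp (σ₂ * y)) ⁻¹' B := by
    ext y
    constructor
    · rintro ⟨b, hb, rfl⟩
      have hb0 : (0:ℝ) < b := hBsub hb
      have : η₂ * Real.exp (σ₂ * ((Real.log b - Real.log η₂) / σ₂)) = b := by
        rw [mul_div_cancel₀ _ hσ₂.ne', Real.exp_sub, Real.exp_log hb0, Real.exp_log hη₂]
        field_simp
      simpa [this] using hb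
    · intro hy
      refine ⟨η₂ * Real.exp (σ₂ * y), hy, ?_⟩
      show (Real.log (η₂ * Real.exp (σ₂ * y)) - Real.log η₂) / σ₂ = y
      rw [Real.log_mul hη₂.ne' (Real.exp_ne_zero _), Real.log_exp]
      field_simp
      ring
  have hB₀meas : MeasurableSet B₀ := by
    rw [hB₀pre]
    exact hB.preimage (by fun_prop)
  set S : Set (ℝ × ℝ) := {z : ℝ × ℝ | ρ * z.1 + s * z.2 ∈ B₀} with hSdef
  have hSmeas : MeasurableSet S :=
    hB₀meas.preimage ((measurable_fst.const_mul ρ).add (measurable_snd.const_mul s))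
  set G : ℝ → ℝ := fun z₁ => ∫ w in {w : ℝ | ρ * z₁ + s * w ∈ B₀}, stdJointDensity g z₁ w
    with hGdef
  have hsec : ∀ z₁ : ℝ, {w : ℝ | ρ * z₁ + s * w ∈ B₀}
      = (fun b => ((Real.log b - Real.log η₂) / σ₂ - ρ * z₁) / s) '' B := by
    intro z₁
    ext w
    simp only [mem_setOf_eq, hB₀def, mem_image]
    constructor
    · rintro ⟨b, hb, hbeq⟩
      exact ⟨b, hb, by rw [hbeq]; field_simp; ring⟩
    · rintro ⟨b, hb, rfl⟩
      exact ⟨b, hb, by field_simp; ring⟩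
  -- Step 1: rewrite inner integral using bls_slice
  have step1 : ∀ t ∈ Ioi (0:ℝ), (∫ t₂ in B, blsDensity g η₁ η₂ σ₁ σ₂ ρ (t, t₂))
      = (1 / (σ₁ * t)) * G (logStd η₁ σ₁ t) := by
    intro t ht
    rw [bls_slice g hg_pos η₁ η₂ σ₁ σ₂ ρ hσ₁ hσ₂ hρ B hB hBsub t ht]
    simp only [hGdef]
    rw [hsec (logStd η₁ σ₁ t)]
  rw [setIntegral_congr_fun measurableSet_Ioi step1]
  -- Step 2: change of variables s = η₁ exp(σ₁ z)
  have himg : (fun t => (Real.log t - Real.log η₁) / σ₁) '' Ioi 0 = univ := by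
    ext z
    simp only [mem_univ, iff_true, mem_image]
    refine ⟨η₁ * Real.exp (σ₁ * z), mem_Ioi.mpr (by positivity), ?_⟩
    rw [Real.log_mul hη₁.ne' (Real.exp_ne_zero _), Real.log_exp]
    field_simp
    ring
  have step2 : (∫ t in Ioi (0:ℝ), (1 / (σ₁ * t)) * G (logStd η₁ σ₁ t)) = ∫ z, G z := by
    have := cov_log (Ioi 0) measurableSet_Ioi (fun x hx => hx) (Real.log η₁) σ₁ hσ₁ G
    rw [himg] at this
    simp only [logStd]
    rw [← this, Measure.restrict_univ]
  rw [step2]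
  -- Step 3: Fubini
  have hH : Integrable (fun z : ℝ × ℝ => stdJointDensity g z.1 z.2) := by
    have := (integrable_radial hg_meas hg_nonneg hg_int).div_const
      (π * ∫ u in Ioi (0 : ℝ), g u)
    simpa [stdJointDensity] using this
  have hInd : Integrable (S.indicator fun z : ℝ × ℝ => stdJointDensity g z.1 z.2) :=
    hH.indicator hSmeas
  rw [← integral_indicator hSmeas]
  rw [Measure.volume_eq_prod] at hInd ⊢
  rw [integral_prod _ hInd]
  refine integral_congr_ae (ae_of_all _ fun z₁ => ?_)
  have hwmeas : MeasurableSet {w : ℝ | ρ * z₁ + s * w ∈ B₀} :=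
    hB₀meas.preimage (by fun_prop)
  have hpt : ∀ z₂ : ℝ, S.indicator (fun z : ℝ × ℝ => stdJointDensity g z.1 z.2) (z₁, z₂)
      = {w : ℝ | ρ * z₁ + s * w ∈ B₀}.indicator (fun w => stdJointDensity g z₁ w) z₂ := by
    intro z₂
    by_cases h : (z₁, z₂) ∈ S
    · rw [indicator_of_mem h,
        indicator_of_mem (show z₂ ∈ {w : ℝ | ρ * z₁ + s * w ∈ B₀} from h)]
    · rw [indicator_of_notMem h,
        indicator_of_notMem (show z₂ ∉ {w : ℝ | ρ * z₁ + s * w ∈ B₀} from h)]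
  show G z₁ = ∫ y, S.indicator (fun z : ℝ × ℝ => stdJointDensity g z.1 z.2) (z₁, y)
  rw [integral_congr_ae (ae_of_all _ hpt), integral_indicator hwmeas]


/-- Conditional density of `T₁` given `T₂ ∈ B` for a BLS distribution. -/
theorem bls_conditional_density_given_set
    (g : ℝ → ℝ) (hg_meas : Measurable g) (hg_nonneg : ∀ x, 0 ≤ g x)
    (hg_pos : 0 < ∫ u in Ioi (0 : ℝ), g u) (hg_int : IntegrableOn g (Ioi 0))
    (η₁ η₂ σ₁ σ₂ ρ : ℝ) (hη₁ : 0 < η₁) (hη₂ : 0 < η₂) (hσ₁ : 0 < σ₁) (hσ₂ : 0 < σ₂)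
    (hρ : ρ ∈ Ioo (-1 : ℝ) 1)
    (B : Set ℝ) (hB : MeasurableSet B) (hBsub : B ⊆ Ioi 0) :
    (∀ t₁ : ℝ, 0 < t₁ →
        (∫ t₂ in B, blsDensity g η₁ η₂ σ₁ σ₂ ρ (t₁, t₂))
          = (1 / (σ₁ * t₁)) *
            ∫ w in (fun b => ((Real.log b - Real.log η₂) / σ₂ - ρ * logStd η₁ σ₁ t₁)
                / Real.sqrt (1 - ρ ^ 2)) '' B,
              stdJointDensity g (logStd η₁ σ₁ t₁) w) ∧
    ((∫ s in Ioi (0 : ℝ), ∫ t₂ in B, blsDensity g η₁ η₂ σ₁ σ₂ ρ (s, t₂))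
        = ∫ z in {z : ℝ × ℝ | ρ * z.1 + Real.sqrt (1 - ρ ^ 2) * z.2
              ∈ (fun b => (Real.log b - Real.log η₂) / σ₂) '' B},
            stdJointDensity g z.1 z.2) ∧
    (0 < (∫ s in Ioi (0 : ℝ), ∫ t₂ in B, blsDensity g η₁ η₂ σ₁ σ₂ ρ (s, t₂)) →
      ∀ t₁ : ℝ, 0 < t₁ →
        (∫ t₂ in B, blsDensity g η₁ η₂ σ₁ σ₂ ρ (t₁, t₂))
            / (∫ s in Ioi (0 : ℝ), ∫ t₂ in B, blsDensity g η₁ η₂ σ₁ σ₂ ρ (s, t₂))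
          = ((1 / (σ₁ * t₁)) *
              ∫ w in (fun b => ((Real.log b - Real.log η₂) / σ₂ - ρ * logStd η₁ σ₁ t₁)
                  / Real.sqrt (1 - ρ ^ 2)) '' B,
                stdJointDensity g (logStd η₁ σ₁ t₁) w)
            / ∫ z in {z : ℝ × ℝ | ρ * z.1 + Real.sqrt (1 - ρ ^ 2) * z.2
                  ∈ (fun b => (Real.log b - Real.log η₂) / σ₂) '' B},
                stdJointDensity g z.1 z.2) := by
  refine ⟨fun t₁ ht₁ => bls_slice g hg_pos η₁ η₂ σ₁ σ₂ ρ hσ₁ hσ₂ hρ B hB hBsub t₁ ht₁,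
    bls_total g hg_meas hg_nonneg hg_pos hg_int η₁ η₂ σ₁ σ₂ ρ hη₁ hη₂ hσ₁ hσ₂ hρ B hB hBsub,
    fun _ t₁ ht₁ => ?_⟩
  rw [bls_slice g hg_pos η₁ η₂ σ₁ σ₂ ρ hσ₁ hσ₂ hρ B hB hBsub t₁ ht₁,
    bls_total g hg_meas hg_nonneg hg_pos hg_int η₁ η₂ σ₁ σ₂ ρ hη₁ hη₂ hσ₁ hσ₂ hρ B hB hBsub]
end

section
/- Let φ(x) = exp(−x²/2)/√(2π) be the standard normal density and for a Borel set C ⊆ ℝ write Φ(C) = ∫_C φ(x) dx. Let f be the BLS(η₁,η₂,σ₁,σ₂,ρ; g_c) density with Gaussian generator g_c(x) = exp(−x/2) (so Z_{g_c} = 2π). Let B ⊆ (0,∞) be a Borel set with ∫₀^∞ ∫_B f(s,t₂) dt₂ ds > 0, and for t₁ > 0 define B_ρ(t₁) = { ((log b − log η₂)/σ₂ − ρ t̃₁)/√(1−ρ²) : b ∈ B } and B₀ = { (log b − log η₂)/σ₂ : b ∈ B }. Then for every t₁ > 0, the conditional density of T₁ given T₂ ∈ B satisfies [∫_B f(t₁,t₂)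 dt₂] / [∫₀^∞ ∫_B f(s,t₂) dt₂ ds] = (1/(t₁ σ₁)) · φ(t̃₁) · Φ(B_ρ(t₁)) / Φ(B₀). -/
open MeasureTheory Real Set

/-- The standard normal density. -/
noncomputable def stdNormalPDF (x : ℝ) : ℝ := Real.exp (-x ^ 2 / 2) / Real.sqrt (2 * π)

lemma stdNormalPDF_nonneg (x : ℝ) : 0 ≤ stdNormalPDF x := by
  unfold stdNormalPDF; positivity

lemma continuous_stdNormalPDF : Continuous stdNormalPDF := by
  unfold stdNormalPDF; fun_prop

lemma integrable_stdNormalPDF : Integrable stdNormalPDF := by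
  have h : stdNormalPDF = fun x => Real.exp (-(1/2) * x ^ 2) / Real.sqrt (2 * π) := by
    funext x; unfold stdNormalPDF; ring_nf
  rw [h]
  exact (integrable_exp_neg_mul_sq (by norm_num : (0:ℝ) < 1/2)).div_const _

lemma integral_stdNormalPDF : ∫ x, stdNormalPDF x = 1 := by
  have h : stdNormalPDF = fun x => Real.exp (-(1/2) * x ^ 2) / Real.sqrt (2 * π) := by
    funext x; unfold stdNormalPDF; ring_nf
  rw [h, integral_div, integral_gaussian]
  rw [show π / (1/2) = 2 * π by ring]
  exact div_self (Real.sqrt_ne_zero'.mpr (by positivity))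

lemma integrable_stdNormalPDF_affine (μ k : ℝ) (hk : k ≠ 0) :
    Integrable (fun x => stdNormalPDF ((x - μ) / k)) := by
  exact (integrable_stdNormalPDF.comp_div hk).comp_sub_right μ

lemma integral_stdNormalPDF_affine (μ : ℝ) {k : ℝ} (hk : 0 < k) :
    ∫ x, (1/k) * stdNormalPDF ((x - μ) / k) = 1 := by
  rw [integral_const_mul]
  simp_rw [sub_eq_add_neg]
  rw [integral_add_right_eq_self (fun y => stdNormalPDF (y / k)) (-μ)]
  rw [Measure.integral_comp_div stdNormalPDF k, integral_stdNormalPDF]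
  simp [abs_of_pos hk, one_div, inv_mul_cancel₀ hk.ne']

lemma cov_log_s9 {S : Set ℝ} (hS : MeasurableSet S) (hsub : S ⊆ Ioi 0) (m : ℝ) {k : ℝ}
    (hk : 0 < k) (g : ℝ → ℝ) :
    ∫ x in (fun b => (Real.log b - m) / k) '' S, g x
      = ∫ t in S, (1 / (t * k)) * g ((Real.log t - m) / k) := by
  have hderiv : ∀ x ∈ S, HasDerivWithinAt (fun b => (Real.log b - m) / k)
      (1 / (x * k)) S x := by
    intro x hx
    have hx0 : 0 < x := hsub hx
    have := (((Real.hasDerivAt_log hx0.ne').sub_const m).div_const k).hasDerivWithinAt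
      (s := S)
    rw [show 1 / (x * k) = x⁻¹ / k by ring]
    exact this
  have hinj : InjOn (fun b => (Real.log b - m) / k) S := by
    intro a ha b hb hab
    have h1 : Real.log a = Real.log b := by
      field_simp at hab
      linarith
    exact Real.log_injOn_pos (hsub ha) (hsub hb) h1
  rw [integral_image_eq_integral_abs_deriv_smul hS hderiv hinj g]
  refine setIntegral_congr_fun hS fun t ht => ?_
  have ht0 : 0 < t := hsub ht
  rw [smul_eq_mul, abs_of_pos (by positivity)]

lemma gauss_marginal {ρ c : ℝ} (hc : 0 < c) (hc2 : c ^ 2 = 1 - ρ ^ 2) (x : ℝ) :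
    ∫ u, stdNormalPDF u * ((1/c) * stdNormalPDF ((x - ρ * u) / c)) = stdNormalPDF x := by
  have h1ρ : (1 : ℝ) - ρ ^ 2 ≠ 0 := by rw [← hc2]; positivity
  have key : ∀ u : ℝ, stdNormalPDF u * ((1/c) * stdNormalPDF ((x - ρ * u) / c))
      = stdNormalPDF x * ((1/c) * stdNormalPDF ((u - ρ * x) / c)) := by
    intro u
    have h1 : u ^ 2 + ((x - ρ * u) / c) ^ 2 = x ^ 2 + ((u - ρ * x) / c) ^ 2 := by
      rw [div_pow, div_pow, hc2]
      field_simp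
      ring
    have h2 : Real.exp (-u ^ 2 / 2) * Real.exp (-((x - ρ * u) / c) ^ 2 / 2)
        = Real.exp (-x ^ 2 / 2) * Real.exp (-((u - ρ * x) / c) ^ 2 / 2) := by
      rw [← Real.exp_add, ← Real.exp_add]
      congr 1
      linarith
    calc stdNormalPDF u * ((1/c) * stdNormalPDF ((x - ρ * u) / c))
        = (Real.exp (-u ^ 2 / 2) * Real.exp (-((x - ρ * u) / c) ^ 2 / 2))
            * (1 / (c * (Real.sqrt (2*π) * Real.sqrt (2*π)))) := by
          unfold stdNormalPDF; ring
      _ = (Real.exp (-x ^ 2 / 2) * Real.exp (-((u - ρ * x) / c) ^ 2 / 2))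
            * (1 / (c * (Real.sqrt (2*π) * Real.sqrt (2*π)))) := by rw [h2]
      _ = stdNormalPDF x * ((1/c) * stdNormalPDF ((u - ρ * x) / c)) := by
          unfold stdNormalPDF; ring
  simp_rw [key]
  rw [integral_const_mul]
  rw [show (∫ (u : ℝ), (1/c) * stdNormalPDF ((u - ρ * x) / c)) = 1 from
    integral_stdNormalPDF_affine (ρ * x) hc, mul_one]

lemma integral_exp_neg_half : ∫ u in Ioi (0 : ℝ), Real.exp (-u / 2) = 2 := by
  have h := integral_comp_mul_right_Ioi (fun x => Real.exp (-x)) 0 (by norm_num : (0:ℝ) < 1/2)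
  simp only [zero_mul] at h
  rw [show (fun u : ℝ => Real.exp (-u / 2)) = (fun u : ℝ => Real.exp (-(u * (1/2)))) from
    funext fun u => by ring_nf] at *
  rw [h, integral_exp_neg_Ioi_zero]
  norm_num

lemma bls_eq {η₁ η₂ σ₁ σ₂ ρ : ℝ} (hσ₁ : 0 < σ₁) (hσ₂ : 0 < σ₂) (hρ : ρ ∈ Ioo (-1:ℝ) 1)
    {t₁ t₂ : ℝ} (h₁ : 0 < t₁) (h₂ : 0 < t₂) :
    blsDensity (fun x => Real.exp (-x / 2)) η₁ η₂ σ₁ σ₂ ρ (t₁, t₂)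
      = (1 / (t₁ * σ₁) * stdNormalPDF (logStd η₁ σ₁ t₁))
        * ((1 / (t₂ * σ₂)) * ((1 / Real.sqrt (1 - ρ ^ 2))
            * stdNormalPDF (((Real.log t₂ - Real.log η₂) / σ₂
                - ρ * logStd η₁ σ₁ t₁) / Real.sqrt (1 - ρ ^ 2)))) := by
  have h1ρ : (0:ℝ) < 1 - ρ ^ 2 := by nlinarith [hρ.1, hρ.2]
  set c := Real.sqrt (1 - ρ ^ 2) with hcdef
  have hc : 0 < c := Real.sqrt_pos.mpr h1ρ
  have hc2 : c ^ 2 = 1 - ρ ^ 2 := Real.sq_sqrt h1ρ.le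
  set a := logStd η₁ σ₁ t₁ with ha
  set b := logStd η₂ σ₂ t₂ with hb
  have hb' : b = (Real.log t₂ - Real.log η₂) / σ₂ := rfl
  rw [blsDensity, if_pos ⟨h₁, h₂⟩]
  simp only
  rw [integral_exp_neg_half]
  have hQ : (a ^ 2 - 2 * ρ * a * b + b ^ 2) / (1 - ρ ^ 2)
      = a ^ 2 + ((b - ρ * a) / c) ^ 2 := by
    rw [div_pow, hc2]
    field_simp
    ring
  rw [hQ]
  have hexp : Real.exp (-(a ^ 2 + ((b - ρ * a) / c) ^ 2) / 2)
      = Real.exp (-a ^ 2 / 2) * Real.exp (-((b - ρ * a) / c) ^ 2 / 2) := by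
    rw [← Real.exp_add]; congr 1; ring
  rw [hexp]
  rw [← hb', stdNormalPDF, stdNormalPDF]
  rw [← hcdef]
  rw [div_eq_iff (by positivity)]
  field_simp
  have h22 : Real.sqrt 2 * Real.sqrt π * (Real.sqrt 2 * Real.sqrt π) = 2 * π := by
    rw [show Real.sqrt 2 * Real.sqrt π * (Real.sqrt 2 * Real.sqrt π)
      = (Real.sqrt 2 * Real.sqrt 2) * (Real.sqrt π * Real.sqrt π) by ring,
      Real.mul_self_sqrt (by norm_num), Real.mul_self_sqrt Real.pi_pos.le]
  linear_combination (Real.sq_sqrt (by positivity : (0:ℝ) ≤ 2 * π))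

/-- Conditional density of `T₁` given `T₂ ∈ B` for the bivariate log-normal
distribution (Gaussian generator `g(x) = e^{−x/2}`). -/
theorem bls_gaussian_conditional_density_given_set
    (η₁ η₂ σ₁ σ₂ ρ : ℝ) (hη₁ : 0 < η₁) (hη₂ : 0 < η₂) (hσ₁ : 0 < σ₁) (hσ₂ : 0 < σ₂)
    (hρ : ρ ∈ Ioo (-1 : ℝ) 1)
    (B : Set ℝ) (hB : MeasurableSet B) (hBsub : B ⊆ Ioi 0)
    (hpos : 0 < ∫ s in Ioi (0 : ℝ), ∫ t₂ in B,
        blsDensity (fun x => Real.exp (-x / 2)) η₁ η₂ σ₁ σ₂ ρ (s, t₂)) :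
    ∀ t₁ : ℝ, 0 < t₁ →
      (∫ t₂ in B, blsDensity (fun x => Real.exp (-x / 2)) η₁ η₂ σ₁ σ₂ ρ (t₁, t₂))
          / (∫ s in Ioi (0 : ℝ), ∫ t₂ in B,
              blsDensity (fun x => Real.exp (-x / 2)) η₁ η₂ σ₁ σ₂ ρ (s, t₂))
        = (1 / (t₁ * σ₁)) * stdNormalPDF (logStd η₁ σ₁ t₁)
            * (∫ x in (fun b => ((Real.log b - Real.log η₂) / σ₂ - ρ * logStd η₁ σ₁ t₁)
                  / Real.sqrt (1 - ρ ^ 2)) '' B, stdNormalPDF x)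
            / (∫ x in (fun b => (Real.log b - Real.log η₂) / σ₂) '' B, stdNormalPDF x) := by
  have h1ρ : (0:ℝ) < 1 - ρ ^ 2 := by nlinarith [hρ.1, hρ.2]
  set c := Real.sqrt (1 - ρ ^ 2) with hcdef
  have hc : 0 < c := Real.sqrt_pos.mpr h1ρ
  have hc2 : c ^ 2 = 1 - ρ ^ 2 := Real.sq_sqrt h1ρ.le
  -- the image set integral in terms of an integral over B
  have himg : ∀ r : ℝ,
      (∫ x in (fun b => ((Real.log b - Real.log η₂) / σ₂ - r) / c) '' B, stdNormalPDF x)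
        = ∫ t in B, (1 / (t * σ₂))
            * ((1/c) * stdNormalPDF (((Real.log t - Real.log η₂) / σ₂ - r) / c)) := by
    intro r
    have hfun : (fun b => ((Real.log b - Real.log η₂) / σ₂ - r) / c)
        = fun b => (Real.log b - (Real.log η₂ + σ₂ * r)) / (σ₂ * c) := by
      funext b
      field_simp
      ring
    rw [hfun, cov_log_s9 hB hBsub (Real.log η₂ + σ₂ * r) (mul_pos hσ₂ hc) stdNormalPDF]
    refine setIntegral_congr_fun hB fun t ht => ?_
    have ht0 : 0 < t := hBsub ht
    have harg : (Real.log t - (Real.log η₂ + σ₂ * r)) / (σ₂ * c)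
        = ((Real.log t - Real.log η₂) / σ₂ - r) / c := by
      field_simp
      ring
    rw [harg]
    ring
  -- G : the image-set Gaussian mass as a function of the conditioning value
  set G : ℝ → ℝ := fun u =>
    ∫ x in (fun b => (Real.log b - Real.log η₂) / σ₂) '' B,
      (1/c) * stdNormalPDF ((x - ρ * u) / c) with hGdef
  have hG : ∀ u : ℝ, G u = ∫ t in B, (1 / (t * σ₂))
      * ((1/c) * stdNormalPDF (((Real.log t - Real.log η₂) / σ₂ - ρ * u) / c)) := by
    intro u
    rw [hGdef]
    exact cov_log_s9 hB hBsub (Real.log η₂) hσ₂ fun x => (1/c) * stdNormalPDF ((x - ρ * u) / c)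
  -- the inner integral for each s > 0
  have hinner : ∀ s : ℝ, 0 < s →
      (∫ t₂ in B, blsDensity (fun x => Real.exp (-x / 2)) η₁ η₂ σ₁ σ₂ ρ (s, t₂))
        = (1 / (s * σ₁)) * (stdNormalPDF (logStd η₁ σ₁ s) * G (logStd η₁ σ₁ s)) := by
    intro s hs
    rw [hG]
    calc (∫ t₂ in B, blsDensity (fun x => Real.exp (-x / 2)) η₁ η₂ σ₁ σ₂ ρ (s, t₂))
        = ∫ t₂ in B, (1 / (s * σ₁) * stdNormalPDF (logStd η₁ σ₁ s))
            * ((1 / (t₂ * σ₂)) * ((1/c)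
              * stdNormalPDF (((Real.log t₂ - Real.log η₂) / σ₂ - ρ * logStd η₁ σ₁ s) / c))) :=
          setIntegral_congr_fun hB fun t₂ ht₂ => bls_eq hσ₁ hσ₂ hρ hs (hBsub ht₂)
      _ = (1 / (s * σ₁) * stdNormalPDF (logStd η₁ σ₁ s))
            * ∫ t₂ in B, (1 / (t₂ * σ₂)) * ((1/c)
              * stdNormalPDF (((Real.log t₂ - Real.log η₂) / σ₂ - ρ * logStd η₁ σ₁ s) / c)) :=
          integral_const_mul _ _
      _ = _ := by ring
  -- numerator
  intro t₁ ht₁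
  have hnum : (∫ t₂ in B, blsDensity (fun x => Real.exp (-x / 2)) η₁ η₂ σ₁ σ₂ ρ (t₁, t₂))
      = (1 / (t₁ * σ₁)) * stdNormalPDF (logStd η₁ σ₁ t₁)
        * ∫ x in (fun b => ((Real.log b - Real.log η₂) / σ₂ - ρ * logStd η₁ σ₁ t₁) / c) '' B,
            stdNormalPDF x := by
    rw [hinner t₁ ht₁, himg (ρ * logStd η₁ σ₁ t₁), ← hG]
    ring
  -- integrability for Fubini
  set B₀ := (fun b => (Real.log b - Real.log η₂) / σ₂) '' B with hB₀def
  have hK : Integrable (fun p : ℝ × ℝ =>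
      stdNormalPDF p.1 * ((1/c) * stdNormalPDF ((p.2 - ρ * p.1) / c)))
      (volume.prod (volume.restrict B₀)) := by
    have hcont : Continuous (fun p : ℝ × ℝ =>
        stdNormalPDF p.1 * ((1/c) * stdNormalPDF ((p.2 - ρ * p.1) / c))) := by
      apply Continuous.mul (continuous_stdNormalPDF.comp continuous_fst)
      apply Continuous.mul continuous_const
      exact continuous_stdNormalPDF.comp (by fun_prop)
    have hKm := hcont.aestronglyMeasurable
      (μ := volume.prod (volume.restrict B₀))
    rw [integrable_prod_iff hKm]
    have hsec : ∀ u : ℝ, Integrable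
        (fun x => stdNormalPDF u * ((1/c) * stdNormalPDF ((x - ρ * u) / c)))
        (volume.restrict B₀) := by
      intro u
      exact (((integrable_stdNormalPDF_affine (ρ * u) c hc.ne').const_mul
        (1/c)).const_mul (stdNormalPDF u)).restrict
    have hval : ∀ u : ℝ, (∫ x in B₀,
        ‖stdNormalPDF u * ((1/c) * stdNormalPDF ((x - ρ * u) / c))‖)
        = stdNormalPDF u * ∫ x in B₀, (1/c) * stdNormalPDF ((x - ρ * u) / c) := by
      intro u
      rw [← integral_const_mul]
      refine integral_congr_ae (Filter.Eventually.of_forall fun x => ?_)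
      have h0 : 0 ≤ stdNormalPDF u * (1 / c * stdNormalPDF ((x - ρ * u) / c)) :=
        mul_nonneg (stdNormalPDF_nonneg _)
          (mul_nonneg (by positivity) (stdNormalPDF_nonneg _))
      show ‖stdNormalPDF u * (1 / c * stdNormalPDF ((x - ρ * u) / c))‖
          = stdNormalPDF u * (1 / c * stdNormalPDF ((x - ρ * u) / c))
      rw [Real.norm_eq_abs, abs_of_nonneg h0]
    refine ⟨Filter.Eventually.of_forall hsec, ?_⟩
    refine Integrable.mono' integrable_stdNormalPDF
      (hKm.norm.integral_prod_right') ?_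
    refine Filter.Eventually.of_forall fun u => ?_
    rw [Real.norm_eq_abs, abs_of_nonneg (integral_nonneg fun x => norm_nonneg _)]
    rw [hval u]
    have hle : (∫ x in B₀, (1/c) * stdNormalPDF ((x - ρ * u) / c))
        ≤ ∫ x, (1/c) * stdNormalPDF ((x - ρ * u) / c) := by
      refine setIntegral_le_integral
        ((integrable_stdNormalPDF_affine (ρ * u) c hc.ne').const_mul (1/c)) ?_
      exact Filter.Eventually.of_forall fun x =>
        mul_nonneg (by positivity) (stdNormalPDF_nonneg _)
    rw [integral_stdNormalPDF_affine (ρ * u) hc] at hle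
    calc stdNormalPDF u * ∫ x in B₀, (1/c) * stdNormalPDF ((x - ρ * u) / c)
        ≤ stdNormalPDF u * 1 := by
          exact mul_le_mul_of_nonneg_left hle (stdNormalPDF_nonneg u)
      _ = stdNormalPDF u := mul_one _
  -- denominator
  have hden : (∫ s in Ioi (0 : ℝ), ∫ t₂ in B,
      blsDensity (fun x => Real.exp (-x / 2)) η₁ η₂ σ₁ σ₂ ρ (s, t₂))
      = ∫ x in B₀, stdNormalPDF x := by
    have h1 : (∫ s in Ioi (0 : ℝ), ∫ t₂ in B,
        blsDensity (fun x => Real.exp (-x / 2)) η₁ η₂ σ₁ σ₂ ρ (s, t₂))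
        = ∫ s in Ioi (0 : ℝ), (1 / (s * σ₁))
            * (stdNormalPDF (logStd η₁ σ₁ s) * G (logStd η₁ σ₁ s)) :=
      setIntegral_congr_fun measurableSet_Ioi fun s hs => hinner s hs
    have himgu : (fun b => (Real.log b - Real.log η₁) / σ₁) '' Ioi 0 = univ := by
      ext x
      simp only [mem_image, mem_univ, iff_true]
      refine ⟨η₁ * Real.exp (σ₁ * x), mem_Ioi.mpr (by positivity), ?_⟩
      rw [Real.log_mul hη₁.ne' (Real.exp_pos _).ne', Real.log_exp]
      field_simp
      ring
    have h2 := cov_log_s9 measurableSet_Ioi (fun x hx => hx) (Real.log η₁) hσ₁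
      (fun u => stdNormalPDF u * G u)
    rw [himgu, Measure.restrict_univ] at h2
    rw [h1]
    simp only [logStd]
    rw [← h2]
    calc (∫ u, stdNormalPDF u * G u)
        = ∫ u, ∫ x in B₀, stdNormalPDF u * ((1/c) * stdNormalPDF ((x - ρ * u) / c)) := by
          refine integral_congr_ae (Filter.Eventually.of_forall fun u => ?_)
          show stdNormalPDF u * G u
              = ∫ x in B₀, stdNormalPDF u * ((1/c) * stdNormalPDF ((x - ρ * u) / c))
          simp only [hGdef]
          exact (integral_const_mul (stdNormalPDF u) _).symm
      _ = ∫ x in B₀, ∫ u, stdNormalPDF u * ((1/c) * stdNormalPDF ((x - ρ * u) / c)) :=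
          integral_integral_swap hK
      _ = ∫ x in B₀, stdNormalPDF x :=
          integral_congr_ae (Filter.Eventually.of_forall fun x => gauss_marginal hc hc2 x)
  rw [hnum, hden]
end

section
/- For ν > 0 let f_ν(x) = Γ((ν+1)/2)/(√(νπ) Γ(ν/2)) · (1 + x²/ν)^{−(ν+1)/2} denote the standard Student-t density with ν degrees of freedom, and for a Borel set C ⊆ ℝ write F_ν(C) = ∫_C f_ν(x) dx. Let f be the BLS(η₁,η₂,σ₁,σ₂,ρ; g_c) density with Student-t generator g_c(x) = (1 + x/ν)^{−(ν+2)/2}. Let B ⊆ (0,∞) be a Borel set with ∫₀^∞ ∫_B f(s,t₂) dt₂ ds > 0, and for t₁ > 0 define B_ρ(t₁) = { ((log b − log η₂)/σ₂ − ρ t̃₁)/√(1−ρ²) : b ∈ B } and B₀ = { (log b − log η₂)/σ₂ : b ∈ B }. Then for every t₁ > 0, [∫_B f(t₁,t₂) dt₂] / [∫₀^∞ ∫_B f(s,t₂) dt₂ ds] = (1/(t₁ σ₁)) · f_ν(t̃₁) · F_{ν+1}( √((ν+1)/(ν + t̃₁²)) · B_ρ(t₁) ) / F_ν(B₀), where √((ν+1)/(ν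 + t̃₁²)) · B_ρ(t₁) denotes the set {√((ν+1)/(ν + t̃₁²)) w : w ∈ B_ρ(t₁)}. -/
open MeasureTheory Real Set

/-- The standard Student-`t` density with `ν` degrees of freedom. -/
noncomputable def studentTPDF (ν x : ℝ) : ℝ :=
  Real.Gamma ((ν + 1) / 2) / (Real.sqrt (ν * π) * Real.Gamma (ν / 2))
    * (1 + x ^ 2 / ν) ^ (-((ν + 1) / 2))

/-- The Student-`t` density generator with `ν` degrees of freedom. -/
noncomputable def studentTGen (ν x : ℝ) : ℝ := (1 + x / ν) ^ (-((ν + 2) / 2))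

noncomputable def Kc (ν σ₂ ρ τ : ℝ) : ℝ :=
  Real.sqrt ((ν + 1) / (ν + τ ^ 2)) / (σ₂ * Real.sqrt (1 - ρ ^ 2))

noncomputable def Dc (ν η₂ σ₂ ρ τ : ℝ) : ℝ :=
  Real.sqrt ((ν + 1) / (ν + τ ^ 2)) * ((-Real.log η₂) / σ₂ - ρ * τ) / Real.sqrt (1 - ρ ^ 2)



lemma logaffine_image_integral {k d : ℝ} (hk : 0 < k) (G : ℝ → ℝ) {A : Set ℝ}
    (hA : MeasurableSet A) (hA' : A ⊆ Ioi 0) :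
    ∫ x in (fun b => k * Real.log b + d) '' A, G x
      = ∫ b in A, (k / b) * G (k * Real.log b + d) := by
  rw [integral_image_eq_integral_abs_deriv_smul (f' := fun b => k / b) hA
    (fun b hb => by
      have hb0 : 0 < b := hA' hb
      have h := ((Real.hasDerivAt_log hb0.ne').const_mul k).add_const d
      simpa [div_eq_mul_inv] using h.hasDerivWithinAt)
    (fun x hx y hy hxy => by
      have : Real.log x = Real.log y := by
        have h' : k * Real.log x + d = k * Real.log y + d := hxy
        exact mul_left_cancel₀ hk.ne' (add_right_cancel h')
      exact Real.log_injOn_pos (hA' hx) (hA' hy) this) G]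
  refine setIntegral_congr_fun hA fun b hb => ?_
  have hb0 : 0 < b := hA' hb
  rw [abs_of_pos (by positivity), smul_eq_mul]

lemma logaffine_image_integrableOn {k d : ℝ} (hk : 0 < k) (G : ℝ → ℝ) {A : Set ℝ}
    (hA : MeasurableSet A) (hA' : A ⊆ Ioi 0) :
    IntegrableOn G ((fun b => k * Real.log b + d) '' A)
      ↔ IntegrableOn (fun b => (k / b) * G (k * Real.log b + d)) A := by
  rw [integrableOn_image_iff_integrableOn_abs_deriv_smul (f' := fun b => k / b) hA
    (fun b hb => by
      have hb0 : 0 < b := hA' hb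
      have h := ((Real.hasDerivAt_log hb0.ne').const_mul k).add_const d
      simpa [div_eq_mul_inv] using h.hasDerivWithinAt)
    (fun x hx y hy hxy => by
      have : Real.log x = Real.log y := by
        have h' : k * Real.log x + d = k * Real.log y + d := hxy
        exact mul_left_cancel₀ hk.ne' (add_right_cancel h')
      exact Real.log_injOn_pos (hA' hx) (hA' hy) this) G]
  exact integrableOn_congr_fun (fun b hb => by
    have hb0 : 0 < b := hA' hb
    rw [abs_of_pos (by positivity), smul_eq_mul]) hA

lemma logaffine_image_Ioi {k d : ℝ} (hk : 0 < k) :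
    (fun b => k * Real.log b + d) '' Ioi 0 = univ := by
  apply eq_univ_of_forall
  intro x
  exact ⟨Real.exp ((x - d) / k), Real.exp_pos _, by
    show k * Real.log (Real.exp _) + d = x
    rw [Real.log_exp]; field_simp; ring⟩


lemma studentTGen_integral {ν : ℝ} (hν : 0 < ν) :
    ∫ u in Ioi (0 : ℝ), studentTGen ν u = 2 := by
  have himg : (fun u : ℝ => 1 + u / ν) '' Ioi 0 = Ioi 1 := by
    ext x
    constructor
    · rintro ⟨u, hu, rfl⟩
      have hu' : (0:ℝ) < u := hu
      have : 0 < u / ν := by positivity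
      simpa using this
    · intro hx
      exact ⟨ν * (x - 1), by simp only [mem_Ioi] at hx ⊢; nlinarith, by
        field_simp; ring⟩
  have key := integral_image_eq_integral_abs_deriv_smul (f := fun u : ℝ => 1 + u / ν)
    (f' := fun _ => 1 / ν) (s := Ioi (0:ℝ)) measurableSet_Ioi
    (fun u _ => ((hasDerivAt_id u).div_const ν |>.const_add 1).hasDerivWithinAt)
    (fun x _ y _ hxy => by field_simp at hxy; linarith)
    (fun x => x ^ (-((ν + 2) / 2)))
  rw [himg] at key
  rw [integral_Ioi_rpow_of_lt (by linarith) zero_lt_one] at key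
  have h1 : -(1:ℝ) ^ (-((ν + 2) / 2) + 1) / (-((ν + 2) / 2) + 1) = 2 / ν := by
    rw [Real.one_rpow]
    field_simp
    rw [show -(ν + 2) + 2 = -ν by ring, div_neg, neg_neg, div_self hν.ne']
  rw [h1] at key
  have h2 : ∫ u in Ioi (0:ℝ), studentTGen ν u
      = (∫ u in Ioi (0:ℝ), |1/ν| • ((1 + u / ν) ^ (-((ν + 2) / 2)))) * ν := by
    rw [← integral_mul_const]
    refine setIntegral_congr_fun measurableSet_Ioi fun u _ => ?_
    rw [abs_of_pos (by positivity), smul_eq_mul, studentTGen]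
    field_simp
  rw [h2, ← key]
  field_simp


lemma realBeta {u v : ℝ} (hu : 0 < u) (hv : 0 < v) :
    IntegrableOn (fun t : ℝ => t ^ (u - 1) * (1 - t) ^ (v - 1)) (Ioo 0 1) ∧
    ∫ t in Ioo (0:ℝ) 1, t ^ (u - 1) * (1 - t) ^ (v - 1)
      = Real.Gamma u * Real.Gamma v / Real.Gamma (u + v) := by
  have hu' : 0 < (u : ℂ).re := by simpa using hu
  have hv' : 0 < (v : ℂ).re := by simpa using hv
  have hconv := Complex.betaIntegral_convergent hu' hv'
  have hIoc : IntegrableOn (fun x : ℝ => (x:ℂ) ^ ((u:ℂ) - 1) * (1 - (x:ℂ)) ^ ((v:ℂ) - 1))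
      (Ioc 0 1) := by
    rw [← intervalIntegrable_iff_integrableOn_Ioc_of_le zero_le_one]
    exact hconv
  have hIoo := hIoc.mono_set Ioo_subset_Ioc_self
  have hcongr : ∀ t ∈ Ioo (0:ℝ) 1,
      ((t ^ (u - 1) * (1 - t) ^ (v - 1) : ℝ) : ℂ)
        = (t:ℂ) ^ ((u:ℂ) - 1) * (1 - (t:ℂ)) ^ ((v:ℂ) - 1) := by
    intro t ht
    rw [Complex.ofReal_mul, Complex.ofReal_cpow ht.1.le, Complex.ofReal_cpow (by linarith [ht.2])]
    push_cast
    ring_nf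
  have hint : IntegrableOn (fun t : ℝ => t ^ (u - 1) * (1 - t) ^ (v - 1)) (Ioo 0 1) := by
    have h2 := hIoo.re
    refine (integrableOn_congr_fun (fun t ht => ?_) measurableSet_Ioo).mpr h2
    rw [← hcongr t ht]; simp
  refine ⟨hint, ?_⟩
  have hG := Complex.Gamma_mul_Gamma_eq_betaIntegral hu' hv'
  have hbeta : Complex.betaIntegral u v
      = ((∫ t in Ioo (0:ℝ) 1, t ^ (u - 1) * (1 - t) ^ (v - 1) : ℝ) : ℂ) := by
    rw [Complex.betaIntegral, intervalIntegral.integral_of_le zero_le_one,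
      integral_Ioc_eq_integral_Ioo]
    calc ∫ t in Ioo (0:ℝ) 1, (t:ℂ) ^ ((u:ℂ) - 1) * (1 - (t:ℂ)) ^ ((v:ℂ) - 1)
        = ∫ t in Ioo (0:ℝ) 1, ((t ^ (u - 1) * (1 - t) ^ (v - 1) : ℝ) : ℂ) :=
          setIntegral_congr_fun measurableSet_Ioo fun t ht => (hcongr t ht).symm
      _ = _ := integral_ofReal
  rw [hbeta] at hG
  rw [show ((u:ℂ) + (v:ℂ)) = ((u + v : ℝ) : ℂ) by push_cast; ring] at hG
  rw [Complex.Gamma_ofReal, Complex.Gamma_ofReal, Complex.Gamma_ofReal] at hG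
  have : Real.Gamma u * Real.Gamma v
      = Real.Gamma (u + v) * ∫ t in Ioo (0:ℝ) 1, t ^ (u - 1) * (1 - t) ^ (v - 1) := by
    exact_mod_cast hG
  have hGuv : Real.Gamma (u + v) ≠ 0 := (Real.Gamma_pos_of_pos (by linarith)).ne'
  field_simp
  linarith [this]


lemma sqrt_image_Ioi : Real.sqrt '' Ioi 0 = Ioi 0 := by
  ext y
  constructor
  · rintro ⟨u, hu, rfl⟩
    exact Real.sqrt_pos.mpr hu
  · intro hy
    have hy' : (0:ℝ) < y := hy
    exact ⟨y ^ 2, mem_Ioi.mpr (by positivity), Real.sqrt_sq (le_of_lt hy')⟩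

lemma ratio_image_Ioo : (fun t : ℝ => t / (1 - t)) '' Ioo 0 1 = Ioi 0 := by
  ext y
  constructor
  · rintro ⟨t, ht, rfl⟩
    have h1 : 0 < 1 - t := by linarith [ht.2]
    exact div_pos ht.1 h1
  · intro hy
    have hy' : (0:ℝ) < y := hy
    refine ⟨y / (1 + y), ⟨by positivity, by rw [div_lt_one (by positivity)]; linarith⟩, ?_⟩
    have h1 : 1 - y / (1 + y) = 1 / (1 + y) := by field_simp; ring
    show (y / (1 + y)) / (1 - y / (1 + y)) = y
    rw [h1]
    field_simp

lemma sqrt_hasDeriv {u : ℝ} (hu : 0 < u) :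
    HasDerivAt Real.sqrt (1 / (2 * Real.sqrt u)) u := Real.hasDerivAt_sqrt hu.ne'

lemma ratio_hasDeriv {t : ℝ} (ht : t ≠ 1) :
    HasDerivAt (fun t : ℝ => t / (1 - t)) (1 / (1 - t) ^ 2) t := by
  have h := (hasDerivAt_id t).div ((hasDerivAt_id t).const_sub 1) (sub_ne_zero.mpr ht.symm)
  refine h.congr_deriv ?_
  simp only [id]; ring

lemma integral_one_add_sq_Ioi {a : ℝ} (ha : 1/2 < a) :
    IntegrableOn (fun y : ℝ => (1 + y ^ 2) ^ (-a)) (Ioi 0) ∧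
    ∫ y in Ioi (0:ℝ), (1 + y ^ 2) ^ (-a)
      = Real.Gamma (1/2) * Real.Gamma (a - 1/2) / (2 * Real.Gamma a) := by
  have hbeta := realBeta (u := 1/2) (v := a - 1/2) (by norm_num) (by linarith)
  -- step 1 : substitute y = √u
  have hd1 : ∀ u ∈ Ioi (0:ℝ), HasDerivWithinAt Real.sqrt (1 / (2 * Real.sqrt u)) (Ioi 0) u :=
    fun u hu => (sqrt_hasDeriv hu).hasDerivWithinAt
  have hinj1 : InjOn Real.sqrt (Ioi 0) := fun x hx y hy h => by
    have := congrArg (fun z => z ^ 2) h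
    simpa [Real.sq_sqrt (le_of_lt hx), Real.sq_sqrt (le_of_lt hy)] using this
  have step1 := integral_image_eq_integral_abs_deriv_smul measurableSet_Ioi hd1 hinj1
    (fun y => (1 + y ^ 2) ^ (-a))
  have step1' := integrableOn_image_iff_integrableOn_abs_deriv_smul measurableSet_Ioi hd1 hinj1
    (fun y => (1 + y ^ 2) ^ (-a))
  rw [sqrt_image_Ioi] at step1 step1'
  have e1 : ∀ u ∈ Ioi (0:ℝ), |1 / (2 * Real.sqrt u)| • ((1 + (Real.sqrt u) ^ 2) ^ (-a))
      = (1 / (2 * Real.sqrt u)) * (1 + u) ^ (-a) := by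
    intro u hu
    have hu' : (0:ℝ) < u := hu
    rw [Real.sq_sqrt hu'.le, abs_of_pos (by positivity), smul_eq_mul]
  -- step 2 : substitute u = t/(1-t)
  have hd2 : ∀ t ∈ Ioo (0:ℝ) 1, HasDerivWithinAt (fun t : ℝ => t / (1 - t))
      (1 / (1 - t) ^ 2) (Ioo 0 1) t :=
    fun t ht => (ratio_hasDeriv (ne_of_lt ht.2)).hasDerivWithinAt
  have hinj2 : InjOn (fun t : ℝ => t / (1 - t)) (Ioo 0 1) := by
    intro x hx y hy h
    have hx1 : 1 - x ≠ 0 := by have := hx.2; intro hc; linarith [sub_eq_zero.mp hc]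
    have hy1 : 1 - y ≠ 0 := by have := hy.2; intro hc; linarith [sub_eq_zero.mp hc]
    field_simp at h
    linarith
  have step2 := integral_image_eq_integral_abs_deriv_smul measurableSet_Ioo hd2 hinj2
    (fun u => (1 / (2 * Real.sqrt u)) * (1 + u) ^ (-a))
  have step2' := integrableOn_image_iff_integrableOn_abs_deriv_smul measurableSet_Ioo hd2 hinj2
    (fun u => (1 / (2 * Real.sqrt u)) * (1 + u) ^ (-a))
  rw [ratio_image_Ioo] at step2 step2'
  have e2 : ∀ t ∈ Ioo (0:ℝ) 1, |1 / (1 - t) ^ 2| •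
        ((1 / (2 * Real.sqrt (t / (1 - t)))) * (1 + t / (1 - t)) ^ (-a))
      = (1/2) * (t ^ ((1:ℝ)/2 - 1) * (1 - t) ^ ((a - 1/2) - 1)) := by
    intro t ht
    have ht0 : (0:ℝ) < t := ht.1
    have ht1 : 0 < 1 - t := by linarith [ht.2]
    have h1 : 1 + t / (1 - t) = (1 - t)⁻¹ := by field_simp; ring
    have h2 : Real.sqrt (t / (1 - t)) = Real.sqrt t / Real.sqrt (1 - t) :=
      Real.sqrt_div ht0.le _
    have h3 : ((1 - t)⁻¹) ^ (-a) = (1 - t) ^ a := by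
      rw [Real.inv_rpow ht1.le, Real.rpow_neg ht1.le, inv_inv]
    have h4 : t ^ ((1:ℝ)/2 - 1) = (Real.sqrt t)⁻¹ := by
      rw [show ((1:ℝ)/2 - 1) = -(1/2) by norm_num, Real.rpow_neg ht0.le, ← Real.sqrt_eq_rpow]
    have h5 : (1 - t) ^ ((a - 1/2) - 1) = (1 - t) ^ a * ((1 - t) * Real.sqrt (1 - t))⁻¹ := by
      rw [show ((a - 1/2) - 1) = a + (-(3/2)) by ring, Real.rpow_add ht1,
        Real.rpow_neg ht1.le]
      congr 1
      rw [show ((3:ℝ)/2) = 1 + 1/2 by norm_num, Real.rpow_add ht1, Real.rpow_one,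
        ← Real.sqrt_eq_rpow]
    rw [h1, h2, h3, h4, h5, abs_of_pos (by positivity), smul_eq_mul]
    have hq2 : 1 - t = Real.sqrt (1 - t) ^ 2 := (Real.sq_sqrt ht1.le).symm
    have hp0 : Real.sqrt t ≠ 0 := by positivity
    have hq0 : Real.sqrt (1 - t) ≠ 0 := by positivity
    set p := Real.sqrt t with hp
    set q := Real.sqrt (1 - t) with hq
    set A := (1 - t) ^ a with hA
    rw [hq2]
    field_simp
  constructor
  · rw [step1']
    rw [integrableOn_congr_fun e1 measurableSet_Ioi, step2',
      integrableOn_congr_fun e2 measurableSet_Ioo]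
    exact (hbeta.1.const_mul _)
  · rw [step1, setIntegral_congr_fun measurableSet_Ioi e1, step2,
      setIntegral_congr_fun measurableSet_Ioo e2, integral_const_mul, hbeta.2]
    rw [show (1:ℝ)/2 + (a - 1/2) = a by ring]
    ring


lemma one_add_sq_integrable {a : ℝ} (ha : 1/2 < a) :
    Integrable (fun y : ℝ => (1 + y ^ 2) ^ (-a)) := by
  have hIoi := (integral_one_add_sq_Ioi ha).1
  have hIic : IntegrableOn (fun y : ℝ => (1 + y ^ 2) ^ (-a)) (Iic 0) := by
    rw [← Measure.map_neg_eq_self (volume : Measure ℝ)]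
    have m : MeasurableEmbedding fun x : ℝ => -x := (Homeomorph.neg ℝ).measurableEmbedding
    rw [m.integrableOn_map_iff]
    simp only [Function.comp_def, neg_sq, neg_preimage, neg_Iic, neg_zero]
    exact Iff.mpr integrableOn_Ici_iff_integrableOn_Ioi hIoi
  rw [← integrableOn_univ, ← Iic_union_Ioi (a := (0:ℝ))]
  exact hIic.union hIoi

lemma one_add_sq_integral {a : ℝ} (ha : 1/2 < a) :
    ∫ y : ℝ, (1 + y ^ 2) ^ (-a)
      = Real.Gamma (1/2) * Real.Gamma (a - 1/2) / Real.Gamma a := by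
  have heven : ∀ y : ℝ, ((1 + |y| ^ 2) ^ (-a)) = (1 + y ^ 2) ^ (-a) := by
    intro y; rw [sq_abs]
  rw [show (fun y : ℝ => (1 + y ^ 2) ^ (-a)) = fun y : ℝ => (1 + |y| ^ 2) ^ (-a) from
    funext fun y => (heven y).symm]
  rw [integral_comp_abs (f := fun y : ℝ => (1 + y ^ 2) ^ (-a)),
    (integral_one_add_sq_Ioi ha).2]
  field_simp

lemma studentTPDF_continuous (b : ℝ) (hb : 0 < b) : Continuous (studentTPDF b) := by
  apply Continuous.mul continuous_const
  apply Continuous.rpow_const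
  · continuity
  · intro x
    left
    positivity

lemma studentTPDF_nonneg (b : ℝ) (hb : 0 < b) (x : ℝ) : 0 ≤ studentTPDF b x := by
  unfold studentTPDF
  have h1 : 0 < Real.Gamma ((b + 1) / 2) := Real.Gamma_pos_of_pos (by linarith)
  have h2 : 0 < Real.Gamma (b / 2) := Real.Gamma_pos_of_pos (by linarith)
  have h3 : (0:ℝ) < π := Real.pi_pos
  positivity

lemma studentTPDF_eq (b : ℝ) (hb : 0 < b) (x : ℝ) :
    studentTPDF b x = Real.Gamma ((b + 1) / 2) / (Real.sqrt (b * π) * Real.Gamma (b / 2))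
      * (1 + (x / Real.sqrt b) ^ 2) ^ (-((b + 1) / 2)) := by
  unfold studentTPDF
  congr 3
  rw [div_pow, Real.sq_sqrt hb.le]

lemma studentTPDF_integrable (b : ℝ) (hb : 0 < b) : Integrable (studentTPDF b) := by
  have ha : 1/2 < (b + 1) / 2 := by linarith
  have h := ((one_add_sq_integrable ha).comp_div
    (R := Real.sqrt b) (by positivity)).const_mul
    (Real.Gamma ((b + 1) / 2) / (Real.sqrt (b * π) * Real.Gamma (b / 2)))
  refine h.congr (Filter.Eventually.of_forall fun x => ?_)
  exact (studentTPDF_eq b hb x).symm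

lemma studentTPDF_integral (b : ℝ) (hb : 0 < b) : ∫ x : ℝ, studentTPDF b x = 1 := by
  have ha : 1/2 < (b + 1) / 2 := by linarith
  have h1 : ∫ x : ℝ, studentTPDF b x
      = Real.Gamma ((b + 1) / 2) / (Real.sqrt (b * π) * Real.Gamma (b / 2))
        * ∫ x : ℝ, (1 + (x / Real.sqrt b) ^ 2) ^ (-((b + 1) / 2)) := by
    rw [← integral_const_mul]
    exact integral_congr_ae (Filter.Eventually.of_forall fun x => studentTPDF_eq b hb x)
  rw [h1, MeasureTheory.Measure.integral_comp_div (fun y : ℝ => (1 + y ^ 2) ^ (-((b + 1) / 2)))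
    (Real.sqrt b), one_add_sq_integral ha]
  rw [show ((b + 1) / 2 - 1 / 2) = b / 2 by ring, Real.Gamma_one_half_eq,
    abs_of_pos (by positivity : (0:ℝ) < Real.sqrt b), smul_eq_mul,
    Real.sqrt_mul hb.le]
  have h2 : 0 < Real.Gamma ((b + 1) / 2) := Real.Gamma_pos_of_pos (by linarith)
  have h3 : 0 < Real.Gamma (b / 2) := Real.Gamma_pos_of_pos (by linarith)
  have h4 : Real.sqrt π ≠ 0 := by positivity
  have h5 : Real.sqrt b ≠ 0 := by positivity
  field_simp


lemma bls_factor {ν : ℝ} (hν : 0 < ν) (η₁ η₂ σ₁ σ₂ ρ : ℝ)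
    (hσ₁ : 0 < σ₁) (hσ₂ : 0 < σ₂) (hρ : ρ ∈ Ioo (-1 : ℝ) 1)
    {t₁ b : ℝ} (ht₁ : 0 < t₁) (hb : 0 < b) :
    blsDensity (studentTGen ν) η₁ η₂ σ₁ σ₂ ρ (t₁, b)
      = (1 / (t₁ * σ₁)) * studentTPDF ν (logStd η₁ σ₁ t₁) *
        ((Kc ν σ₂ ρ (logStd η₁ σ₁ t₁) / b) *
          studentTPDF (ν + 1) (Kc ν σ₂ ρ (logStd η₁ σ₁ t₁) * Real.log b
            + Dc ν η₂ σ₂ ρ (logStd η₁ σ₁ t₁))) := by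
  have hρ2 : 0 < 1 - ρ ^ 2 := by nlinarith [hρ.1, hρ.2]
  set τ := logStd η₁ σ₁ t₁ with hτ
  set β := logStd η₂ σ₂ b with hβ
  have hs : 0 < Real.sqrt (1 - ρ ^ 2) := Real.sqrt_pos.mpr hρ2
  have hs2 : Real.sqrt (1 - ρ ^ 2) ^ 2 = 1 - ρ ^ 2 := Real.sq_sqrt hρ2.le
  have hντ : 0 < ν + τ ^ 2 := by positivity
  set c := Real.sqrt ((ν + 1) / (ν + τ ^ 2)) with hcdef
  have hc : 0 < c := Real.sqrt_pos.mpr (by positivity)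
  have hc2 : c ^ 2 = (ν + 1) / (ν + τ ^ 2) := Real.sq_sqrt (by positivity)
  set w := (β - ρ * τ) / Real.sqrt (1 - ρ ^ 2) with hwdef
  have hKD : Kc ν σ₂ ρ τ * Real.log b + Dc ν η₂ σ₂ ρ τ = c * w := by
    rw [Kc, Dc, hwdef, hβ, logStd, ← hcdef]
    field_simp
    ring
  have harg : (τ ^ 2 - 2 * ρ * τ * β + β ^ 2) / (1 - ρ ^ 2) = τ ^ 2 + w ^ 2 := by
    have hw2 : w ^ 2 = (β - ρ * τ) ^ 2 / (1 - ρ ^ 2) := by rw [hwdef, div_pow, hs2]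
    rw [hw2]
    field_simp
    ring
  have hbase : 1 + (τ ^ 2 + w ^ 2) / ν = (1 + τ ^ 2 / ν) * (1 + (c * w) ^ 2 / (ν + 1)) := by
    rw [mul_pow, hc2]
    field_simp
    ring
  have hp1 : (0:ℝ) < 1 + τ ^ 2 / ν := by positivity
  have hp2 : (0:ℝ) < 1 + (c * w) ^ 2 / (ν + 1) := by positivity
  have hsplit : studentTGen ν (τ ^ 2 + w ^ 2)
      = ((1 + τ ^ 2 / ν) ^ (-((ν + 1) / 2)) * Real.sqrt (ν / (ν + τ ^ 2)))
        * (1 + (c * w) ^ 2 / (ν + 1)) ^ (-((ν + 2) / 2)) := by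
    rw [studentTGen, hbase, Real.mul_rpow hp1.le hp2.le,
      show -((ν + 2) / 2) = -((ν + 1) / 2) + -(1/2) by ring, Real.rpow_add hp1]
    have hlast : (1 + τ ^ 2 / ν) ^ (-(1/2) : ℝ) = Real.sqrt (ν / (ν + τ ^ 2)) := by
      rw [show 1 + τ ^ 2 / ν = ((ν + τ ^ 2) / ν) by field_simp]
      rw [Real.rpow_neg (by positivity), ← Real.sqrt_eq_rpow, ← Real.sqrt_inv, inv_div]
    rw [hlast]
  rw [blsDensity, if_pos ⟨ht₁, hb⟩]
  simp only
  rw [← hτ, ← hβ, studentTGen_integral hν, harg, hKD, hsplit]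
  rw [studentTPDF, studentTPDF, Kc]
  rw [show (ν + 1 + 1) / 2 = ν / 2 + 1 by ring, Real.Gamma_add_one (by positivity)]
  have hG0 : 0 < Real.Gamma (ν / 2) := Real.Gamma_pos_of_pos (by positivity)
  have hG1 : 0 < Real.Gamma ((ν + 1) / 2) := Real.Gamma_pos_of_pos (by positivity)
  rw [Real.sqrt_mul hν.le π, Real.sqrt_mul (by positivity : (0:ℝ) ≤ ν + 1) π,
    Real.sqrt_div hν.le (ν + τ ^ 2), hcdef,
    Real.sqrt_div (by positivity : (0:ℝ) ≤ ν + 1) (ν + τ ^ 2)]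
  have hsν : 0 < Real.sqrt ν := Real.sqrt_pos.mpr hν
  have hsν1 : 0 < Real.sqrt (ν + 1) := Real.sqrt_pos.mpr (by positivity)
  have hsτ : 0 < Real.sqrt (ν + τ ^ 2) := Real.sqrt_pos.mpr hντ
  have hsπ : 0 < Real.sqrt π := Real.sqrt_pos.mpr Real.pi_pos
  set P1 := (1 + τ ^ 2 / ν) ^ (-((ν + 1) / 2)) with hP1
  set P2 := (1 + (c * w) ^ 2 / (ν + 1)) ^ (-((ν + 2) / 2)) with hP2
  set G0 := Real.Gamma (ν / 2) with hG0d
  set G1 := Real.Gamma ((ν + 1) / 2) with hG1d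
  set sν := Real.sqrt ν with hsνd
  set sν1 := Real.sqrt (ν + 1) with hsν1d
  set sτ := Real.sqrt (ν + τ ^ 2) with hsτd
  set sπ := Real.sqrt π with hsπd
  set s := Real.sqrt (1 - ρ ^ 2) with hsd
  rw [show ν = sν ^ 2 from (Real.sq_sqrt hν.le).symm, show π = sπ ^ 2 from
    (Real.sq_sqrt Real.pi_pos.le).symm]
  field_simp


lemma bls_symm (g : ℝ → ℝ) (η₁ η₂ σ₁ σ₂ ρ : ℝ) (a b : ℝ) :
    blsDensity g η₁ η₂ σ₁ σ₂ ρ (a, b) = blsDensity g η₂ η₁ σ₂ σ₁ ρ (b, a) := by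
  unfold blsDensity
  simp only
  by_cases hab : 0 < a ∧ 0 < b
  · rw [if_pos hab, if_pos ⟨hab.2, hab.1⟩]
    have h1 : (logStd η₁ σ₁ a ^ 2 - 2 * ρ * logStd η₁ σ₁ a * logStd η₂ σ₂ b
        + logStd η₂ σ₂ b ^ 2) / (1 - ρ ^ 2)
      = (logStd η₂ σ₂ b ^ 2 - 2 * ρ * logStd η₂ σ₂ b * logStd η₁ σ₁ a
        + logStd η₁ σ₁ a ^ 2) / (1 - ρ ^ 2) := by ring
    have h2 : a * b * σ₁ * σ₂ * Real.sqrt (1 - ρ ^ 2) * (π * ∫ u in Ioi (0 : ℝ), g u)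
      = b * a * σ₂ * σ₁ * Real.sqrt (1 - ρ ^ 2) * (π * ∫ u in Ioi (0 : ℝ), g u) := by ring
    rw [h1, h2]
  · rw [if_neg hab, if_neg (fun hc => hab ⟨hc.2, hc.1⟩)]

lemma studentTGen_nonneg {ν : ℝ} (hν : 0 < ν) {x : ℝ} (hx : 0 ≤ x) : 0 ≤ studentTGen ν x := by
  unfold studentTGen
  have : (0:ℝ) ≤ 1 + x / ν := by positivity
  exact Real.rpow_nonneg this _

lemma bls_nonneg {ν : ℝ} (hν : 0 < ν) (η₁ η₂ σ₁ σ₂ ρ : ℝ)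
    (hσ₁ : 0 < σ₁) (hσ₂ : 0 < σ₂) (hρ : ρ ∈ Ioo (-1 : ℝ) 1) (p : ℝ × ℝ) :
    0 ≤ blsDensity (studentTGen ν) η₁ η₂ σ₁ σ₂ ρ p := by
  have hρ2 : 0 < 1 - ρ ^ 2 := by nlinarith [hρ.1, hρ.2]
  unfold blsDensity
  split_ifs with h
  · apply div_nonneg
    · apply studentTGen_nonneg hν
      apply div_nonneg _ hρ2.le
      nlinarith [sq_nonneg (logStd η₁ σ₁ p.1 - ρ * logStd η₂ σ₂ p.2),
        sq_nonneg (logStd η₂ σ₂ p.2), sq_nonneg ρ, hρ.1, hρ.2,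
        sq_nonneg (logStd η₂ σ₂ p.2 * ρ)]
    · have hint : 0 ≤ ∫ u in Ioi (0:ℝ), studentTGen ν u :=
        setIntegral_nonneg measurableSet_Ioi fun u hu =>
          studentTGen_nonneg hν (le_of_lt hu)
      have := Real.pi_pos
      have := Real.sqrt_nonneg (1 - ρ ^ 2)
      have h1 := h.1
      have h2 := h.2
      positivity
  · exact le_refl 0

lemma bls_measurable {ν : ℝ} (hν : 0 < ν) (η₁ η₂ σ₁ σ₂ : ℝ) {ρ : ℝ}
    (hρ : ρ ∈ Ioo (-1 : ℝ) 1) :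
    Measurable (blsDensity (studentTGen ν) η₁ η₂ σ₁ σ₂ ρ) := by
  unfold blsDensity
  have hls : ∀ η σ : ℝ, Measurable fun t : ℝ × ℝ => logStd η σ t.1 := by
    intro η σ
    unfold logStd
    exact ((Real.measurable_log.comp measurable_fst).sub measurable_const).div_const σ
  have hls2 : ∀ η σ : ℝ, Measurable fun t : ℝ × ℝ => logStd η σ t.2 := by
    intro η σ
    unfold logStd
    exact ((Real.measurable_log.comp measurable_snd).sub measurable_const).div_const σ
  apply Measurable.ite
  · exact (measurableSet_lt measurable_const measurable_fst).inter
      (measurableSet_lt measurable_const measurable_snd)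
  · apply Measurable.div
    · have harg : Measurable fun t : ℝ × ℝ =>
          (logStd η₁ σ₁ t.1 ^ 2 - 2 * ρ * logStd η₁ σ₁ t.1 * logStd η₂ σ₂ t.2
            + logStd η₂ σ₂ t.2 ^ 2) / (1 - ρ ^ 2) := by
        apply Measurable.div_const
        exact (((hls η₁ σ₁).pow_const 2).sub
          (((hls η₁ σ₁).const_mul (2 * ρ)).mul (hls2 η₂ σ₂))).add ((hls2 η₂ σ₂).pow_const 2)
      have hρ2 : 0 < 1 - ρ ^ 2 := by nlinarith [hρ.1, hρ.2]
      have hargpos : ∀ t : ℝ × ℝ, (0:ℝ) < 1 +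
          ((logStd η₁ σ₁ t.1 ^ 2 - 2 * ρ * logStd η₁ σ₁ t.1 * logStd η₂ σ₂ t.2
            + logStd η₂ σ₂ t.2 ^ 2) / (1 - ρ ^ 2)) / ν := by
        intro t
        have h0 : 0 ≤ (logStd η₁ σ₁ t.1 ^ 2 - 2 * ρ * logStd η₁ σ₁ t.1 * logStd η₂ σ₂ t.2
            + logStd η₂ σ₂ t.2 ^ 2) / (1 - ρ ^ 2) := by
          apply div_nonneg _ hρ2.le
          nlinarith [sq_nonneg (logStd η₁ σ₁ t.1 - ρ * logStd η₂ σ₂ t.2),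
            sq_nonneg (logStd η₂ σ₂ t.2), sq_nonneg (logStd η₂ σ₂ t.2 * ρ)]
        positivity
      have heq : (fun t : ℝ × ℝ => studentTGen ν
          ((logStd η₁ σ₁ t.1 ^ 2 - 2 * ρ * logStd η₁ σ₁ t.1 * logStd η₂ σ₂ t.2
            + logStd η₂ σ₂ t.2 ^ 2) / (1 - ρ ^ 2)))
          = fun t : ℝ × ℝ => Real.exp (Real.log (1 +
            ((logStd η₁ σ₁ t.1 ^ 2 - 2 * ρ * logStd η₁ σ₁ t.1 * logStd η₂ σ₂ t.2
            + logStd η₂ σ₂ t.2 ^ 2) / (1 - ρ ^ 2)) / ν) * (-((ν + 2) / 2))) := by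
        funext t
        rw [studentTGen, Real.rpow_def_of_pos (hargpos t)]
      show Measurable (fun t : ℝ × ℝ => studentTGen ν
          ((logStd η₁ σ₁ t.1 ^ 2 - 2 * ρ * logStd η₁ σ₁ t.1 * logStd η₂ σ₂ t.2
            + logStd η₂ σ₂ t.2 ^ 2) / (1 - ρ ^ 2)))
      rw [heq]
      exact (Real.measurable_exp.comp ((Real.measurable_log.comp
        ((harg.div_const ν).const_add 1)).mul_const _))
    · exact ((((measurable_fst.mul measurable_snd).mul_const σ₁).mul_const σ₂).mul_const
        (Real.sqrt (1 - ρ ^ 2))).mul_const _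
  · exact measurable_const



lemma Kc_pos {ν σ₂ ρ : ℝ} {τ : ℝ} (hσ₂ : 0 < σ₂) (hρ2 : 0 < 1 - ρ ^ 2)
    (hντ : 0 < ν + τ ^ 2) (hν1 : 0 < ν + 1) :
    0 < Kc ν σ₂ ρ τ := by
  unfold Kc
  have h1 : 0 < Real.sqrt ((ν + 1) / (ν + τ ^ 2)) := Real.sqrt_pos.mpr (by positivity)
  have h2 : 0 < Real.sqrt (1 - ρ ^ 2) := Real.sqrt_pos.mpr hρ2
  positivity

lemma bls_setIntegral {ν : ℝ} (hν : 0 < ν) (η₁ η₂ σ₁ σ₂ ρ : ℝ)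
    (hσ₁ : 0 < σ₁) (hσ₂ : 0 < σ₂) (hρ : ρ ∈ Ioo (-1 : ℝ) 1)
    {B : Set ℝ} (hB : MeasurableSet B) (hBsub : B ⊆ Ioi 0)
    {t₁ : ℝ} (ht₁ : 0 < t₁) :
    ∫ t₂ in B, blsDensity (studentTGen ν) η₁ η₂ σ₁ σ₂ ρ (t₁, t₂)
      = (1 / (t₁ * σ₁)) * studentTPDF ν (logStd η₁ σ₁ t₁) *
        ∫ x in (fun b => Kc ν σ₂ ρ (logStd η₁ σ₁ t₁) * Real.log b
            + Dc ν η₂ σ₂ ρ (logStd η₁ σ₁ t₁)) '' B, studentTPDF (ν + 1) x := by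
  have hρ2 : 0 < 1 - ρ ^ 2 := by nlinarith [hρ.1, hρ.2]
  have hντ : 0 < ν + logStd η₁ σ₁ t₁ ^ 2 := by positivity
  have hK := Kc_pos (ν := ν) (σ₂ := σ₂) (ρ := ρ) (τ := logStd η₁ σ₁ t₁) hσ₂ hρ2 hντ (by linarith)
  rw [setIntegral_congr_fun hB
    (fun b hb => bls_factor hν η₁ η₂ σ₁ σ₂ ρ hσ₁ hσ₂ hρ ht₁ (hBsub hb)),
    integral_const_mul, logaffine_image_integral hK _ hB hBsub]

lemma bls_section_integrableOn {ν : ℝ} (hν : 0 < ν) (η₁ η₂ σ₁ σ₂ ρ : ℝ)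
    (hσ₁ : 0 < σ₁) (hσ₂ : 0 < σ₂) (hρ : ρ ∈ Ioo (-1 : ℝ) 1)
    {B : Set ℝ} (hB : MeasurableSet B) (hBsub : B ⊆ Ioi 0)
    {t₁ : ℝ} (ht₁ : 0 < t₁) :
    IntegrableOn (fun t₂ => blsDensity (studentTGen ν) η₁ η₂ σ₁ σ₂ ρ (t₁, t₂)) B := by
  have hρ2 : 0 < 1 - ρ ^ 2 := by nlinarith [hρ.1, hρ.2]
  have hντ : 0 < ν + logStd η₁ σ₁ t₁ ^ 2 := by positivity
  have hK := Kc_pos (ν := ν) (σ₂ := σ₂) (ρ := ρ) (τ := logStd η₁ σ₁ t₁) hσ₂ hρ2 hντ (by linarith)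
  have h1 : IntegrableOn (fun b => (Kc ν σ₂ ρ (logStd η₁ σ₁ t₁) / b) *
      studentTPDF (ν + 1) (Kc ν σ₂ ρ (logStd η₁ σ₁ t₁) * Real.log b
        + Dc ν η₂ σ₂ ρ (logStd η₁ σ₁ t₁))) B :=
    (logaffine_image_integrableOn hK _ hB hBsub).mp
      ((studentTPDF_integrable (ν + 1) (by linarith)).integrableOn)
  exact (integrableOn_congr_fun
    (fun b hb => bls_factor hν η₁ η₂ σ₁ σ₂ ρ hσ₁ hσ₂ hρ ht₁ (hBsub hb)) hB).mpr
    (h1.const_mul _)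

lemma bls_marginal {ν : ℝ} (hν : 0 < ν) (η₁ η₂ σ₁ σ₂ ρ : ℝ)
    (hσ₁ : 0 < σ₁) (hσ₂ : 0 < σ₂) (hρ : ρ ∈ Ioo (-1 : ℝ) 1)
    {y : ℝ} (hy : 0 < y) :
    ∫ s in Ioi (0:ℝ), blsDensity (studentTGen ν) η₁ η₂ σ₁ σ₂ ρ (s, y)
      = (1 / (y * σ₂)) * studentTPDF ν (logStd η₂ σ₂ y) := by
  have h1 : ∫ s in Ioi (0:ℝ), blsDensity (studentTGen ν) η₁ η₂ σ₁ σ₂ ρ (s, y)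
      = ∫ s in Ioi (0:ℝ), blsDensity (studentTGen ν) η₂ η₁ σ₂ σ₁ ρ (y, s) :=
    setIntegral_congr_fun measurableSet_Ioi fun s _ =>
      bls_symm (studentTGen ν) η₁ η₂ σ₁ σ₂ ρ s y
  rw [h1, bls_setIntegral hν η₂ η₁ σ₂ σ₁ ρ hσ₂ hσ₁ hρ measurableSet_Ioi
    (subset_refl _) hy]
  have hρ2 : 0 < 1 - ρ ^ 2 := by nlinarith [hρ.1, hρ.2]
  have hντ : 0 < ν + logStd η₂ σ₂ y ^ 2 := by positivity
  have hK := Kc_pos (ν := ν) (σ₂ := σ₁) (ρ := ρ) (τ := logStd η₂ σ₂ y) hσ₁ hρ2 hντ (by linarith)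
  rw [logaffine_image_Ioi hK, MeasureTheory.setIntegral_univ,
    studentTPDF_integral (ν + 1) (by linarith), mul_one]

lemma bls_marginal_integrableOn {ν : ℝ} (hν : 0 < ν) (η₁ η₂ σ₁ σ₂ ρ : ℝ)
    (hσ₁ : 0 < σ₁) (hσ₂ : 0 < σ₂) (hρ : ρ ∈ Ioo (-1 : ℝ) 1)
    {y : ℝ} (hy : 0 < y) :
    IntegrableOn (fun s => blsDensity (studentTGen ν) η₁ η₂ σ₁ σ₂ ρ (s, y)) (Ioi 0) := by
  have h := bls_section_integrableOn hν η₂ η₁ σ₂ σ₁ ρ hσ₂ hσ₁ hρ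
    measurableSet_Ioi (subset_refl _) hy
  refine (integrableOn_congr_fun (fun s _ => ?_) measurableSet_Ioi).mpr h
  exact bls_symm (studentTGen ν) η₁ η₂ σ₁ σ₂ ρ s y

lemma bls_denom {ν : ℝ} (hν : 0 < ν) (η₁ η₂ σ₁ σ₂ ρ : ℝ)
    (hσ₁ : 0 < σ₁) (hσ₂ : 0 < σ₂) (hρ : ρ ∈ Ioo (-1 : ℝ) 1)
    {B : Set ℝ} (hB : MeasurableSet B) (hBsub : B ⊆ Ioi 0) :
    ∫ s in Ioi (0:ℝ), ∫ t₂ in B, blsDensity (studentTGen ν) η₁ η₂ σ₁ σ₂ ρ (s, t₂)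
      = ∫ x in (fun b => (Real.log b - Real.log η₂) / σ₂) '' B, studentTPDF ν x := by
  have hρ2 : 0 < 1 - ρ ^ 2 := by nlinarith [hρ.1, hρ.2]
  set F := blsDensity (studentTGen ν) η₁ η₂ σ₁ σ₂ ρ with hF
  have hFmeas : Measurable F := bls_measurable hν η₁ η₂ σ₁ σ₂ hρ
  have hFnn : ∀ p, 0 ≤ F p := bls_nonneg hν η₁ η₂ σ₁ σ₂ ρ hσ₁ hσ₂ hρ
  have hsec : ∀ s : ℝ, Measurable fun y => F (s, y) :=
    fun s => hFmeas.comp measurable_prodMk_left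
  have hsec2 : ∀ y : ℝ, Measurable fun s => F (s, y) :=
    fun y => hFmeas.comp (measurable_id.prodMk measurable_const)
  -- inner integrals as lintegrals
  have hinner : ∀ s : ℝ, ∫ y in B, F (s, y)
      = (∫⁻ y in B, ENNReal.ofReal (F (s, y))).toReal := fun s =>
    integral_eq_lintegral_of_nonneg_ae (ae_of_all _ fun y => hFnn (s, y))
      (hsec s).aestronglyMeasurable
  have hG : Measurable fun s => ∫⁻ y in B, ENNReal.ofReal (F (s, y)) :=
    Measurable.lintegral_prod_right (ENNReal.measurable_ofReal.comp hFmeas)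
  have hGfin : ∀ s ∈ Ioi (0:ℝ), (∫⁻ y in B, ENNReal.ofReal (F (s, y))) ≠ ⊤ := by
    intro s hs
    have hle : (∫⁻ y in B, ENNReal.ofReal (F (s, y)))
        ≤ ∫⁻ y in Ioi 0, ENNReal.ofReal (F (s, y)) := lintegral_mono_set hBsub
    have hint : IntegrableOn (fun y => F (s, y)) (Ioi 0) := by
      have h2 := bls_section_integrableOn hν η₁ η₂ σ₁ σ₂ ρ hσ₁ hσ₂ hρ
        measurableSet_Ioi (subset_refl _) (mem_Ioi.mp hs)
      exact h2
    exact (lt_of_le_of_lt hle hint.lintegral_lt_top).ne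
  calc ∫ s in Ioi (0:ℝ), ∫ t₂ in B, F (s, t₂)
      = ∫ s in Ioi (0:ℝ), (∫⁻ y in B, ENNReal.ofReal (F (s, y))).toReal :=
        setIntegral_congr_fun measurableSet_Ioi fun s _ => hinner s
    _ = (∫⁻ s in Ioi (0:ℝ), ENNReal.ofReal
          ((∫⁻ y in B, ENNReal.ofReal (F (s, y))).toReal)).toReal :=
        integral_eq_lintegral_of_nonneg_ae
          (ae_of_all _ fun s => ENNReal.toReal_nonneg)
          hG.ennreal_toReal.aestronglyMeasurable
    _ = (∫⁻ s in Ioi (0:ℝ), ∫⁻ y in B, ENNReal.ofReal (F (s, y))).toReal := by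
        congr 1
        refine setLIntegral_congr_fun measurableSet_Ioi (fun s hs => ?_)
        exact ENNReal.ofReal_toReal (hGfin s hs)
    _ = (∫⁻ y in B, ∫⁻ s in Ioi (0:ℝ), ENNReal.ofReal (F (s, y))).toReal := by
        rw [lintegral_lintegral_swap]
        exact (ENNReal.measurable_ofReal.comp hFmeas).aemeasurable
    _ = (∫⁻ y in B, ENNReal.ofReal ((1 / (y * σ₂)) * studentTPDF ν (logStd η₂ σ₂ y))).toReal := by
        congr 1
        refine setLIntegral_congr_fun hB (fun y hy => ?_)
        have hy0 : 0 < y := hBsub hy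
        rw [← ofReal_integral_eq_lintegral_ofReal
          (bls_marginal_integrableOn hν η₁ η₂ σ₁ σ₂ ρ hσ₁ hσ₂ hρ hy0)
          (ae_of_all _ fun s => hFnn (s, y))]
        rw [bls_marginal hν η₁ η₂ σ₁ σ₂ ρ hσ₁ hσ₂ hρ hy0]
    _ = ∫ y in B, (1 / (y * σ₂)) * studentTPDF ν (logStd η₂ σ₂ y) := by
        refine (integral_eq_lintegral_of_nonneg_ae ?_ ?_).symm
        · refine (ae_restrict_iff' hB).mpr (ae_of_all _ fun y hy => ?_)
          have hy0 : 0 < y := hBsub hy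
          have h1 := studentTPDF_nonneg ν hν (logStd η₂ σ₂ y)
          positivity
        · refine Measurable.aestronglyMeasurable ?_
          refine Measurable.mul ?_ ?_
          · exact (measurable_const.div (measurable_id.mul_const σ₂))
          · exact (studentTPDF_continuous ν hν).measurable.comp
              ((Real.measurable_log.sub measurable_const).div_const σ₂)
    _ = ∫ x in (fun b => (Real.log b - Real.log η₂) / σ₂) '' B, studentTPDF ν x := by
        have himg : (fun b => (Real.log b - Real.log η₂) / σ₂) '' B
            = (fun b => (1/σ₂) * Real.log b + (-Real.log η₂/σ₂)) '' B :=
          image_congr fun b _ => by field_simp; ring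
        rw [himg, logaffine_image_integral (by positivity) _ hB hBsub]
        refine (setIntegral_congr_fun hB fun y hy => ?_).symm
        have hy0 : 0 < y := hBsub hy
        have harg : (1/σ₂) * Real.log y + (-Real.log η₂/σ₂)
            = (Real.log y - Real.log η₂) / σ₂ := by field_simp; ring
        rw [harg]
        have hcoef : (1/σ₂) / y = 1 / (y * σ₂) := by field_simp
        rw [hcoef]
        rfl

/-- Conditional density of `T₁` given `T₂ ∈ B` for the bivariate
log-Student-`t` distribution. -/
theorem bls_student_conditional_density_given_set
    (ν : ℝ) (hν : 0 < ν)
    (η₁ η₂ σ₁ σ₂ ρ : ℝ) (hη₁ : 0 < η₁) (hη₂ : 0 < η₂) (hσ₁ : 0 < σ₁) (hσ₂ : 0 < σ₂)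
    (hρ : ρ ∈ Ioo (-1 : ℝ) 1)
    (B : Set ℝ) (hB : MeasurableSet B) (hBsub : B ⊆ Ioi 0)
    (hpos : 0 < ∫ s in Ioi (0 : ℝ), ∫ t₂ in B,
        blsDensity (studentTGen ν) η₁ η₂ σ₁ σ₂ ρ (s, t₂)) :
    ∀ t₁ : ℝ, 0 < t₁ →
      (∫ t₂ in B, blsDensity (studentTGen ν) η₁ η₂ σ₁ σ₂ ρ (t₁, t₂))
          / (∫ s in Ioi (0 : ℝ), ∫ t₂ in B, blsDensity (studentTGen ν) η₁ η₂ σ₁ σ₂ ρ (s, t₂))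
        = (1 / (t₁ * σ₁)) * studentTPDF ν (logStd η₁ σ₁ t₁)
            * (∫ x in (fun w => Real.sqrt ((ν + 1) / (ν + logStd η₁ σ₁ t₁ ^ 2)) * w) ''
                  ((fun b => ((Real.log b - Real.log η₂) / σ₂ - ρ * logStd η₁ σ₁ t₁)
                    / Real.sqrt (1 - ρ ^ 2)) '' B),
                studentTPDF (ν + 1) x)
            / (∫ x in (fun b => (Real.log b - Real.log η₂) / σ₂) '' B, studentTPDF ν x) := by
  intro t₁ ht₁
  have hρ2 : 0 < 1 - ρ ^ 2 := by nlinarith [hρ.1, hρ.2]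
  have hsetEq : (fun w => Real.sqrt ((ν + 1) / (ν + logStd η₁ σ₁ t₁ ^ 2)) * w) ''
        ((fun b => ((Real.log b - Real.log η₂) / σ₂ - ρ * logStd η₁ σ₁ t₁)
          / Real.sqrt (1 - ρ ^ 2)) '' B)
      = (fun b => Kc ν σ₂ ρ (logStd η₁ σ₁ t₁) * Real.log b
          + Dc ν η₂ σ₂ ρ (logStd η₁ σ₁ t₁)) '' B := by
    rw [Set.image_image]
    refine image_congr fun b _ => ?_
    have hs : 0 < Real.sqrt (1 - ρ ^ 2) := Real.sqrt_pos.mpr hρ2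
    rw [Kc, Dc]
    field_simp
    ring
  rw [hsetEq, bls_setIntegral hν η₁ η₂ σ₁ σ₂ ρ hσ₁ hσ₂ hρ hB hBsub ht₁,
    bls_denom hν η₁ η₂ σ₁ σ₂ ρ hσ₁ hσ₂ hρ hB hBsub, mul_div_assoc]
end

section
/- Let g_c : ℝ → ℝ be a density generator and Z_{g_c} := π ∫₀^∞ g_c(u) du. If (Z₁, Z₂) has joint density h(z₁,z₂) = g_c(z₁² + z₂²)/Z_{g_c}, then for every x ≥ 0, P(Z₁² + Z₂² ≤ x) = (π/Z_{g_c}) ∫₀^x g_c(u) du; that is, Z₁² + Z₂² has probability density u ↦ π g_c(u)/Z_{g_c} on (0,∞). Consequently, if (T₁,T₂) has the BLS(η₁,η₂,σ₁,σ₂,ρ; g_c) density, then the squared Mahalanobis distance (T̃₁² − 2ρ T̃₁ T̃₂ + T̃₂²)/(1−ρ²), where T̃ᵢ = (log Tᵢ − log ηᵢ)/σᵢ, has probability density u ↦ π g_c(u)/Z_{g_c} on (0,∞). -/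
open MeasureTheory Real Set

/-- The squared Mahalanobis distance of `(t₁,t₂)` for `BLS(η₁,η₂,σ₁,σ₂,ρ)`. -/
noncomputable def mahalanobisSq (η₁ η₂ σ₁ σ₂ ρ t₁ t₂ : ℝ) : ℝ :=
  (logStd η₁ σ₁ t₁ ^ 2 - 2 * ρ * logStd η₁ σ₁ t₁ * logStd η₂ σ₂ t₂
    + logStd η₂ σ₂ t₂ ^ 2) / (1 - ρ ^ 2)

lemma polar_lemma (G : ℝ → ℝ) :
    ∫ z : ℝ × ℝ, G (z.1 ^ 2 + z.2 ^ 2) = π * ∫ u in Ioi (0 : ℝ), G u := by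
  rw [← integral_comp_polarCoord_symm]
  have h1 : ∀ p ∈ polarCoord.target,
      p.1 • G ((polarCoord.symm p).1 ^ 2 + (polarCoord.symm p).2 ^ 2)
        = (fun r => r * G (r ^ 2)) p.1 * (fun _ : ℝ => (1 : ℝ)) p.2 := by
    intro p _
    have hps : polarCoord.symm p = (p.1 * Real.cos p.2, p.1 * Real.sin p.2) := rfl
    have : (polarCoord.symm p).1 ^ 2 + (polarCoord.symm p).2 ^ 2 = p.1 ^ 2 := by
      rw [hps]
      have := Real.sin_sq_add_cos_sq p.2
      dsimp
      nlinarith [Real.sin_sq_add_cos_sq p.2]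
    rw [this]
    simp [smul_eq_mul]
  rw [setIntegral_congr_fun polarCoord.open_target.measurableSet h1]
  rw [polarCoord_target, Measure.volume_eq_prod]
  rw [setIntegral_prod_mul (L := ℝ) (fun r => r * G (r ^ 2)) (fun _ => (1 : ℝ)) (Ioi 0)
    (Ioo (-π) π)]
  have h2 : ∫ _ in Ioo (-π) π, (1 : ℝ) = 2 * π := by
    simp [Real.pi_pos.le]
    ring
  have h3 : (∫ r in Ioi (0 : ℝ), r * G (r ^ 2)) = (∫ u in Ioi (0 : ℝ), G u) / 2 := by
    have h4 : (∫ x in Ioi (0 : ℝ), (|(2 : ℝ)| * x ^ ((2 : ℝ) - 1)) • G (x ^ (2 : ℝ)))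
        = ∫ u in Ioi (0 : ℝ), G u := integral_comp_rpow_Ioi G two_ne_zero
    have h5 : ∀ x ∈ Ioi (0 : ℝ), (|(2 : ℝ)| * x ^ ((2 : ℝ) - 1)) • G (x ^ (2 : ℝ))
        = 2 * (x * G (x ^ 2)) := by
      intro x hx
      have hx0 : (0 : ℝ) ≤ x := le_of_lt hx
      rw [show ((2 : ℝ) - 1) = 1 by norm_num, Real.rpow_one,
        show ((2 : ℝ)) = ((2 : ℕ) : ℝ) by norm_num, Real.rpow_natCast]
      simp [smul_eq_mul]
      ring
    rw [setIntegral_congr_fun measurableSet_Ioi h5, MeasureTheory.integral_const_mul] at h4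
    linarith
  rw [h2, h3]
  ring

lemma det_aux (a b d : ℝ) :
    ((a • ContinuousLinearMap.fst ℝ ℝ ℝ + b • ContinuousLinearMap.snd ℝ ℝ ℝ).prod
      (d • ContinuousLinearMap.snd ℝ ℝ ℝ)).det = a * d := by
  rw [ContinuousLinearMap.det]
  rw [← LinearMap.det_toMatrix (Module.Basis.finTwoProd ℝ), Matrix.det_fin_two]
  simp [LinearMap.toMatrix_apply, Module.Basis.finTwoProd_zero, Module.Basis.finTwoProd_one,
    Module.Basis.coe_finTwoProd_repr]

lemma key_cv (g : ℝ → ℝ) (η₁ η₂ σ₁ σ₂ ρ : ℝ) (hη₁ : 0 < η₁) (hη₂ : 0 < η₂)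
    (hσ₁ : 0 < σ₁) (hσ₂ : 0 < σ₂) (hρ : ρ ∈ Ioo (-1 : ℝ) 1) (x : ℝ) :
    ∫ t : ℝ × ℝ, indicator {t : ℝ × ℝ | mahalanobisSq η₁ η₂ σ₁ σ₂ ρ t.1 t.2 ≤ x}
        (blsDensity g η₁ η₂ σ₁ σ₂ ρ) t
      = ∫ z : ℝ × ℝ, indicator {z : ℝ × ℝ | z.1 ^ 2 + z.2 ^ 2 ≤ x}
          (fun z => g (z.1 ^ 2 + z.2 ^ 2) / (π * ∫ u in Ioi (0 : ℝ), g u)) z := by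
  have h1ρ : (0 : ℝ) < 1 - ρ ^ 2 := by nlinarith [hρ.1, hρ.2]
  set sq := Real.sqrt (1 - ρ ^ 2) with hsqdef
  have hsqpos : 0 < sq := Real.sqrt_pos.2 h1ρ
  have hsq2 : sq ^ 2 = 1 - ρ ^ 2 := Real.sq_sqrt h1ρ.le
  set Zg := π * ∫ u in Ioi (0 : ℝ), g u with hZdef
  set Φ : ℝ × ℝ → ℝ × ℝ :=
    fun z => (η₁ * Real.exp ((σ₁ * sq) * z.1 + (σ₁ * ρ) * z.2), η₂ * Real.exp (σ₂ * z.2))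
    with hΦdef
  set L₁ : (ℝ × ℝ) →L[ℝ] ℝ :=
    (σ₁ * sq) • ContinuousLinearMap.fst ℝ ℝ ℝ + (σ₁ * ρ) • ContinuousLinearMap.snd ℝ ℝ ℝ
    with hL₁def
  set L₂ : (ℝ × ℝ) →L[ℝ] ℝ := σ₂ • ContinuousLinearMap.snd ℝ ℝ ℝ with hL₂def
  set A : ℝ × ℝ → (ℝ × ℝ) →L[ℝ] ℝ × ℝ := fun z =>
    ((Φ z).1 • L₁).prod ((Φ z).2 • L₂) with hAdef
  have hL₁app : ∀ z : ℝ × ℝ, L₁ z = (σ₁ * sq) * z.1 + (σ₁ * ρ) * z.2 := by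
    intro z; simp [hL₁def]
  have hL₂app : ∀ z : ℝ × ℝ, L₂ z = σ₂ * z.2 := by intro z; simp [hL₂def]
  have hA : ∀ z, HasFDerivAt Φ (A z) z := by
    intro z
    have hf₁ : HasFDerivAt (fun z : ℝ × ℝ => (σ₁ * sq) * z.1 + (σ₁ * ρ) * z.2) L₁ z := by
      have h := L₁.hasFDerivAt (x := z)
      have he : (fun z : ℝ × ℝ => (σ₁ * sq) * z.1 + (σ₁ * ρ) * z.2) = ⇑L₁ := by
        funext w; rw [hL₁app]
      rw [he]; exact h
    have hf₂ : HasFDerivAt (fun z : ℝ × ℝ => σ₂ * z.2) L₂ z := by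
      have h := L₂.hasFDerivAt (x := z)
      have he : (fun z : ℝ × ℝ => σ₂ * z.2) = ⇑L₂ := by funext w; rw [hL₂app]
      rw [he]; exact h
    have h1 := (hf₁.exp).const_mul η₁
    have h2 := (hf₂.exp).const_mul η₂
    have h3 := HasFDerivAt.prodMk h1 h2
    have he : (η₁ • Real.exp ((σ₁ * sq) * z.1 + (σ₁ * ρ) * z.2) • L₁).prod
        (η₂ • Real.exp (σ₂ * z.2) • L₂) = A z := by
      rw [hAdef, smul_smul, smul_smul]
    rw [he] at h3
    exact h3
  have hdet : ∀ z, (A z).det = ((Φ z).1 * (σ₁ * sq)) * ((Φ z).2 * σ₂) := by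
    intro z
    have : A z = (((Φ z).1 * (σ₁ * sq)) • ContinuousLinearMap.fst ℝ ℝ ℝ
        + ((Φ z).1 * (σ₁ * ρ)) • ContinuousLinearMap.snd ℝ ℝ ℝ).prod
        (((Φ z).2 * σ₂) • ContinuousLinearMap.snd ℝ ℝ ℝ) := by
      rw [hAdef, hL₁def, hL₂def]
      simp only [smul_add, smul_smul]
    rw [this, det_aux]
  have hΦ1pos : ∀ z, 0 < (Φ z).1 := fun z => mul_pos hη₁ (Real.exp_pos _)
  have hΦ2pos : ∀ z, 0 < (Φ z).2 := fun z => mul_pos hη₂ (Real.exp_pos _)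
  have hinj : Function.Injective Φ := by
    intro z w h
    have h2 := congrArg Prod.snd h
    simp only [hΦdef] at h2
    have hz2 : z.2 = w.2 := by
      have := mul_left_cancel₀ hη₂.ne' h2
      have := Real.exp_eq_exp.1 this
      exact mul_left_cancel₀ hσ₂.ne' this
    have h1 := congrArg Prod.fst h
    simp only [hΦdef] at h1
    have hz1 : z.1 = w.1 := by
      have h3 := Real.exp_eq_exp.1 (mul_left_cancel₀ hη₁.ne' h1)
      rw [hz2] at h3
      have h4 := add_right_cancel h3
      exact mul_left_cancel₀ (by positivity) h4
    exact Prod.ext hz1 hz2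
  have hrange : Φ '' univ = Ioi (0 : ℝ) ×ˢ Ioi (0 : ℝ) := by
    rw [image_univ]
    ext t
    simp only [mem_range, mem_prod, mem_Ioi]
    constructor
    · rintro ⟨z, rfl⟩
      exact ⟨hΦ1pos z, hΦ2pos z⟩
    · rintro ⟨h1, h2⟩
      refine ⟨((Real.log (t.1 / η₁) - (σ₁ * ρ) * (Real.log (t.2 / η₂) / σ₂)) / (σ₁ * sq),
        Real.log (t.2 / η₂) / σ₂), ?_⟩
      have hΦapp : Φ ((Real.log (t.1 / η₁) - (σ₁ * ρ) * (Real.log (t.2 / η₂) / σ₂)) / (σ₁ * sq),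
          Real.log (t.2 / η₂) / σ₂)
          = (η₁ * Real.exp (Real.log (t.1 / η₁)), η₂ * Real.exp (Real.log (t.2 / η₂))) := by
        rw [hΦdef]
        simp only
        have hne : σ₁ * sq ≠ 0 := by positivity
        congr 2
        · field_simp
          ring
          rw [mul_assoc, mul_inv_cancel₀ hσ₂.ne', mul_one]
        · field_simp
      rw [hΦapp, Real.exp_log (div_pos h1 hη₁), Real.exp_log (div_pos h2 hη₂),
        mul_div_cancel₀ _ hη₁.ne', mul_div_cancel₀ _ hη₂.ne']
  have hmah : ∀ z : ℝ × ℝ, mahalanobisSq η₁ η₂ σ₁ σ₂ ρ (Φ z).1 (Φ z).2 = z.1 ^ 2 + z.2 ^ 2 := by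
    intro z
    have hl1 : logStd η₁ σ₁ (Φ z).1 = sq * z.1 + ρ * z.2 := by
      rw [hΦdef]
      simp only [logStd]
      rw [Real.log_mul hη₁.ne' (Real.exp_pos _).ne', Real.log_exp]
      field_simp
      ring
    have hl2 : logStd η₂ σ₂ (Φ z).2 = z.2 := by
      rw [hΦdef]
      simp only [logStd]
      rw [Real.log_mul hη₂.ne' (Real.exp_pos _).ne', Real.log_exp]
      field_simp
      ring
    rw [mahalanobisSq, hl1, hl2]
    rw [show (sq * z.1 + ρ * z.2) ^ 2 - 2 * ρ * (sq * z.1 + ρ * z.2) * z.2 + z.2 ^ 2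
        = (1 - ρ ^ 2) * (z.1 ^ 2 + z.2 ^ 2) by linear_combination z.1 ^ 2 * hsq2]
    exact mul_div_cancel_left₀ _ h1ρ.ne'
  have hbls : ∀ z : ℝ × ℝ, blsDensity g η₁ η₂ σ₁ σ₂ ρ (Φ z)
      = g (z.1 ^ 2 + z.2 ^ 2) / ((Φ z).1 * (Φ z).2 * σ₁ * σ₂ * sq * Zg) := by
    intro z
    have hcond : 0 < (Φ z).1 ∧ 0 < (Φ z).2 := ⟨hΦ1pos z, hΦ2pos z⟩
    rw [blsDensity, if_pos hcond]
    rw [show (logStd η₁ σ₁ (Φ z).1 ^ 2 - 2 * ρ * logStd η₁ σ₁ (Φ z).1 * logStd η₂ σ₂ (Φ z).2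
        + logStd η₂ σ₂ (Φ z).2 ^ 2) / (1 - ρ ^ 2)
        = mahalanobisSq η₁ η₂ σ₁ σ₂ ρ (Φ z).1 (Φ z).2 from rfl, hmah]
  have step1 : ∫ t : ℝ × ℝ, indicator {t : ℝ × ℝ | mahalanobisSq η₁ η₂ σ₁ σ₂ ρ t.1 t.2 ≤ x}
      (blsDensity g η₁ η₂ σ₁ σ₂ ρ) t
      = ∫ t in Ioi (0 : ℝ) ×ˢ Ioi (0 : ℝ),
          indicator {t : ℝ × ℝ | mahalanobisSq η₁ η₂ σ₁ σ₂ ρ t.1 t.2 ≤ x}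
            (blsDensity g η₁ η₂ σ₁ σ₂ ρ) t := by
    refine (setIntegral_eq_integral_of_forall_compl_eq_zero fun t ht => ?_).symm
    have hb : blsDensity g η₁ η₂ σ₁ σ₂ ρ t = 0 := by
      rw [blsDensity, if_neg]
      intro hc
      exact ht ⟨hc.1, hc.2⟩
    rw [indicator_apply]
    split <;> simp [hb]
  rw [step1, ← hrange]
  rw [integral_image_eq_integral_abs_det_fderiv_smul volume MeasurableSet.univ
    (fun z _ => (hA z).hasFDerivWithinAt) hinj.injOn]
  rw [Measure.restrict_univ]
  congr 1
  funext z
  rw [hdet]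
  have habs : |((Φ z).1 * (σ₁ * sq)) * ((Φ z).2 * σ₂)|
      = ((Φ z).1 * (σ₁ * sq)) * ((Φ z).2 * σ₂) := by
    have h0 : 0 < ((Φ z).1 * (σ₁ * sq)) * ((Φ z).2 * σ₂) := by
      have := hΦ1pos z; have := hΦ2pos z; positivity
    exact abs_of_pos h0
  rw [habs, indicator_apply, indicator_apply]
  simp only [mem_setOf_eq, hmah]
  split
  · rw [hbls, smul_eq_mul]
    have hK : ((Φ z).1 * (σ₁ * sq)) * ((Φ z).2 * σ₂)
        = (Φ z).1 * (Φ z).2 * σ₁ * σ₂ * sq := by ring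
    rw [hK]
    have hKne : (Φ z).1 * (Φ z).2 * σ₁ * σ₂ * sq ≠ 0 := by
      have := hΦ1pos z; have := hΦ2pos z; positivity
    rw [show (Φ z).1 * (Φ z).2 * σ₁ * σ₂ * sq * Zg
        = ((Φ z).1 * (Φ z).2 * σ₁ * σ₂ * sq) * Zg from rfl]
    rw [mul_div_assoc']
    exact mul_div_mul_left _ _ hKne
  · rw [smul_zero]
/-- If `(Z₁,Z₂)` has joint density `g (z₁²+z₂²)/Z_g`, then `Z₁² + Z₂²`
has CDF `(π/Z_g) ∫₀^x g` and density `u ↦ π g u / Z_g` on `(0,∞)`; consequently the squared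
Mahalanobis distance of a BLS random vector has density `u ↦ π g u / Z_g` on `(0,∞)`. -/
theorem mahalanobis_density
    {Ω : Type*} [MeasurableSpace Ω] (P : Measure Ω) [IsProbabilityMeasure P]
    (g : ℝ → ℝ) (hg_meas : Measurable g) (hg_nonneg : ∀ x, 0 ≤ g x)
    (hg_pos : 0 < ∫ u in Ioi (0 : ℝ), g u) (hg_int : IntegrableOn g (Ioi 0))
    (Z₁ Z₂ : Ω → ℝ) (hZ₁ : Measurable Z₁) (hZ₂ : Measurable Z₂)
    (hjoint : Measure.map (fun ω => (Z₁ ω, Z₂ ω)) P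
      = (volume : Measure (ℝ × ℝ)).withDensity
          (fun z => ENNReal.ofReal
            (g (z.1 ^ 2 + z.2 ^ 2) / (π * ∫ u in Ioi (0 : ℝ), g u))))
    (η₁ η₂ σ₁ σ₂ ρ : ℝ) (hη₁ : 0 < η₁) (hη₂ : 0 < η₂) (hσ₁ : 0 < σ₁) (hσ₂ : 0 < σ₂)
    (hρ : ρ ∈ Ioo (-1 : ℝ) 1)
    (T₁ T₂ : Ω → ℝ) (hT₁ : Measurable T₁) (hT₂ : Measurable T₂)
    (hT : Measure.map (fun ω => (T₁ ω, T₂ ω)) P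
      = (volume : Measure (ℝ × ℝ)).withDensity
          (fun t => ENNReal.ofReal (blsDensity g η₁ η₂ σ₁ σ₂ ρ t))) :
    (∀ x : ℝ, 0 ≤ x →
        P {ω | Z₁ ω ^ 2 + Z₂ ω ^ 2 ≤ x}
          = ENNReal.ofReal ((π / (π * ∫ u in Ioi (0 : ℝ), g u)) *
              ∫ u in (0 : ℝ)..x, g u)) ∧
    (Measure.map (fun ω => Z₁ ω ^ 2 + Z₂ ω ^ 2) P
      = volume.withDensity (fun u => ENNReal.ofReal
          (if 0 < u then π * g u / (π * ∫ u in Ioi (0 : ℝ), g u) else 0))) ∧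
    (Measure.map (fun ω => mahalanobisSq η₁ η₂ σ₁ σ₂ ρ (T₁ ω) (T₂ ω)) P
      = volume.withDensity (fun u => ENNReal.ofReal
          (if 0 < u then π * g u / (π * ∫ u in Ioi (0 : ℝ), g u) else 0))) := by
  have hZpos : (0 : ℝ) < π * ∫ u in Ioi (0 : ℝ), g u := mul_pos Real.pi_pos hg_pos
  have hq_meas : Measurable fun z : ℝ × ℝ => z.1 ^ 2 + z.2 ^ 2 :=
    (measurable_fst.pow_const 2).add (measurable_snd.pow_const 2)
  have hf_meas : Measurable fun z : ℝ × ℝ =>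
      g (z.1 ^ 2 + z.2 ^ 2) / (π * ∫ u in Ioi (0 : ℝ), g u) :=
    (hg_meas.comp hq_meas).div_const _
  have hf_nonneg : ∀ z : ℝ × ℝ,
      0 ≤ g (z.1 ^ 2 + z.2 ^ 2) / (π * ∫ u in Ioi (0 : ℝ), g u) :=
    fun z => div_nonneg (hg_nonneg _) hZpos.le
  have hpair : Measurable fun ω => (Z₁ ω, Z₂ ω) := hZ₁.prodMk hZ₂
  have hmassZ : (∫⁻ z : ℝ × ℝ,
      ENNReal.ofReal (g (z.1 ^ 2 + z.2 ^ 2) / (π * ∫ u in Ioi (0 : ℝ), g u))) = 1 := by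
    have h0 : (Measure.map (fun ω => (Z₁ ω, Z₂ ω)) P) univ = 1 := by
      rw [Measure.map_apply hpair MeasurableSet.univ, preimage_univ, measure_univ]
    rw [hjoint, withDensity_apply _ MeasurableSet.univ, Measure.restrict_univ] at h0
    exact h0
  have hf_int : Integrable fun z : ℝ × ℝ =>
      g (z.1 ^ 2 + z.2 ^ 2) / (π * ∫ u in Ioi (0 : ℝ), g u) := by
    refine ⟨hf_meas.aestronglyMeasurable, ?_⟩
    rw [hasFiniteIntegral_iff_ofReal (Filter.Eventually.of_forall hf_nonneg), hmassZ]
    exact ENNReal.one_lt_top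
  -- the polar computation
  have hpolar : ∀ x : ℝ, (∫ z : ℝ × ℝ, indicator {z : ℝ × ℝ | z.1 ^ 2 + z.2 ^ 2 ≤ x}
        (fun z => g (z.1 ^ 2 + z.2 ^ 2) / (π * ∫ u in Ioi (0 : ℝ), g u)) z)
      = π * ∫ u in Ioc (0 : ℝ) x, g u / (π * ∫ u in Ioi (0 : ℝ), g u) := by
    intro x
    have h1 : ∀ z : ℝ × ℝ, indicator {z : ℝ × ℝ | z.1 ^ 2 + z.2 ^ 2 ≤ x}
        (fun z => g (z.1 ^ 2 + z.2 ^ 2) / (π * ∫ u in Ioi (0 : ℝ), g u)) z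
        = (fun u => if u ≤ x then g u / (π * ∫ u in Ioi (0 : ℝ), g u) else 0)
            (z.1 ^ 2 + z.2 ^ 2) := by
      intro z; rw [indicator_apply]; simp only [mem_setOf_eq]
    have h4 := polar_lemma (fun u => if u ≤ x then g u / (π * ∫ u in Ioi (0 : ℝ), g u) else 0)
    rw [integral_congr_ae (Filter.Eventually.of_forall h1), h4]
    have h2 : ∀ u : ℝ, (if u ≤ x then g u / (π * ∫ u in Ioi (0 : ℝ), g u) else 0)
        = indicator (Iic x) (fun u => g u / (π * ∫ u in Ioi (0 : ℝ), g u)) u := by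
      intro u; rw [indicator_apply]; simp [mem_Iic]
    have h3 : (∫ u in Ioi (0 : ℝ),
          (fun u => if u ≤ x then g u / (π * ∫ u in Ioi (0 : ℝ), g u) else 0) u)
        = ∫ u in Ioc (0 : ℝ) x, g u / (π * ∫ u in Ioi (0 : ℝ), g u) := by
      rw [integral_congr_ae (Filter.Eventually.of_forall fun u => h2 u),
        setIntegral_indicator measurableSet_Iic, Ioi_inter_Iic]
    rw [h3]
  -- the CDF of Z₁² + Z₂²
  have hcdf : ∀ x : ℝ, P {ω | Z₁ ω ^ 2 + Z₂ ω ^ 2 ≤ x}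
      = ENNReal.ofReal (π * ∫ u in Ioc (0 : ℝ) x, g u / (π * ∫ u in Ioi (0 : ℝ), g u)) := by
    intro x
    have hBm : MeasurableSet {z : ℝ × ℝ | z.1 ^ 2 + z.2 ^ 2 ≤ x} :=
      measurableSet_le hq_meas measurable_const
    have hset : {ω | Z₁ ω ^ 2 + Z₂ ω ^ 2 ≤ x}
        = (fun ω => (Z₁ ω, Z₂ ω)) ⁻¹' {z : ℝ × ℝ | z.1 ^ 2 + z.2 ^ 2 ≤ x} := rfl
    rw [hset, ← Measure.map_apply hpair hBm, hjoint, withDensity_apply _ hBm,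
      ← ofReal_integral_eq_lintegral_ofReal hf_int.integrableOn
        (Filter.Eventually.of_forall hf_nonneg),
      ← integral_indicator hBm, hpolar x]
  -- value of the candidate density measure on Iic x
  have hνval : ∀ x : ℝ, (volume.withDensity fun u => ENNReal.ofReal
        (if 0 < u then π * g u / (π * ∫ u in Ioi (0 : ℝ), g u) else 0)) (Iic x)
      = ENNReal.ofReal (π * ∫ u in Ioc (0 : ℝ) x, g u / (π * ∫ u in Ioi (0 : ℝ), g u)) := by
    intro x
    rw [withDensity_apply _ measurableSet_Iic]
    have h1 : (fun u : ℝ => ENNReal.ofReal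
        (if 0 < u then π * g u / (π * ∫ u in Ioi (0 : ℝ), g u) else 0))
        = fun u => indicator (Ioi (0 : ℝ))
            (fun u => ENNReal.ofReal (π * g u / (π * ∫ u in Ioi (0 : ℝ), g u))) u := by
      funext u
      rw [indicator_apply]
      by_cases h : (0 : ℝ) < u <;> simp [h, mem_Ioi]
    rw [h1, lintegral_indicator measurableSet_Ioi,
      Measure.restrict_restrict measurableSet_Ioi, Ioi_inter_Iic]
    have hint : IntegrableOn (fun u => π * g u / (π * ∫ u in Ioi (0 : ℝ), g u)) (Ioc 0 x) :=
      ((hg_int.mono_set Ioc_subset_Ioi_self).const_mul π).div_const _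
    rw [← ofReal_integral_eq_lintegral_ofReal hint
      (Filter.Eventually.of_forall fun u =>
        div_nonneg (mul_nonneg Real.pi_pos.le (hg_nonneg u)) hZpos.le)]
    congr 1
    simp_rw [mul_div_assoc]
    rw [MeasureTheory.integral_const_mul]
  -- total mass of the candidate density measure
  have hνuniv : (volume.withDensity fun u => ENNReal.ofReal
      (if 0 < u then π * g u / (π * ∫ u in Ioi (0 : ℝ), g u) else 0)) univ = 1 := by
    rw [withDensity_apply _ MeasurableSet.univ, Measure.restrict_univ]
    have h1 : (fun u : ℝ => ENNReal.ofReal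
        (if 0 < u then π * g u / (π * ∫ u in Ioi (0 : ℝ), g u) else 0))
        = fun u => indicator (Ioi (0 : ℝ))
            (fun u => ENNReal.ofReal (π * g u / (π * ∫ u in Ioi (0 : ℝ), g u))) u := by
      funext u
      rw [indicator_apply]
      by_cases h : (0 : ℝ) < u <;> simp [h, mem_Ioi]
    rw [h1, lintegral_indicator measurableSet_Ioi]
    have hint : IntegrableOn (fun u => π * g u / (π * ∫ u in Ioi (0 : ℝ), g u)) (Ioi 0) :=
      (hg_int.const_mul π).div_const _
    rw [← ofReal_integral_eq_lintegral_ofReal hint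
      (Filter.Eventually.of_forall fun u =>
        div_nonneg (mul_nonneg Real.pi_pos.le (hg_nonneg u)) hZpos.le)]
    simp_rw [mul_div_assoc]
    rw [MeasureTheory.integral_const_mul, MeasureTheory.integral_div]
    rw [show π * ((∫ u in Ioi (0 : ℝ), g u) / (π * ∫ u in Ioi (0 : ℝ), g u)) = 1 by
      field_simp]
    exact ENNReal.ofReal_one
  have hS : Measurable fun ω => Z₁ ω ^ 2 + Z₂ ω ^ 2 := (hZ₁.pow_const 2).add (hZ₂.pow_const 2)
  refine ⟨?_, ?_, ?_⟩
  · intro x hx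
    rw [hcdf x]
    congr 1
    rw [intervalIntegral.integral_of_le hx, MeasureTheory.integral_div]
    ring
  · haveI : IsProbabilityMeasure (Measure.map (fun ω => Z₁ ω ^ 2 + Z₂ ω ^ 2) P) :=
      Measure.isProbabilityMeasure_map hS.aemeasurable
    haveI : IsProbabilityMeasure ((volume : Measure ℝ).withDensity fun u => ENNReal.ofReal
        (if 0 < u then π * g u / (π * ∫ u in Ioi (0 : ℝ), g u) else 0)) := ⟨hνuniv⟩
    refine Measure.ext_of_Iic _ _ fun x => ?_
    rw [Measure.map_apply hS measurableSet_Iic, hνval x]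
    exact hcdf x
  · -- the Mahalanobis part
    have hl1 : Measurable fun t : ℝ × ℝ => logStd η₁ σ₁ t.1 :=
      ((Real.measurable_log.comp measurable_fst).sub measurable_const).div_const σ₁
    have hl2 : Measurable fun t : ℝ × ℝ => logStd η₂ σ₂ t.2 :=
      ((Real.measurable_log.comp measurable_snd).sub measurable_const).div_const σ₂
    have hMt : Measurable fun t : ℝ × ℝ => mahalanobisSq η₁ η₂ σ₁ σ₂ ρ t.1 t.2 :=
      (((hl1.pow_const 2).sub ((hl1.const_mul (2 * ρ)).mul hl2)).add
        (hl2.pow_const 2)).div_const _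
    have hbls_meas : Measurable (blsDensity g η₁ η₂ σ₁ σ₂ ρ) := by
      unfold blsDensity
      refine Measurable.ite ?_ ?_ measurable_const
      · have : {t : ℝ × ℝ | 0 < t.1 ∧ 0 < t.2}
            = {t : ℝ × ℝ | 0 < t.1} ∩ {t : ℝ × ℝ | 0 < t.2} := rfl
        rw [this]
        exact (measurableSet_lt measurable_const measurable_fst).inter
          (measurableSet_lt measurable_const measurable_snd)
      · refine Measurable.div (hg_meas.comp hMt) ?_
        exact ((((measurable_fst.mul measurable_snd).mul_const σ₁).mul_const σ₂).mul_const
          (Real.sqrt (1 - ρ ^ 2))).mul_const _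
    have hbls_nonneg : ∀ t : ℝ × ℝ, 0 ≤ blsDensity g η₁ η₂ σ₁ σ₂ ρ t := by
      intro t
      rw [blsDensity]
      split_ifs with h
      · refine div_nonneg (hg_nonneg _) ?_
        exact mul_nonneg (mul_nonneg (mul_nonneg (mul_nonneg
          (mul_nonneg h.1.le h.2.le) hσ₁.le) hσ₂.le) (Real.sqrt_nonneg _)) hZpos.le
      · exact le_rfl
    have hpairT : Measurable fun ω => (T₁ ω, T₂ ω) := hT₁.prodMk hT₂
    have hmassT : (∫⁻ t : ℝ × ℝ, ENNReal.ofReal (blsDensity g η₁ η₂ σ₁ σ₂ ρ t)) = 1 := by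
      have h0 : (Measure.map (fun ω => (T₁ ω, T₂ ω)) P) univ = 1 := by
        rw [Measure.map_apply hpairT MeasurableSet.univ, preimage_univ, measure_univ]
      rw [hT, withDensity_apply _ MeasurableSet.univ, Measure.restrict_univ] at h0
      exact h0
    have hbls_int : Integrable (blsDensity g η₁ η₂ σ₁ σ₂ ρ) := by
      refine ⟨hbls_meas.aestronglyMeasurable, ?_⟩
      rw [hasFiniteIntegral_iff_ofReal (Filter.Eventually.of_forall hbls_nonneg), hmassT]
      exact ENNReal.one_lt_top
    have hcdfM : ∀ x : ℝ, P {ω | mahalanobisSq η₁ η₂ σ₁ σ₂ ρ (T₁ ω) (T₂ ω) ≤ x}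
        = ENNReal.ofReal (π * ∫ u in Ioc (0 : ℝ) x, g u / (π * ∫ u in Ioi (0 : ℝ), g u)) := by
      intro x
      have hBm : MeasurableSet {t : ℝ × ℝ | mahalanobisSq η₁ η₂ σ₁ σ₂ ρ t.1 t.2 ≤ x} :=
        measurableSet_le hMt measurable_const
      have hset : {ω | mahalanobisSq η₁ η₂ σ₁ σ₂ ρ (T₁ ω) (T₂ ω) ≤ x}
          = (fun ω => (T₁ ω, T₂ ω)) ⁻¹'
              {t : ℝ × ℝ | mahalanobisSq η₁ η₂ σ₁ σ₂ ρ t.1 t.2 ≤ x} := rfl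
      rw [hset, ← Measure.map_apply hpairT hBm, hT, withDensity_apply _ hBm,
        ← ofReal_integral_eq_lintegral_ofReal hbls_int.integrableOn
          (Filter.Eventually.of_forall hbls_nonneg),
        ← integral_indicator hBm,
        key_cv g η₁ η₂ σ₁ σ₂ ρ hη₁ hη₂ hσ₁ hσ₂ hρ x, hpolar x]
    have hm1 : Measurable fun ω => logStd η₁ σ₁ (T₁ ω) :=
      ((Real.measurable_log.comp hT₁).sub measurable_const).div_const σ₁
    have hm2 : Measurable fun ω => logStd η₂ σ₂ (T₂ ω) :=
      ((Real.measurable_log.comp hT₂).sub measurable_const).div_const σ₂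
    have hMmeas : Measurable fun ω => mahalanobisSq η₁ η₂ σ₁ σ₂ ρ (T₁ ω) (T₂ ω) :=
      (((hm1.pow_const 2).sub ((hm1.const_mul (2 * ρ)).mul hm2)).add
        (hm2.pow_const 2)).div_const _
    haveI : IsProbabilityMeasure (Measure.map
        (fun ω => mahalanobisSq η₁ η₂ σ₁ σ₂ ρ (T₁ ω) (T₂ ω)) P) :=
      Measure.isProbabilityMeasure_map hMmeas.aemeasurable
    haveI : IsProbabilityMeasure ((volume : Measure ℝ).withDensity fun u => ENNReal.ofReal
        (if 0 < u then π * g u / (π * ∫ u in Ioi (0 : ℝ), g u) else 0)) := ⟨hνuniv⟩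
    refine Measure.ext_of_Iic _ _ fun x => ?_
    rw [Measure.map_apply hMmeas measurableSet_Iic, hνval x]
    exact hcdfM x
end

section
/- Let g_c, g_{c₁}, g_{c₂} : ℝ → ℝ be density generators such that g_c(x² + y²) = g_{c₁}(x²) · g_{c₂}(y²) for all (x,y) ∈ ℝ², and suppose ρ = 0. For i = 1,2 define Z_{g_{c_i}} = ∫_ℝ g_{c_i}(z²) dz and the univariate log-symmetric density f_i(t) = g_{c_i}(t̃ᵢ²)/(t σᵢ Z_{g_{c_i}}) for t > 0, where t̃ᵢ = (log t − log ηᵢ)/σᵢ. Then: (i) Z_{g_c} := π ∫₀^∞ g_c(u) du = Z_{g_{c₁}} · Z_{g_{c₂}}; (ii) the BLS(η₁,η₂,σ₁,σ₂,0; g_c) density factorizes as f(t₁,t₂) = f₁(t₁) f₂(t₂) for all t₁, t₂ > 0; and (iii) if the random vector (T₁,T₂) has joint density f, then T₁ and T₂ are independent with marginal densities f₁ and f₂, respectively. -/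
open MeasureTheory ProbabilityTheory Real Set

/-- The univariate log-symmetric density with generator `g`, median `η` and power `σ`. -/
noncomputable def univLogSymmDensity (g : ℝ → ℝ) (η σ t : ℝ) : ℝ :=
  g (logStd η σ t ^ 2) / (t * σ * ∫ z : ℝ, g (z ^ 2))

/-- One-dimensional change of variables for the Lebesgue integral. -/
lemma my_lintegral_image {s : Set ℝ} {f f' : ℝ → ℝ} (hs : MeasurableSet s)
    (hf' : ∀ x ∈ s, HasDerivWithinAt f (f' x) s x) (hf : Set.InjOn f s) (g : ℝ → ENNReal) :
    ∫⁻ x in f '' s, g x = ∫⁻ x in s, ENNReal.ofReal |f' x| * g (f x) := by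
  simpa only [ContinuousLinearMap.det_toSpanSingleton] using
    lintegral_image_eq_lintegral_abs_det_fderiv_mul volume hs
      (fun x hx => (hf' x hx).hasFDerivWithinAt) hf g

/-- Polar coordinates for the Lebesgue integral on `ℝ × ℝ`. -/
lemma my_lintegral_polar (h : ℝ × ℝ → ENNReal) :
    ∫⁻ p : ℝ × ℝ, h p = ∫⁻ p in polarCoord.target, ENNReal.ofReal p.1 * h (polarCoord.symm p) := by
  set B : ℝ × ℝ → ℝ × ℝ →L[ℝ] ℝ × ℝ := fun p =>
    LinearMap.toContinuousLinearMap (Matrix.toLin (Module.Basis.finTwoProd ℝ) (Module.Basis.finTwoProd ℝ)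
      !![cos p.2, -p.1 * sin p.2; sin p.2, p.1 * cos p.2]) with hB
  have A : ∀ p ∈ polarCoord.target, HasFDerivWithinAt polarCoord.symm (B p) polarCoord.target p :=
    fun p _ => (hasFDerivAt_polarCoord_symm p).hasFDerivWithinAt
  have B_det : ∀ p, (B p).det = p.1 := by
    intro p
    conv_rhs => rw [← one_mul p.1, ← cos_sq_add_sin_sq p.2]
    simp only [hB, neg_mul, LinearMap.det_toContinuousLinearMap, LinearMap.det_toLin,
      Matrix.det_fin_two_of, sub_neg_eq_add]
    ring
  have himg : polarCoord.symm '' polarCoord.target = polarCoord.source := by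
    have := polarCoord.symm.toPartialEquiv.image_source_eq_target
    simpa using this
  calc ∫⁻ p : ℝ × ℝ, h p = ∫⁻ p in polarCoord.source, h p := by
        rw [← setLIntegral_univ]
        exact (setLIntegral_congr polarCoord_source_ae_eq_univ).symm
    _ = ∫⁻ p in polarCoord.symm '' polarCoord.target, h p := by rw [himg]
    _ = ∫⁻ p in polarCoord.target, ENNReal.ofReal |(B p).det| * h (polarCoord.symm p) :=
        lintegral_image_eq_lintegral_abs_det_fderiv_mul volume
          polarCoord.open_target.measurableSet A polarCoord.symm.injOn h
    _ = ∫⁻ p in polarCoord.target, ENNReal.ofReal p.1 * h (polarCoord.symm p) := by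
        refine setLIntegral_congr_fun polarCoord.open_target.measurableSet
          (fun p hp => ?_)
        rw [B_det, abs_of_pos]
        rw [polarCoord_target] at hp
        exact hp.1

/-- Substitution `u = r²` for the Lebesgue integral on `(0,∞)`. -/
lemma sq_subst (g : ℝ → ℝ) (hg : Measurable g) :
    ∫⁻ u in Ioi (0:ℝ), ENNReal.ofReal (g u)
      = 2 * ∫⁻ r in Ioi (0:ℝ), ENNReal.ofReal r * ENNReal.ofReal (g (r ^ 2)) := by
  have himg : (fun r : ℝ => r ^ 2) '' Ioi 0 = Ioi 0 := by
    ext x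
    constructor
    · rintro ⟨r, hr, rfl⟩; exact pow_pos (mem_Ioi.1 hr) 2
    · intro hx
      exact ⟨Real.sqrt x, Real.sqrt_pos.2 hx, Real.sq_sqrt hx.le⟩
  have hder : ∀ r ∈ Ioi (0:ℝ), HasDerivWithinAt (fun r : ℝ => r ^ 2) (2 * r) (Ioi 0) r := by
    intro r _
    simpa [mul_comm] using (hasDerivAt_pow 2 r).hasDerivWithinAt
  have hinj : Set.InjOn (fun r : ℝ => r ^ 2) (Ioi 0) := by
    intro a ha b hb h
    simp only at h
    nlinarith [mem_Ioi.1 ha, mem_Ioi.1 hb]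
  have key := my_lintegral_image measurableSet_Ioi hder hinj (fun u => ENNReal.ofReal (g u))
  rw [himg] at key
  rw [key]
  calc ∫⁻ r in Ioi (0:ℝ), ENNReal.ofReal |2 * r| * ENNReal.ofReal (g (r ^ 2))
      = ∫⁻ r in Ioi (0:ℝ), 2 * (ENNReal.ofReal r * ENNReal.ofReal (g (r ^ 2))) := by
        refine setLIntegral_congr_fun measurableSet_Ioi (fun r hr => ?_)
        rw [abs_of_pos (mul_pos two_pos (mem_Ioi.1 hr)),
          ENNReal.ofReal_mul (by norm_num : (0:ℝ) ≤ 2), ← mul_assoc]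
        norm_num
    _ = 2 * ∫⁻ r in Ioi (0:ℝ), ENNReal.ofReal r * ENNReal.ofReal (g (r ^ 2)) :=
        lintegral_const_mul 2 ((measurable_id.ennreal_ofReal).mul
          ((hg.comp (measurable_id.pow_const 2)).ennreal_ofReal))

/-- The radial Lebesgue integral over `ℝ²`. -/
lemma polar_key (g : ℝ → ℝ) (hg : Measurable g) :
    ∫⁻ p : ℝ × ℝ, ENNReal.ofReal (g (p.1 ^ 2 + p.2 ^ 2))
      = ENNReal.ofReal π * ∫⁻ u in Ioi (0:ℝ), ENNReal.ofReal (g u) := by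
  have hF : Measurable fun r : ℝ => ENNReal.ofReal r * ENNReal.ofReal (g (r ^ 2)) :=
    (measurable_id.ennreal_ofReal).mul ((hg.comp (measurable_id.pow_const 2)).ennreal_ofReal)
  rw [my_lintegral_polar, sq_subst g hg]
  calc ∫⁻ p in polarCoord.target,
        ENNReal.ofReal p.1 * ENNReal.ofReal (g ((polarCoord.symm p).1 ^ 2 + (polarCoord.symm p).2 ^ 2))
      = ∫⁻ p in polarCoord.target, ENNReal.ofReal p.1 * ENNReal.ofReal (g (p.1 ^ 2)) := by
        refine setLIntegral_congr_fun polarCoord.open_target.measurableSet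
          (fun p _ => ?_)
        rw [polarCoord_symm_apply]
        congr 2
        rw [mul_pow, mul_pow, ← mul_add, cos_sq_add_sin_sq, mul_one]
    _ = ∫⁻ p in (Ioi (0:ℝ)) ×ˢ Ioo (-π) π,
          (fun r => ENNReal.ofReal r * ENNReal.ofReal (g (r ^ 2))) p.1
            * (fun _ : ℝ => (1:ENNReal)) p.2 := by
        rw [polarCoord_target]
        simp
    _ = (∫⁻ r in Ioi (0:ℝ), ENNReal.ofReal r * ENNReal.ofReal (g (r ^ 2)))
          * ∫⁻ _ in Ioo (-π) π, (1:ENNReal) := by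
        rw [Measure.volume_eq_prod, ← Measure.prod_restrict]
        exact lintegral_prod_mul hF.aemeasurable measurable_const.aemeasurable
    _ = ENNReal.ofReal π * (2 * ∫⁻ r in Ioi (0:ℝ), ENNReal.ofReal r * ENNReal.ofReal (g (r ^ 2))) := by
        rw [lintegral_one, Measure.restrict_apply_univ, Real.volume_Ioo, sub_neg_eq_add,
          ← two_mul, ENNReal.ofReal_mul (by norm_num : (0:ℝ) ≤ 2)]
        rw [ENNReal.ofReal_ofNat]
        ring

/-- The univariate log-symmetric density integrates to one. -/
lemma mass_one (g : ℝ → ℝ) (hg : Measurable g) (h0 : ∀ x, 0 ≤ g x) (η σ : ℝ)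
    (hη : 0 < η) (hσ : 0 < σ)
    (hint : Integrable (fun z : ℝ => g (z ^ 2)))
    (hZ : 0 < ∫ z : ℝ, g (z ^ 2)) :
    ∫⁻ t : ℝ, ENNReal.ofReal (if 0 < t then univLogSymmDensity g η σ t else 0) = 1 := by
  have hind : (fun t : ℝ => ENNReal.ofReal (if 0 < t then univLogSymmDensity g η σ t else 0))
      = (Ioi (0:ℝ)).indicator fun t => ENNReal.ofReal (univLogSymmDensity g η σ t) := by
    ext t
    by_cases h : 0 < t <;> simp [indicator, h]
  rw [hind, lintegral_indicator measurableSet_Ioi]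
  have himg : (fun z : ℝ => η * Real.exp (σ * z)) '' univ = Ioi 0 := by
    rw [image_univ]
    ext x
    simp only [mem_range, mem_Ioi]
    constructor
    · rintro ⟨z, rfl⟩; positivity
    · intro hx
      refine ⟨(Real.log x - Real.log η) / σ, ?_⟩
      rw [mul_div_cancel₀ _ hσ.ne', Real.exp_sub, Real.exp_log hx, Real.exp_log hη]
      field_simp
  have hder : ∀ z ∈ (univ : Set ℝ),
      HasDerivWithinAt (fun z : ℝ => η * Real.exp (σ * z)) (η * (Real.exp (σ * z) * σ)) univ z := by
    intro z _
    have h1 : HasDerivAt (fun z : ℝ => σ * z) σ z := by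
      simpa using (hasDerivAt_id z).const_mul σ
    exact ((h1.exp).const_mul η).hasDerivWithinAt
  have hinj : Set.InjOn (fun z : ℝ => η * Real.exp (σ * z)) univ := by
    intro a _ b _ h
    simp only at h
    have h2 := mul_left_cancel₀ hη.ne' h
    exact mul_left_cancel₀ hσ.ne' (Real.exp_injective h2)
  have key := my_lintegral_image MeasurableSet.univ hder hinj
    (fun t => ENNReal.ofReal (univLogSymmDensity g η σ t))
  rw [himg] at key
  rw [key, Measure.restrict_univ]
  have hpt : ∀ z : ℝ,
      ENNReal.ofReal |η * (Real.exp (σ * z) * σ)|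
        * ENNReal.ofReal (univLogSymmDensity g η σ (η * Real.exp (σ * z)))
      = ENNReal.ofReal (g (z ^ 2)) * ENNReal.ofReal (∫ z : ℝ, g (z ^ 2))⁻¹ := by
    intro z
    have he : (0:ℝ) < Real.exp (σ * z) := Real.exp_pos _
    have habs : |η * (Real.exp (σ * z) * σ)| = η * (Real.exp (σ * z) * σ) :=
      abs_of_pos (by positivity)
    have hlog : logStd η σ (η * Real.exp (σ * z)) = z := by
      simp only [logStd]
      rw [Real.log_mul hη.ne' he.ne', Real.log_exp]
      field_simp
      ring
    rw [habs, ← ENNReal.ofReal_mul (by positivity),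
      ← ENNReal.ofReal_mul (h0 _)]
    congr 1
    rw [univLogSymmDensity, hlog]
    field_simp
  calc (∫⁻ z : ℝ, ENNReal.ofReal |η * (Real.exp (σ * z) * σ)|
        * ENNReal.ofReal (univLogSymmDensity g η σ (η * Real.exp (σ * z))))
      = ∫⁻ z : ℝ, ENNReal.ofReal (g (z ^ 2)) * ENNReal.ofReal (∫ z : ℝ, g (z ^ 2))⁻¹ :=
        lintegral_congr fun z => hpt z
    _ = (∫⁻ z : ℝ, ENNReal.ofReal (g (z ^ 2))) * ENNReal.ofReal (∫ z : ℝ, g (z ^ 2))⁻¹ :=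
        lintegral_mul_const _ ((hg.comp (measurable_id.pow_const 2)).ennreal_ofReal)
    _ = 1 := by
        rw [← ofReal_integral_eq_lintegral_ofReal hint
          (Filter.Eventually.of_forall fun z => h0 _),
          ← ENNReal.ofReal_mul hZ.le, mul_inv_cancel₀ hZ.ne', ENNReal.ofReal_one]

theorem bls_independence_of_factorized_generator
    {Ω : Type*} [MeasurableSpace Ω] (P : Measure Ω) [IsProbabilityMeasure P]
    (g g₁ g₂ : ℝ → ℝ)
    (hg_meas : Measurable g) (hg_nonneg : ∀ x, 0 ≤ g x)
    (hg_pos : 0 < ∫ u in Ioi (0 : ℝ), g u) (hg_int : IntegrableOn g (Ioi 0))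
    (hg₁_meas : Measurable g₁) (hg₁_nonneg : ∀ x, 0 ≤ g₁ x)
    (hg₁_pos : 0 < ∫ u in Ioi (0 : ℝ), g₁ u) (hg₁_int : IntegrableOn g₁ (Ioi 0))
    (hg₂_meas : Measurable g₂) (hg₂_nonneg : ∀ x, 0 ≤ g₂ x)
    (hg₂_pos : 0 < ∫ u in Ioi (0 : ℝ), g₂ u) (hg₂_int : IntegrableOn g₂ (Ioi 0))
    (hfact : ∀ x y : ℝ, g (x ^ 2 + y ^ 2) = g₁ (x ^ 2) * g₂ (y ^ 2))
    (η₁ η₂ σ₁ σ₂ : ℝ) (hη₁ : 0 < η₁) (hη₂ : 0 < η₂) (hσ₁ : 0 < σ₁) (hσ₂ : 0 < σ₂)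
    (T₁ T₂ : Ω → ℝ) (hT₁ : Measurable T₁) (hT₂ : Measurable T₂)
    (hT : Measure.map (fun ω => (T₁ ω, T₂ ω)) P
      = (volume : Measure (ℝ × ℝ)).withDensity
          (fun t => ENNReal.ofReal (blsDensity g η₁ η₂ σ₁ σ₂ 0 t))) :
    ((π * ∫ u in Ioi (0 : ℝ), g u)
        = (∫ z : ℝ, g₁ (z ^ 2)) * ∫ z : ℝ, g₂ (z ^ 2)) ∧
    (∀ t₁ t₂ : ℝ, 0 < t₁ → 0 < t₂ →
        blsDensity g η₁ η₂ σ₁ σ₂ 0 (t₁, t₂)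
          = univLogSymmDensity g₁ η₁ σ₁ t₁ * univLogSymmDensity g₂ η₂ σ₂ t₂) ∧
    (IndepFun T₁ T₂ P ∧
      Measure.map T₁ P = volume.withDensity
        (fun t => ENNReal.ofReal (if 0 < t then univLogSymmDensity g₁ η₁ σ₁ t else 0)) ∧
      Measure.map T₂ P = volume.withDensity
        (fun t => ENNReal.ofReal (if 0 < t then univLogSymmDensity g₂ η₂ σ₂ t else 0))) := by
  -- measurability of the squared-argument compositions
  have hm₁ : Measurable fun z : ℝ => g₁ (z ^ 2) := hg₁_meas.comp (measurable_id.pow_const 2)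
  have hm₂ : Measurable fun z : ℝ => g₂ (z ^ 2) := hg₂_meas.comp (measurable_id.pow_const 2)
  -- the key lintegral identity
  have hG : ENNReal.ofReal (∫ u in Ioi (0:ℝ), g u) = ∫⁻ u in Ioi (0:ℝ), ENNReal.ofReal (g u) :=
    ofReal_integral_eq_lintegral_ofReal hg_int (Filter.Eventually.of_forall fun x => hg_nonneg x)
  have key : ENNReal.ofReal π * ∫⁻ u in Ioi (0:ℝ), ENNReal.ofReal (g u)
      = (∫⁻ z : ℝ, ENNReal.ofReal (g₁ (z ^ 2))) * ∫⁻ z : ℝ, ENNReal.ofReal (g₂ (z ^ 2)) := by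
    rw [← polar_key g hg_meas]
    have hpt : ∀ p : ℝ × ℝ, ENNReal.ofReal (g (p.1 ^ 2 + p.2 ^ 2))
        = ENNReal.ofReal (g₁ (p.1 ^ 2)) * ENNReal.ofReal (g₂ (p.2 ^ 2)) := fun p => by
      rw [hfact, ENNReal.ofReal_mul (hg₁_nonneg _)]
    calc ∫⁻ p : ℝ × ℝ, ENNReal.ofReal (g (p.1 ^ 2 + p.2 ^ 2))
        = ∫⁻ p : ℝ × ℝ, ENNReal.ofReal (g₁ (p.1 ^ 2)) * ENNReal.ofReal (g₂ (p.2 ^ 2)) :=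
          lintegral_congr hpt
      _ = _ := by
          rw [Measure.volume_eq_prod]
          exact lintegral_prod_mul hm₁.ennreal_ofReal.aemeasurable hm₂.ennreal_ofReal.aemeasurable
  -- positivity and finiteness
  have hGlt : (∫⁻ u in Ioi (0:ℝ), ENNReal.ofReal (g u)) < ⊤ := by
    rw [← hG]; exact ENNReal.ofReal_lt_top
  have hGpos : 0 < ∫⁻ u in Ioi (0:ℝ), ENNReal.ofReal (g u) := by
    rw [← hG]; exact ENNReal.ofReal_pos.2 hg_pos
  have hABlt : (∫⁻ z : ℝ, ENNReal.ofReal (g₁ (z ^ 2))) * (∫⁻ z : ℝ, ENNReal.ofReal (g₂ (z ^ 2))) < ⊤ := by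
    rw [← key]
    exact ENNReal.mul_lt_top ENNReal.ofReal_lt_top hGlt
  have hABpos : 0 < (∫⁻ z : ℝ, ENNReal.ofReal (g₁ (z ^ 2))) * ∫⁻ z : ℝ, ENNReal.ofReal (g₂ (z ^ 2)) := by
    rw [← key]
    exact ENNReal.mul_pos (ENNReal.ofReal_pos.2 pi_pos).ne' hGpos.ne'
  have hAne0 : (∫⁻ z : ℝ, ENNReal.ofReal (g₁ (z ^ 2))) ≠ 0 := by
    intro h; rw [h, zero_mul] at hABpos; exact lt_irrefl _ hABpos
  have hBne0 : (∫⁻ z : ℝ, ENNReal.ofReal (g₂ (z ^ 2))) ≠ 0 := by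
    intro h; rw [h, mul_zero] at hABpos; exact lt_irrefl _ hABpos
  have hAlt : (∫⁻ z : ℝ, ENNReal.ofReal (g₁ (z ^ 2))) < ⊤ := by
    by_contra h
    rw [not_lt, top_le_iff] at h
    rw [h, ENNReal.top_mul hBne0] at hABlt
    exact lt_irrefl _ hABlt
  have hBlt : (∫⁻ z : ℝ, ENNReal.ofReal (g₂ (z ^ 2))) < ⊤ := by
    by_contra h
    rw [not_lt, top_le_iff] at h
    rw [h, ENNReal.mul_top hAne0] at hABlt
    exact lt_irrefl _ hABlt
  -- integrability of z ↦ gᵢ(z²)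
  have hint₁ : Integrable (fun z : ℝ => g₁ (z ^ 2)) := by
    refine ⟨hm₁.aestronglyMeasurable, ?_⟩
    rw [hasFiniteIntegral_iff_ofReal (Filter.Eventually.of_forall fun z => hg₁_nonneg _)]
    exact hAlt
  have hint₂ : Integrable (fun z : ℝ => g₂ (z ^ 2)) := by
    refine ⟨hm₂.aestronglyMeasurable, ?_⟩
    rw [hasFiniteIntegral_iff_ofReal (Filter.Eventually.of_forall fun z => hg₂_nonneg _)]
    exact hBlt
  have hZ₁of : ENNReal.ofReal (∫ z : ℝ, g₁ (z ^ 2)) = ∫⁻ z : ℝ, ENNReal.ofReal (g₁ (z ^ 2)) :=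
    ofReal_integral_eq_lintegral_ofReal hint₁ (Filter.Eventually.of_forall fun z => hg₁_nonneg _)
  have hZ₂of : ENNReal.ofReal (∫ z : ℝ, g₂ (z ^ 2)) = ∫⁻ z : ℝ, ENNReal.ofReal (g₂ (z ^ 2)) :=
    ofReal_integral_eq_lintegral_ofReal hint₂ (Filter.Eventually.of_forall fun z => hg₂_nonneg _)
  have hZ₁pos : 0 < ∫ z : ℝ, g₁ (z ^ 2) := by
    rcases lt_or_ge 0 (∫ z : ℝ, g₁ (z ^ 2)) with h | h
    · exact h
    · exact absurd (by rw [ENNReal.ofReal_eq_zero.2 h] at hZ₁of; exact hZ₁of.symm) hAne0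
  have hZ₂pos : 0 < ∫ z : ℝ, g₂ (z ^ 2) := by
    rcases lt_or_ge 0 (∫ z : ℝ, g₂ (z ^ 2)) with h | h
    · exact h
    · exact absurd (by rw [ENNReal.ofReal_eq_zero.2 h] at hZ₂of; exact hZ₂of.symm) hBne0
  -- part (i)
  have hi : (π * ∫ u in Ioi (0 : ℝ), g u) = (∫ z : ℝ, g₁ (z ^ 2)) * ∫ z : ℝ, g₂ (z ^ 2) := by
    have h1 : ENNReal.ofReal (π * ∫ u in Ioi (0:ℝ), g u)
        = ENNReal.ofReal ((∫ z : ℝ, g₁ (z ^ 2)) * ∫ z : ℝ, g₂ (z ^ 2)) := by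
      rw [ENNReal.ofReal_mul pi_pos.le, ENNReal.ofReal_mul hZ₁pos.le, hG, hZ₁of, hZ₂of, key]
    exact (ENNReal.ofReal_eq_ofReal_iff
      (by positivity) (by positivity)).1 h1
  -- part (ii)
  have hii : ∀ t₁ t₂ : ℝ, 0 < t₁ → 0 < t₂ →
      blsDensity g η₁ η₂ σ₁ σ₂ 0 (t₁, t₂)
        = univLogSymmDensity g₁ η₁ σ₁ t₁ * univLogSymmDensity g₂ η₂ σ₂ t₂ := by
    intro t₁ t₂ ht₁ ht₂
    have harg : (logStd η₁ σ₁ t₁ ^ 2 - 2 * 0 * logStd η₁ σ₁ t₁ * logStd η₂ σ₂ t₂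
        + logStd η₂ σ₂ t₂ ^ 2) / (1 - (0:ℝ) ^ 2)
        = logStd η₁ σ₁ t₁ ^ 2 + logStd η₂ σ₂ t₂ ^ 2 := by norm_num
    rw [blsDensity, if_pos ⟨ht₁, ht₂⟩]
    simp only
    rw [harg, hfact, hi, univLogSymmDensity, univLogSymmDensity]
    have h1 : Real.sqrt (1 - (0:ℝ) ^ 2) = 1 := by norm_num
    rw [h1]
    have ht₁' : t₁ ≠ 0 := ht₁.ne'
    have ht₂' : t₂ ≠ 0 := ht₂.ne'
    field_simp
  refine ⟨hi, hii, ?_⟩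
  -- part (iii)
  have hnn₁ : ∀ t : ℝ, 0 < t → 0 ≤ univLogSymmDensity g₁ η₁ σ₁ t := fun t ht =>
    div_nonneg (hg₁_nonneg _) (mul_nonneg (mul_nonneg ht.le hσ₁.le) hZ₁pos.le)
  have hnn₂ : ∀ t : ℝ, 0 < t → 0 ≤ univLogSymmDensity g₂ η₂ σ₂ t := fun t ht =>
    div_nonneg (hg₂_nonneg _) (mul_nonneg (mul_nonneg ht.le hσ₂.le) hZ₂pos.le)
  have hu₁meas : Measurable fun t : ℝ => univLogSymmDensity g₁ η₁ σ₁ t := by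
    apply Measurable.div
    · exact hg₁_meas.comp ((((Real.measurable_log.sub measurable_const).div_const σ₁)).pow_const 2)
    · exact (measurable_id.mul_const σ₁).mul_const _
  have hu₂meas : Measurable fun t : ℝ => univLogSymmDensity g₂ η₂ σ₂ t := by
    apply Measurable.div
    · exact hg₂_meas.comp ((((Real.measurable_log.sub measurable_const).div_const σ₂)).pow_const 2)
    · exact (measurable_id.mul_const σ₂).mul_const _
  have hF₁meas : Measurable fun t : ℝ =>
      ENNReal.ofReal (if 0 < t then univLogSymmDensity g₁ η₁ σ₁ t else 0) :=
    (Measurable.ite measurableSet_Ioi hu₁meas measurable_const).ennreal_ofReal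
  have hF₂meas : Measurable fun t : ℝ =>
      ENNReal.ofReal (if 0 < t then univLogSymmDensity g₂ η₂ σ₂ t else 0) :=
    (Measurable.ite measurableSet_Ioi hu₂meas measurable_const).ennreal_ofReal
  have M₁ := mass_one g₁ hg₁_meas hg₁_nonneg η₁ σ₁ hη₁ hσ₁ hint₁ hZ₁pos
  have M₂ := mass_one g₂ hg₂_meas hg₂_nonneg η₂ σ₂ hη₂ hσ₂ hint₂ hZ₂pos
  haveI P₁ : IsProbabilityMeasure (volume.withDensity
      (fun t => ENNReal.ofReal (if 0 < t then univLogSymmDensity g₁ η₁ σ₁ t else 0))) :=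
    ⟨by rw [withDensity_apply _ MeasurableSet.univ, Measure.restrict_univ]; exact M₁⟩
  haveI P₂ : IsProbabilityMeasure (volume.withDensity
      (fun t => ENNReal.ofReal (if 0 < t then univLogSymmDensity g₂ η₂ σ₂ t else 0))) :=
    ⟨by rw [withDensity_apply _ MeasurableSet.univ, Measure.restrict_univ]; exact M₂⟩
  have hpt : ∀ t : ℝ × ℝ, ENNReal.ofReal (blsDensity g η₁ η₂ σ₁ σ₂ 0 t)
      = ENNReal.ofReal (if 0 < t.1 then univLogSymmDensity g₁ η₁ σ₁ t.1 else 0)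
        * ENNReal.ofReal (if 0 < t.2 then univLogSymmDensity g₂ η₂ σ₂ t.2 else 0) := by
    intro t
    by_cases h : 0 < t.1 ∧ 0 < t.2
    · rw [if_pos h.1, if_pos h.2, ← ENNReal.ofReal_mul (hnn₁ _ h.1)]
      congr 1
      rw [← Prod.mk.eta (p := t)]
      exact hii t.1 t.2 h.1 h.2
    · rw [blsDensity, if_neg h, ENNReal.ofReal_zero]
      by_cases h1 : 0 < t.1
      · have h2 : ¬ 0 < t.2 := fun h2 => h ⟨h1, h2⟩
        rw [if_neg h2, ENNReal.ofReal_zero, mul_zero]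
      · rw [if_neg h1, ENNReal.ofReal_zero, zero_mul]
  have hprod : (volume : Measure (ℝ × ℝ)).withDensity
        (fun t => ENNReal.ofReal (blsDensity g η₁ η₂ σ₁ σ₂ 0 t))
      = (volume.withDensity
          (fun t => ENNReal.ofReal (if 0 < t then univLogSymmDensity g₁ η₁ σ₁ t else 0))).prod
        (volume.withDensity
          (fun t => ENNReal.ofReal (if 0 < t then univLogSymmDensity g₂ η₂ σ₂ t else 0))) := by
    have h1 : (fun t : ℝ × ℝ => ENNReal.ofReal (blsDensity g η₁ η₂ σ₁ σ₂ 0 t))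
        = fun t : ℝ × ℝ =>
            ENNReal.ofReal (if 0 < t.1 then univLogSymmDensity g₁ η₁ σ₁ t.1 else 0)
              * ENNReal.ofReal (if 0 < t.2 then univLogSymmDensity g₂ η₂ σ₂ t.2 else 0) :=
      funext hpt
    rw [h1]
    symm
    refine Measure.prod_eq fun s t hs ht => ?_
    rw [withDensity_apply _ (hs.prod ht), Measure.volume_eq_prod, ← Measure.prod_restrict,
      lintegral_prod_mul hF₁meas.aemeasurable hF₂meas.aemeasurable,
      withDensity_apply _ hs, withDensity_apply _ ht]
  have hmap₁ : Measure.map T₁ P = volume.withDensity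
      (fun t => ENNReal.ofReal (if 0 < t then univLogSymmDensity g₁ η₁ σ₁ t else 0)) := by
    have e1 : Measure.map T₁ P
        = Measure.map Prod.fst (Measure.map (fun ω => (T₁ ω, T₂ ω)) P) :=
      (Measure.map_map measurable_fst (hT₁.prodMk hT₂)).symm
    rw [e1, hT, hprod, Measure.map_fst_prod, measure_univ, one_smul]
  have hmap₂ : Measure.map T₂ P = volume.withDensity
      (fun t => ENNReal.ofReal (if 0 < t then univLogSymmDensity g₂ η₂ σ₂ t else 0)) := by
    have e1 : Measure.map T₂ P
        = Measure.map Prod.snd (Measure.map (fun ω => (T₁ ω, T₂ ω)) P) :=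
      (Measure.map_map measurable_snd (hT₁.prodMk hT₂)).symm
    rw [e1, hT, hprod, Measure.map_snd_prod, measure_univ, one_smul]
  refine ⟨?_, hmap₁, hmap₂⟩
  exact (indepFun_iff_map_prod_eq_prod_map_map hT₁.aemeasurable hT₂.aemeasurable).2
    (by rw [hT, hprod, hmap₁, hmap₂])
end

section
/- Let g_c : ℝ → ℝ be a density generator, ρ ∈ (−1,1), and let f_S(z₁,z₂) = g_c((z₁² − 2ρ z₁ z₂ + z₂²)/(1−ρ²)) / (√(1−ρ²) Z_{g_c}) with Z_{g_c} := π ∫₀^∞ g_c(u) du be the standard bivariate elliptically symmetric density. Suppose ϑ : ℝ → ℝ satisfies ∫_{ℝ²} exp(s₁ z₁ + s₂ z₂) f_S(z₁,z₂) dz₁ dz₂ = ϑ(s₁² + 2ρ s₁ s₂ + s₂²) for all (s₁,s₂) ∈ ℝ². Let η₁, η₂, σ₁, σ₂ > 0 and let (T₁, T₂) have the BLS(η₁,η₂,σ₁,σ₂,ρ; g_c) density. Then for every r ∈ ℝ and for i = 1,2, E(Tᵢ^r) = ηᵢ^r · ϑ(σᵢ² r²). -/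
open MeasureTheory Real Set

/-- The standard bivariate elliptically symmetric density with generator `g` and
correlation `ρ`. -/
noncomputable def besStdDensity (g : ℝ → ℝ) (ρ z₁ z₂ : ℝ) : ℝ :=
  g ((z₁ ^ 2 - 2 * ρ * z₁ * z₂ + z₂ ^ 2) / (1 - ρ ^ 2)) /
    (Real.sqrt (1 - ρ ^ 2) * (π * ∫ u in Ioi (0 : ℝ), g u))

private lemma det_aux_s14 (a b : ℝ) :
    (((1 : ℝ →L[ℝ] ℝ).smulRight a).prodMap ((1 : ℝ →L[ℝ] ℝ).smulRight b)).det = a * b := by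
  rw [ContinuousLinearMap.det, ← LinearMap.det_toMatrix (Module.Basis.finTwoProd ℝ),
    Matrix.det_fin_two]
  simp [LinearMap.toMatrix_apply, Module.Basis.finTwoProd]

private lemma bls_key (g : ℝ → ℝ)
    (ρ : ℝ) (hρ : ρ ∈ Ioo (-1 : ℝ) 1)
    (η₁ η₂ σ₁ σ₂ : ℝ) (hη₁ : 0 < η₁) (hη₂ : 0 < η₂) (hσ₁ : 0 < σ₁) (hσ₂ : 0 < σ₂)
    (r₁ r₂ : ℝ) :
    ∫ t : ℝ × ℝ, t.1 ^ r₁ * t.2 ^ r₂ * blsDensity g η₁ η₂ σ₁ σ₂ ρ t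
      = η₁ ^ r₁ * η₂ ^ r₂ *
        ∫ z : ℝ × ℝ, Real.exp ((σ₁ * r₁) * z.1 + (σ₂ * r₂) * z.2)
          * besStdDensity g ρ z.1 z.2 := by
  have hρ2 : (0 : ℝ) < 1 - ρ ^ 2 := by nlinarith [hρ.1, hρ.2]
  set φ : ℝ × ℝ → ℝ × ℝ :=
    Prod.map (fun x => η₁ * Real.exp (σ₁ * x)) (fun y => η₂ * Real.exp (σ₂ * y)) with hφ
  set h : ℝ × ℝ → ℝ := fun t => t.1 ^ r₁ * t.2 ^ r₂ * blsDensity g η₁ η₂ σ₁ σ₂ ρ t with hh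
  have hzero : ∀ t : ℝ × ℝ, t ∉ Ioi (0:ℝ) ×ˢ Ioi (0:ℝ) → h t = 0 := by
    intro t ht
    have : ¬ (0 < t.1 ∧ 0 < t.2) := by simpa [mem_prod, mem_Ioi] using ht
    simp [hh, blsDensity, this]
  have himage : φ '' univ = Ioi (0:ℝ) ×ˢ Ioi (0:ℝ) := by
    ext t
    simp only [image_univ, mem_range, mem_prod, mem_Ioi, hφ, Prod.map, Prod.ext_iff]
    constructor
    · rintro ⟨z, hz1, hz2⟩
      constructor
      · rw [← hz1]; positivity
      · rw [← hz2]; positivity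
    · rintro ⟨h1, h2⟩
      refine ⟨((Real.log t.1 - Real.log η₁) / σ₁, (Real.log t.2 - Real.log η₂) / σ₂), ?_, ?_⟩
      · rw [mul_div_cancel₀ _ hσ₁.ne', Real.exp_sub, Real.exp_log h1, Real.exp_log hη₁]
        field_simp
      · rw [mul_div_cancel₀ _ hσ₂.ne', Real.exp_sub, Real.exp_log h2, Real.exp_log hη₂]
        field_simp
  have hinj : InjOn φ univ := by
    refine Function.Injective.injOn ?_
    refine Prod.map_injective.2 ⟨?_, ?_⟩
    · intro x y hxy
      have := mul_left_cancel₀ hη₁.ne' hxy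
      have := Real.exp_injective this
      exact mul_left_cancel₀ hσ₁.ne' this
    · intro x y hxy
      have := mul_left_cancel₀ hη₂.ne' hxy
      have := Real.exp_injective this
      exact mul_left_cancel₀ hσ₂.ne' this
  have hderiv : ∀ z : ℝ × ℝ, HasFDerivAt φ
      ((((1 : ℝ →L[ℝ] ℝ).smulRight (η₁ * Real.exp (σ₁ * z.1) * σ₁)).prodMap
        ((1 : ℝ →L[ℝ] ℝ).smulRight (η₂ * Real.exp (σ₂ * z.2) * σ₂)))) z := by
    intro z
    have h1 : HasDerivAt (fun x => η₁ * Real.exp (σ₁ * x)) (η₁ * Real.exp (σ₁ * z.1) * σ₁) z.1 := by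
      have := ((Real.hasDerivAt_exp (σ₁ * z.1)).comp z.1
        ((hasDerivAt_id z.1).const_mul σ₁)).const_mul η₁
      exact this.congr_deriv (by ring)
    have h2 : HasDerivAt (fun y => η₂ * Real.exp (σ₂ * y)) (η₂ * Real.exp (σ₂ * z.2) * σ₂) z.2 := by
      have := ((Real.hasDerivAt_exp (σ₂ * z.2)).comp z.2
        ((hasDerivAt_id z.2).const_mul σ₂)).const_mul η₂
      exact this.congr_deriv (by ring)
    exact HasFDerivAt.prodMap (p := z) h1.hasFDerivAt h2.hasFDerivAt
  calc ∫ t : ℝ × ℝ, h t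
      = ∫ t in Ioi (0:ℝ) ×ˢ Ioi (0:ℝ), h t :=
        (setIntegral_eq_integral_of_forall_compl_eq_zero hzero).symm
    _ = ∫ t in φ '' univ, h t := by rw [himage]
    _ = ∫ z in (univ : Set (ℝ × ℝ)),
          |((((1 : ℝ →L[ℝ] ℝ).smulRight (η₁ * Real.exp (σ₁ * z.1) * σ₁)).prodMap
            ((1 : ℝ →L[ℝ] ℝ).smulRight (η₂ * Real.exp (σ₂ * z.2) * σ₂)))).det| • h (φ z) :=
        integral_image_eq_integral_abs_det_fderiv_smul volume MeasurableSet.univ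
          (fun z _ => (hderiv z).hasFDerivWithinAt) hinj h
    _ = ∫ z : ℝ × ℝ, (η₁ ^ r₁ * η₂ ^ r₂) *
          (Real.exp ((σ₁ * r₁) * z.1 + (σ₂ * r₂) * z.2) * besStdDensity g ρ z.1 z.2) := by
        rw [Measure.restrict_univ]
        refine integral_congr_ae (Filter.Eventually.of_forall fun z => ?_)
        have he1 : (0:ℝ) < Real.exp (σ₁ * z.1) := Real.exp_pos _
        have he2 : (0:ℝ) < Real.exp (σ₂ * z.2) := Real.exp_pos _
        have hφ1 : (φ z).1 = η₁ * Real.exp (σ₁ * z.1) := rfl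
        have hφ2 : (φ z).2 = η₂ * Real.exp (σ₂ * z.2) := rfl
        have hpos : 0 < (φ z).1 ∧ 0 < (φ z).2 := by
          rw [hφ1, hφ2]; exact ⟨by positivity, by positivity⟩
        have hls1 : logStd η₁ σ₁ (φ z).1 = z.1 := by
          rw [hφ1, logStd, Real.log_mul hη₁.ne' he1.ne', Real.log_exp]
          field_simp
          ring
        have hls2 : logStd η₂ σ₂ (φ z).2 = z.2 := by
          rw [hφ2, logStd, Real.log_mul hη₂.ne' he2.ne', Real.log_exp]
          field_simp
          ring
        have hr1 : (φ z).1 ^ r₁ = η₁ ^ r₁ * Real.exp (σ₁ * z.1 * r₁) := by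
          rw [hφ1, Real.mul_rpow hη₁.le he1.le, Real.rpow_def_of_pos he1, Real.log_exp]
        have hr2 : (φ z).2 ^ r₂ = η₂ ^ r₂ * Real.exp (σ₂ * z.2 * r₂) := by
          rw [hφ2, Real.mul_rpow hη₂.le he2.le, Real.rpow_def_of_pos he2, Real.log_exp]
        simp only [det_aux_s14, smul_eq_mul, hh, blsDensity, besStdDensity]
        rw [if_pos hpos, hls1, hls2, hr1, hr2, hφ1, hφ2, Real.exp_add,
          abs_of_pos (show (0:ℝ) < η₁ * Real.exp (σ₁ * z.1) * σ₁ *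
            (η₂ * Real.exp (σ₂ * z.2) * σ₂) by positivity)]
        have hsq : (0:ℝ) < Real.sqrt (1 - ρ ^ 2) := Real.sqrt_pos.2 hρ2
        by_cases hZ : π * ∫ u in Ioi (0:ℝ), g u = 0
        · rw [hZ]; simp
        · field_simp
    _ = η₁ ^ r₁ * η₂ ^ r₂ *
        ∫ z : ℝ × ℝ, Real.exp ((σ₁ * r₁) * z.1 + (σ₂ * r₂) * z.2)
          * besStdDensity g ρ z.1 z.2 := by
        rw [integral_const_mul]

/-- If `ϑ` is the characteristic generator (via the MGF of the standard
BES distribution), then the moments of the BLS marginals are `E(Tᵢ^r) = ηᵢ^r ϑ(σᵢ² r²)`. -/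
theorem bls_moments
    {Ω : Type*} [MeasurableSpace Ω] (P : Measure Ω) [IsProbabilityMeasure P]
    (g : ℝ → ℝ) (hg_meas : Measurable g) (hg_nonneg : ∀ x, 0 ≤ g x)
    (hg_pos : 0 < ∫ u in Ioi (0 : ℝ), g u) (hg_int : IntegrableOn g (Ioi 0))
    (ρ : ℝ) (hρ : ρ ∈ Ioo (-1 : ℝ) 1)
    (ϑ : ℝ → ℝ)
    (hϑ : ∀ s₁ s₂ : ℝ,
        (∫ z : ℝ × ℝ, Real.exp (s₁ * z.1 + s₂ * z.2) * besStdDensity g ρ z.1 z.2)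
          = ϑ (s₁ ^ 2 + 2 * ρ * s₁ * s₂ + s₂ ^ 2))
    (η₁ η₂ σ₁ σ₂ : ℝ) (hη₁ : 0 < η₁) (hη₂ : 0 < η₂) (hσ₁ : 0 < σ₁) (hσ₂ : 0 < σ₂)
    (T₁ T₂ : Ω → ℝ) (hT₁ : Measurable T₁) (hT₂ : Measurable T₂)
    (hT : Measure.map (fun ω => (T₁ ω, T₂ ω)) P
      = (volume : Measure (ℝ × ℝ)).withDensity
          (fun t => ENNReal.ofReal (blsDensity g η₁ η₂ σ₁ σ₂ ρ t))) :
    ∀ r : ℝ,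
      (∫ ω, T₁ ω ^ r ∂P) = η₁ ^ r * ϑ (σ₁ ^ 2 * r ^ 2) ∧
      (∫ ω, T₂ ω ^ r ∂P) = η₂ ^ r * ϑ (σ₂ ^ 2 * r ^ 2) := by
  intro r
  have hm1 : Measurable fun t : ℝ × ℝ => logStd η₁ σ₁ t.1 :=
    ((Real.measurable_log.comp measurable_fst).sub measurable_const).div_const σ₁
  have hm2 : Measurable fun t : ℝ × ℝ => logStd η₂ σ₂ t.2 :=
    ((Real.measurable_log.comp measurable_snd).sub measurable_const).div_const σ₂
  have hbls_meas : Measurable (blsDensity g η₁ η₂ σ₁ σ₂ ρ) := by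
    unfold blsDensity
    refine Measurable.ite ?_ ?_ measurable_const
    · exact (measurableSet_lt measurable_const measurable_fst).inter
        (measurableSet_lt measurable_const measurable_snd)
    · refine Measurable.div ?_ ?_
      · exact hg_meas.comp ((((hm1.pow_const 2).sub
          (((hm1.const_mul (2 * ρ)).mul hm2))).add (hm2.pow_const 2)).div_const _)
      · exact ((((measurable_fst.mul measurable_snd).mul_const σ₁).mul_const σ₂).mul_const
          (Real.sqrt (1 - ρ ^ 2))).mul_const _
  have hbls_nonneg : ∀ t, 0 ≤ blsDensity g η₁ η₂ σ₁ σ₂ ρ t := by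
    intro t
    unfold blsDensity
    split
    · rename_i ht
      obtain ⟨h1, h2⟩ := ht
      have hsq : (0:ℝ) ≤ Real.sqrt (1 - ρ ^ 2) := Real.sqrt_nonneg _
      have hZ : (0:ℝ) ≤ π * ∫ u in Ioi (0:ℝ), g u := by positivity
      apply div_nonneg (hg_nonneg _)
      positivity
    · exact le_refl _
  have hmap : ∀ f : ℝ × ℝ → ℝ, Measurable f →
      ∫ ω, f (T₁ ω, T₂ ω) ∂P
        = ∫ t : ℝ × ℝ, f t * blsDensity g η₁ η₂ σ₁ σ₂ ρ t := by
    intro f hf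
    calc ∫ ω, f (T₁ ω, T₂ ω) ∂P
        = ∫ y, f y ∂(Measure.map (fun ω => (T₁ ω, T₂ ω)) P) :=
          (integral_map (hT₁.prodMk hT₂).aemeasurable hf.aestronglyMeasurable).symm
      _ = ∫ y, f y ∂((volume : Measure (ℝ × ℝ)).withDensity
            (fun t => ENNReal.ofReal (blsDensity g η₁ η₂ σ₁ σ₂ ρ t))) := by rw [hT]
      _ = ∫ y, (blsDensity g η₁ η₂ σ₁ σ₂ ρ y).toNNReal • f y := by
          simp only [ENNReal.ofReal]
          exact integral_withDensity_eq_integral_smul hbls_meas.real_toNNReal f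
      _ = ∫ t : ℝ × ℝ, f t * blsDensity g η₁ η₂ σ₁ σ₂ ρ t := by
          refine integral_congr_ae (Filter.Eventually.of_forall fun y => ?_)
          simp only [NNReal.smul_def, smul_eq_mul, Real.coe_toNNReal _ (hbls_nonneg y), mul_comm]
  constructor
  · have hf : Measurable fun p : ℝ × ℝ => p.1 ^ r * p.2 ^ (0 : ℝ) := by fun_prop
    calc ∫ ω, T₁ ω ^ r ∂P
        = ∫ ω, (fun p : ℝ × ℝ => p.1 ^ r * p.2 ^ (0 : ℝ)) (T₁ ω, T₂ ω) ∂P := by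
          simp [Real.rpow_zero]
      _ = ∫ t : ℝ × ℝ, t.1 ^ r * t.2 ^ (0 : ℝ) * blsDensity g η₁ η₂ σ₁ σ₂ ρ t := hmap _ hf
      _ = η₁ ^ r * η₂ ^ (0 : ℝ) *
            ∫ z : ℝ × ℝ, Real.exp ((σ₁ * r) * z.1 + (σ₂ * 0) * z.2)
              * besStdDensity g ρ z.1 z.2 :=
          bls_key g ρ hρ η₁ η₂ σ₁ σ₂ hη₁ hη₂ hσ₁ hσ₂ r 0
      _ = η₁ ^ r * ϑ (σ₁ ^ 2 * r ^ 2) := by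
          rw [hϑ (σ₁ * r) (σ₂ * 0), Real.rpow_zero, mul_one,
            show (σ₁ * r) ^ 2 + 2 * ρ * (σ₁ * r) * (σ₂ * 0) + (σ₂ * 0) ^ 2
              = σ₁ ^ 2 * r ^ 2 from by ring]
  · have hf : Measurable fun p : ℝ × ℝ => p.1 ^ (0 : ℝ) * p.2 ^ r := by fun_prop
    calc ∫ ω, T₂ ω ^ r ∂P
        = ∫ ω, (fun p : ℝ × ℝ => p.1 ^ (0 : ℝ) * p.2 ^ r) (T₁ ω, T₂ ω) ∂P := by
          simp [Real.rpow_zero]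
      _ = ∫ t : ℝ × ℝ, t.1 ^ (0 : ℝ) * t.2 ^ r * blsDensity g η₁ η₂ σ₁ σ₂ ρ t := hmap _ hf
      _ = η₁ ^ (0 : ℝ) * η₂ ^ r *
            ∫ z : ℝ × ℝ, Real.exp ((σ₁ * 0) * z.1 + (σ₂ * r) * z.2)
              * besStdDensity g ρ z.1 z.2 :=
          bls_key g ρ hρ η₁ η₂ σ₁ σ₂ hη₁ hη₂ hσ₁ hσ₂ 0 r
      _ = η₂ ^ r * ϑ (σ₂ ^ 2 * r ^ 2) := by
          rw [hϑ (σ₁ * 0) (σ₂ * r), Real.rpow_zero, one_mul,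
            show (σ₁ * 0) ^ 2 + 2 * ρ * (σ₁ * 0) * (σ₂ * r) + (σ₂ * r) ^ 2
              = σ₂ ^ 2 * r ^ 2 from by ring]
end
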